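/- arXiv:1903.03751 — 7 statements merged into one kernel-verified Lean document; each statement's English description precedes it below -/
import Mathlib

section
/- Let ψ be a branching mechanism with parameters α, ρ, π, and suppose Assumption 2 holds with parameters (η, β, δ). Then (ψ(z) + αz)/z^{1+β} → η as z → 0 with z ∈ (0,∞); equivalently, ψ(z) = −αz + η z^{1+β} (1 + o(1)) as z → 0⁺. -/
open MeasureTheory Set

/-- The measure `μ_{η,β}(dy) = η dy/(Γ(−1−β) y^{2+β})` on `(0,∞)`. -/
noncomputable def stableLevyMeasure (η β : ℝ) : Measure ℝ :=
  (volume.restrict (Set.Ioi (0 : ℝ))).withDensity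
    (fun y => ENNReal.ofReal (η / (Real.Gamma (-1 - β) * y ^ (2 + β))))

/-- The total variation measure `|μ − ν|` of the difference of two (finite)
measures, given as the sum of the two Jordan parts `(μ − ν) + (ν − μ)`. -/
noncomputable def tvDiff (μ ν : Measure ℝ) : Measure ℝ := (μ - ν) + (ν - μ)

/-- Assumption 2 with parameters `(η, β, δ)`:
`∫_{(1,∞)} y^{1+β+δ} |π − μ_{η,β}|(dy) < ∞`. -/
noncomputable def Assumption2 (π : Measure ℝ) (η β δ : ℝ) : Prop :=
  ∫⁻ y in Set.Ioi (1 : ℝ), ENNReal.ofReal (y ^ (1 + β + δ))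
    ∂(tvDiff (π.restrict (Set.Ioi 1)) ((stableLevyMeasure η β).restrict (Set.Ioi 1))) < ⊤

lemma fnn (x : ℝ) : 0 ≤ Real.exp (-x) - 1 + x := by
  have := Real.add_one_le_exp (-x); linarith

lemma fle_lin {x : ℝ} (hx : 0 ≤ x) : Real.exp (-x) - 1 + x ≤ x := by
  have : Real.exp (-x) ≤ 1 := Real.exp_le_one_iff.mpr (by linarith)
  linarith

lemma fle_sq {x : ℝ} (hx : 0 ≤ x) : Real.exp (-x) - 1 + x ≤ x ^ 2 := by
  have key : ∀ y ∈ Set.Ici (0:ℝ), 0 ≤ y ^ 2 - (Real.exp (-y) - 1 + y) := by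
    have hmono : MonotoneOn (fun y : ℝ => y ^ 2 - (Real.exp (-y) - 1 + y)) (Set.Ici 0) := by
      apply monotoneOn_of_deriv_nonneg (convex_Ici 0)
      · fun_prop
      · fun_prop
      · intro y hy
        rw [interior_Ici] at hy
        have : HasDerivAt (fun y : ℝ => y ^ 2 - (Real.exp (-y) - 1 + y))
            (2 * y - (-Real.exp (-y) + 1)) y := by
          have h1 : HasDerivAt (fun y : ℝ => Real.exp (-y)) (-Real.exp (-y)) y := by
            simpa [Function.comp_def] using ((Real.hasDerivAt_exp (-y)).comp y (hasDerivAt_neg y))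
          have h2 : HasDerivAt (fun y : ℝ => y ^ 2) (2 * y) y := by
            simpa using hasDerivAt_pow 2 y
          exact h2.sub ((h1.sub_const 1).add (hasDerivAt_id y))
        rw [this.deriv]
        have := Real.add_one_le_exp (-y)
        have hy' : 0 < y := hy
        nlinarith
    intro y hy
    have := hmono (Set.mem_Ici.mpr (le_refl (0:ℝ))) hy hy
    simpa using this
  have := key x hx
  linarith

-- Gamma relation

lemma gamma_rel {β : ℝ} (hβ : β ∈ Set.Ioo (0:ℝ) 1) :
    Real.Gamma (1 - β) = β * (1 + β) * Real.Gamma (-1 - β) := by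
  obtain ⟨hβ0, hβ1⟩ := hβ
  have h1 : Real.Gamma (-1 - β + 1) = (-1 - β) * Real.Gamma (-1 - β) :=
    Real.Gamma_add_one (by linarith)
  have h2 : Real.Gamma (-β + 1) = (-β) * Real.Gamma (-β) :=
    Real.Gamma_add_one (by linarith)
  have e1 : -1 - β + 1 = -β := by ring
  have e2 : -β + 1 = 1 - β := by ring
  rw [e1] at h1; rw [e2] at h2
  rw [h2, h1]; ring

lemma gamma_neg_pos {β : ℝ} (hβ : β ∈ Set.Ioo (0:ℝ) 1) : 0 < Real.Gamma (-1 - β) := by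
  obtain ⟨hβ0, hβ1⟩ := hβ
  have h := gamma_rel ⟨hβ0, hβ1⟩
  have hpos : 0 < Real.Gamma (1 - β) := Real.Gamma_pos_of_pos (by linarith)
  have hb : 0 < β * (1 + β) := by nlinarith
  have : Real.Gamma (-1 - β) = Real.Gamma (1 - β) / (β * (1 + β)) := by
    field_simp [h]
    rw [h]; ring
  rw [this]
  positivity

lemma inner_s {y z : ℝ} (hy : 0 < y) (hz : 0 ≤ z) :
    ∫ s in (0:ℝ)..z, (z - s) * Real.exp (-(s*y))
      = (Real.exp (-(z*y)) - 1 + z*y) / y^2 := by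
  have hy' : y ≠ 0 := ne_of_gt hy
  have hd : ∀ s ∈ Set.uIcc (0:ℝ) z, HasDerivAt
      (fun s => Real.exp (-(s*y)) * ((s - z)/y + 1/y^2)) ((z - s) * Real.exp (-(s*y))) s := by
    intro s _
    have h1 : HasDerivAt (fun s : ℝ => Real.exp (-(s*y))) (-y * Real.exp (-(s*y))) s := by
      have := (Real.hasDerivAt_exp (-(s*y))).comp s
        (((hasDerivAt_id s).mul_const y).neg)
      simpa [mul_comm, Function.comp_def] using this
    have h2 : HasDerivAt (fun s : ℝ => (s - z)/y + 1/y^2) (1/y) s := by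
      have h := (((hasDerivAt_id s).sub_const z).div_const y).add_const (1/y^2)
      exact h
    have := h1.mul h2
    refine this.congr_deriv ?_
    field_simp
    ring
  have hint : IntervalIntegrable (fun s => (z - s) * Real.exp (-(s*y))) volume 0 z := by
    apply Continuous.intervalIntegrable; fun_prop
  rw [intervalIntegral.integral_eq_sub_of_hasDerivAt hd hint]
  field_simp
  simp only [mul_zero, neg_zero, Real.exp_zero]
  ring

lemma gamma_lint {s β : ℝ} (hs : 0 < s) (hβ : β ∈ Set.Ioo (0:ℝ) 1) :
    ∫⁻ y in Set.Ioi (0:ℝ), ENNReal.ofReal (y ^ (-β) * Real.exp (-(s*y)))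
      = ENNReal.ofReal ((1/s) ^ (1-β) * Real.Gamma (1-β)) := by
  obtain ⟨hβ0, hβ1⟩ := hβ
  have hint : IntegrableOn (fun y : ℝ => y ^ (-β) * Real.exp (-(s*y))) (Set.Ioi 0) := by
    have := integrableOn_rpow_mul_exp_neg_mul_rpow (p := 1) (s := -β) (b := s)
      (by linarith) zero_lt_one hs
    refine this.congr_fun (fun x hx => ?_) measurableSet_Ioi
    simp only [Real.rpow_one]; ring_nf
  rw [← MeasureTheory.ofReal_integral_eq_lintegral_ofReal hint]
  · congr 1
    have := Real.integral_rpow_mul_exp_neg_mul_Ioi (a := 1 - β) (r := s) (by linarith) hs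
    rw [show (1:ℝ) - β - 1 = -β by ring] at this
    exact this
  · filter_upwards [self_mem_ae_restrict measurableSet_Ioi] with x hx
    have : (0:ℝ) < x := hx
    positivity

lemma stable_id {η β : ℝ} (hη : 0 < η) (hβ : β ∈ Set.Ioo (0:ℝ) 1) {z : ℝ} (hz : 0 < z) :
    ∫⁻ y in Set.Ioi (0:ℝ), ENNReal.ofReal (Real.exp (-(z*y)) - 1 + z*y)
        ∂(stableLevyMeasure η β)
      = ENNReal.ofReal (η * z ^ (1+β)) := by
  obtain ⟨hβ0, hβ1⟩ := hβ
  have hΓ : 0 < Real.Gamma (-1 - β) := gamma_neg_pos ⟨hβ0, hβ1⟩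
  set c : ℝ := η / Real.Gamma (-1 - β) with hc_def
  have hc : 0 < c := div_pos hη hΓ
  have hgm : Measurable (fun y : ℝ =>
      ENNReal.ofReal (η / (Real.Gamma (-1 - β) * y ^ (2 + β)))) := by
    apply Measurable.ennreal_ofReal
    fun_prop
  have hFm : Measurable (fun y : ℝ => ENNReal.ofReal (Real.exp (-(z*y)) - 1 + z*y)) := by
    apply Measurable.ennreal_ofReal; fun_prop
  rw [stableLevyMeasure, MeasureTheory.restrict_withDensity measurableSet_Ioi,
    Measure.restrict_restrict measurableSet_Ioi, Set.inter_self,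
    lintegral_withDensity_eq_lintegral_mul _ hgm hFm]
  -- now a volume lintegral over Ioi 0
  have key : ∀ y ∈ Set.Ioi (0:ℝ),
      ((fun y : ℝ => ENNReal.ofReal (η / (Real.Gamma (-1 - β) * y ^ (2 + β)))) *
        (fun y : ℝ => ENNReal.ofReal (Real.exp (-(z*y)) - 1 + z*y))) y
      = ∫⁻ s in Set.Ioc 0 z,
          ENNReal.ofReal (c * y ^ (-β)) * ENNReal.ofReal ((z - s) * Real.exp (-(s*y))) := by
    intro y hy
    have hy0 : (0:ℝ) < y := hy
    have hyb : (0:ℝ) < y ^ β := Real.rpow_pos_of_pos hy0 β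
    -- RHS: pull out constant, turn into a Bochner integral
    have hint : IntegrableOn (fun s : ℝ => (z - s) * Real.exp (-(s*y))) (Set.Ioc 0 z) := by
      apply Continuous.integrableOn_Ioc; fun_prop
    have hnn : 0 ≤ᶠ[ae (volume.restrict (Set.Ioc 0 z))]
        (fun s : ℝ => (z - s) * Real.exp (-(s*y))) := by
      filter_upwards [self_mem_ae_restrict measurableSet_Ioc] with s hs
      have : s ≤ z := hs.2
      have := Real.exp_pos (-(s*y))
      simp only [Pi.zero_apply]
      nlinarith
    rw [lintegral_const_mul' _ _ ENNReal.ofReal_ne_top,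
      ← MeasureTheory.ofReal_integral_eq_lintegral_ofReal hint hnn,
      ← intervalIntegral.integral_of_le hz.le, inner_s hy0 hz.le,
      ← ENNReal.ofReal_mul (by positivity)]
    simp only [Pi.mul_apply]
    rw [← ENNReal.ofReal_mul (by positivity)]
    congr 1
    have h2b : y ^ ((2:ℝ) + β) = y ^ (2:ℕ) * y ^ β := by
      rw [Real.rpow_add hy0]
      norm_num [Real.rpow_natCast]
    rw [h2b]
    have hy2 : (y:ℝ) ^ (2:ℕ) ≠ 0 := by positivity
    have hybn : y ^ (-β) = (y ^ β)⁻¹ := Real.rpow_neg hy0.le β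
    rw [hybn, hc_def]
    field_simp
  rw [setLIntegral_congr_fun measurableSet_Ioi key]
  -- Tonelli swap
  have hswap : ∫⁻ y in Set.Ioi (0:ℝ), ∫⁻ s in Set.Ioc 0 z,
        ENNReal.ofReal (c * y ^ (-β)) * ENNReal.ofReal ((z - s) * Real.exp (-(s*y)))
      = ∫⁻ s in Set.Ioc 0 z, ∫⁻ y in Set.Ioi (0:ℝ),
        ENNReal.ofReal (c * y ^ (-β)) * ENNReal.ofReal ((z - s) * Real.exp (-(s*y))) := by
    apply MeasureTheory.lintegral_lintegral_swap
    apply Measurable.aemeasurable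
    apply Measurable.mul (f := fun p : ℝ × ℝ => ENNReal.ofReal (c * p.1 ^ (-β)))
      (g := fun p : ℝ × ℝ => ENNReal.ofReal ((z - p.2) * Real.exp (-(p.2 * p.1))))
    · apply Measurable.ennreal_ofReal
      fun_prop
    · apply Measurable.ennreal_ofReal
      fun_prop
  rw [hswap]
  set K0 : ℝ := c * Real.Gamma (1-β) with hK0_def
  have hΓ1 : 0 < Real.Gamma (1-β) := Real.Gamma_pos_of_pos (by linarith)
  have hK0 : 0 < K0 := mul_pos hc hΓ1
  have inner_eq : ∀ s ∈ Set.Ioc (0:ℝ) z,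
      ∫⁻ y in Set.Ioi (0:ℝ),
        ENNReal.ofReal (c * y ^ (-β)) * ENNReal.ofReal ((z - s) * Real.exp (-(s*y)))
      = ENNReal.ofReal (K0 * ((z - s) * s ^ (β-1))) := by
    intro s hs
    obtain ⟨hs0, hsz⟩ := hs
    have hzs : 0 ≤ z - s := by linarith
    have step1 : ∀ y ∈ Set.Ioi (0:ℝ),
        ENNReal.ofReal (c * y ^ (-β)) * ENNReal.ofReal ((z - s) * Real.exp (-(s*y)))
        = ENNReal.ofReal (c * (z - s)) * ENNReal.ofReal (y ^ (-β) * Real.exp (-(s*y))) := by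
      intro y hy
      have hy0 : (0:ℝ) < y := hy
      have h1 : (0:ℝ) ≤ y ^ (-β) := (Real.rpow_pos_of_pos hy0 _).le
      rw [← ENNReal.ofReal_mul (by positivity), ← ENNReal.ofReal_mul (by positivity)]
      congr 1
      ring
    rw [setLIntegral_congr_fun measurableSet_Ioi step1,
      lintegral_const_mul' _ _ ENNReal.ofReal_ne_top, gamma_lint hs0 ⟨hβ0, hβ1⟩,
      ← ENNReal.ofReal_mul (by positivity)]
    congr 1
    have hinv : (1/s) ^ ((1:ℝ)-β) = s ^ (β-1) := by
      rw [one_div, Real.inv_rpow hs0.le, ← Real.rpow_neg hs0.le]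
      congr 1
      ring
    rw [hinv]
    ring
  rw [setLIntegral_congr_fun measurableSet_Ioc inner_eq]
  -- now compute the outer integral
  have i1 : IntervalIntegrable (fun s : ℝ => s ^ (β-1)) volume 0 z :=
    intervalIntegral.intervalIntegrable_rpow' (by linarith)
  have i2 : IntervalIntegrable (fun s : ℝ => s ^ β) volume 0 z :=
    intervalIntegral.intervalIntegrable_rpow' (by linarith)
  have eqn : ∀ s ∈ Set.uIcc (0:ℝ) z,
      K0 * ((z - s) * s ^ (β-1)) = (K0*z) * s ^ (β-1) - K0 * s ^ β := by
    intro s hs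
    rcases eq_or_lt_of_le ((Set.uIcc_of_le hz.le ▸ hs).1 : (0:ℝ) ≤ s) with h0 | h0
    · rw [← h0, Real.zero_rpow (by linarith), Real.zero_rpow (by linarith)]
      ring
    · have : s ^ β = s * s ^ (β-1) := by
        rw [← Real.rpow_one_add' (by linarith) (by linarith)]
        norm_num
      rw [this]
      ring
  have hint2 : IntegrableOn (fun s : ℝ => K0 * ((z - s) * s ^ (β-1))) (Set.Ioc 0 z) := by
    have : IntervalIntegrable (fun s : ℝ => K0 * ((z - s) * s ^ (β-1))) volume 0 z := by
      apply IntervalIntegrable.congr_ae ((i1.const_mul (K0*z)).sub (i2.const_mul K0))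
      rw [Filter.EventuallyEq, ae_restrict_iff' measurableSet_uIoc]
      apply ae_of_all
      intro s hs
      exact (eqn s (uIoc_subset_uIcc hs)).symm
    rwa [intervalIntegrable_iff, uIoc_of_le hz.le] at this
  have hnn2 : 0 ≤ᶠ[ae (volume.restrict (Set.Ioc 0 z))]
      (fun s : ℝ => K0 * ((z - s) * s ^ (β-1))) := by
    filter_upwards [self_mem_ae_restrict measurableSet_Ioc] with s hs
    simp only [Pi.zero_apply]
    have h1 : (0:ℝ) < s := hs.1
    have h2 : s ≤ z := hs.2
    have : (0:ℝ) ≤ s ^ (β-1) := (Real.rpow_pos_of_pos h1 _).le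
    exact mul_nonneg hK0.le (mul_nonneg (by linarith) this)
  rw [← MeasureTheory.ofReal_integral_eq_lintegral_ofReal hint2 hnn2]
  congr 1
  rw [← intervalIntegral.integral_of_le hz.le,
    intervalIntegral.integral_congr eqn,
    intervalIntegral.integral_sub (i1.const_mul (K0*z)) (i2.const_mul K0),
    intervalIntegral.integral_const_mul, intervalIntegral.integral_const_mul,
    integral_rpow (Or.inl (by linarith)), integral_rpow (Or.inl (by linarith))]
  rw [Real.zero_rpow (by linarith : β - 1 + 1 ≠ 0), Real.zero_rpow (by linarith : β + 1 ≠ 0)]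
  have hz1 : z ^ (β - 1 + 1) = z ^ β := by norm_num
  have hz2 : z * z ^ β = z ^ (1+β) := by
    rw [← Real.rpow_one_add' hz.le (by linarith)]
  have hz3 : z ^ (β + 1) = z ^ (1+β) := by rw [add_comm]
  rw [hz1, hz3]
  have hgr := gamma_rel ⟨hβ0, hβ1⟩
  have hΓne : Real.Gamma (-1 - β) ≠ 0 := ne_of_gt hΓ
  rw [hK0_def, hc_def, hgr]
  have hβne : β - 1 + 1 ≠ 0 := by linarith
  field_simp
  rw [← hz2]
  ring

lemma measure_le_sub_add {X : Type*} [MeasurableSpace X] (μ ν : Measure X)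
    [IsFiniteMeasure μ] [IsFiniteMeasure ν] : μ ≤ (μ - ν) + ν := by
  obtain ⟨s, hs, hle, hge⟩ := MeasureTheory.hahn_decomposition (μ := μ) (ν := ν)
  have hres : ν.restrict s ≤ μ.restrict s := by
    rw [Measure.le_iff]
    intro t ht
    rw [Measure.restrict_apply ht, Measure.restrict_apply ht]
    exact hle _ (ht.inter hs) Set.inter_subset_right
  have hτle : μ.restrict s - ν.restrict s ≤ μ - ν := by
    rw [Measure.sub_def (μ := μ) (ν := ν)]
    apply le_sInf
    intro τ hτ
    apply Measure.sub_le_of_le_add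
    calc μ.restrict s ≤ (τ + ν).restrict s := Measure.restrict_mono le_rfl hτ
    _ = τ.restrict s + ν.restrict s := Measure.restrict_add _ _ _
    _ ≤ τ + ν.restrict s := add_le_add_left Measure.restrict_le_self _
  have key : μ ≤ (μ.restrict s - ν.restrict s) + ν := by
    rw [Measure.le_iff]
    intro t ht
    have hsplit : μ t = μ (t ∩ s) + μ (t \ s) := (measure_inter_add_diff t hs).symm
    have hsub : (μ.restrict s - ν.restrict s) t = μ (t ∩ s) - ν (t ∩ s) := by
      rw [Measure.sub_apply ht hres, Measure.restrict_apply ht, Measure.restrict_apply ht]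
    rw [Measure.add_apply, hsub, hsplit]
    have h1 : ν (t ∩ s) ≤ μ (t ∩ s) := hle _ (ht.inter hs) Set.inter_subset_right
    have h2 : μ (t \ s) ≤ ν (t \ s) := hge _ (ht.diff hs) (fun x hx => hx.2)
    have h3 : ν (t ∩ s) + ν (t \ s) = ν t := measure_inter_add_diff t hs
    calc μ (t ∩ s) + μ (t \ s) ≤ μ (t ∩ s) + ν (t \ s) := add_le_add_right h2 _
    _ ≤ (μ (t ∩ s) - ν (t ∩ s)) + ν (t ∩ s) + ν (t \ s) := by
        rw [tsub_add_cancel_of_le h1]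
    _ = (μ (t ∩ s) - ν (t ∩ s)) + ν t := by rw [add_assoc, h3]
  exact key.trans (add_le_add_left hτle _)

lemma toReal_le_add' {a b c : ENNReal} (h : a ≤ b + c) (hb : b ≠ ⊤) (hc : c ≠ ⊤) :
    a.toReal ≤ b.toReal + c.toReal := by
  have := ENNReal.toReal_mono (by finiteness) h
  rwa [ENNReal.toReal_add hb hc] at this

/-- Let `ψ` be a branching mechanism with parameters `α, ρ, π` satisfying
Assumption 2 with parameters `(η, β, δ)`.  Then `(ψ(z) + αz)/z^{1+β} → η` as
`z → 0⁺`. -/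
theorem stmt1 (α ρ η β δ : ℝ) (π : Measure ℝ)
    (hα : 0 < α) (hρ : 0 ≤ ρ) (hη : 0 < η) (hβ : β ∈ Set.Ioo (0 : ℝ) 1) (hδ : 0 < δ)
    (hmom : ∫⁻ y in Set.Ioi (0 : ℝ), ENNReal.ofReal (min y (y ^ 2)) ∂π < ⊤)
    (hasp : Assumption2 π η β δ)
    (ψ : ℝ → ℝ)
    (hψ : ∀ z : ℝ, 0 ≤ z → ψ z = -α * z + ρ * z ^ 2
        + ∫ y in Set.Ioi (0 : ℝ), (Real.exp (-(z * y)) - 1 + z * y) ∂π) :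
    Filter.Tendsto (fun z : ℝ => (ψ z + α * z) / z ^ (1 + β))
      (nhdsWithin 0 (Set.Ioi 0)) (nhds η) := by
  obtain ⟨hβ0, hβ1⟩ := hβ
  have hΓ : 0 < Real.Gamma (-1 - β) := gamma_neg_pos ⟨hβ0, hβ1⟩
  set c : ℝ := η / Real.Gamma (-1 - β) with hc_def
  have hc : 0 < c := div_pos hη hΓ
  set μst : Measure ℝ := stableLevyMeasure η β with hμst_def
  set δ' : ℝ := min δ (1 - β) with hδ'_def
  have hδ'0 : 0 < δ' := lt_min hδ (by linarith)
  have hδ'1 : δ' ≤ 1 - β := min_le_right _ _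
  set s0 : ℝ := 1 + β + δ' with hs0_def
  have hs0_1 : 1 ≤ s0 := by simp only [hs0_def]; linarith
  have hs0_2 : s0 ≤ 2 := by simp only [hs0_def]; linarith
  have hs0_le : s0 ≤ 1 + β + δ := by simp only [hs0_def]; have := min_le_left δ (1 - β); linarith
  have hgm : Measurable (fun y : ℝ =>
      ENNReal.ofReal (η / (Real.Gamma (-1 - β) * y ^ (2 + β)))) := by
    apply Measurable.ennreal_ofReal; fun_prop
  have hFm : ∀ z : ℝ, Measurable (fun y : ℝ =>
      ENNReal.ofReal (Real.exp (-(z*y)) - 1 + z*y)) := by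
    intro z; apply Measurable.ennreal_ofReal; fun_prop
  -- Cπ
  set Cπ : ENNReal := ∫⁻ y in Set.Ioc (0:ℝ) 1, ENNReal.ofReal (y ^ 2) ∂π with hCπ_def
  have hCπ : Cπ ≠ ⊤ := by
    have h1 : Cπ = ∫⁻ y in Set.Ioc (0:ℝ) 1, ENNReal.ofReal (min y (y ^ 2)) ∂π := by
      apply setLIntegral_congr_fun_ae measurableSet_Ioc
      apply ae_of_all
      intro y hy
      rw [min_eq_right (by nlinarith [hy.1, hy.2] : y ^ 2 ≤ y)]
    rw [h1]
    exact ((lintegral_mono_set Set.Ioc_subset_Ioi_self).trans_lt hmom).ne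
  -- Cμ
  set Cμ : ENNReal := ∫⁻ y in Set.Ioc (0:ℝ) 1, ENNReal.ofReal (y ^ 2) ∂μst with hCμ_def
  have hres01 : μst.restrict (Set.Ioc 0 1)
      = (volume.restrict (Set.Ioc (0:ℝ) 1)).withDensity
        (fun y => ENNReal.ofReal (η / (Real.Gamma (-1 - β) * y ^ (2 + β)))) := by
    rw [hμst_def, stableLevyMeasure, MeasureTheory.restrict_withDensity measurableSet_Ioc,
      Measure.restrict_restrict measurableSet_Ioc,
      Set.inter_eq_left.mpr Set.Ioc_subset_Ioi_self]
  have hCμ : Cμ ≠ ⊤ := by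
    have h2 : Cμ = ∫⁻ y in Set.Ioc (0:ℝ) 1, ENNReal.ofReal (c * y ^ (-β)) := by
      rw [hCμ_def, hres01, lintegral_withDensity_eq_lintegral_mul _ hgm
        (by apply Measurable.ennreal_ofReal; fun_prop)]
      apply setLIntegral_congr_fun_ae measurableSet_Ioc
      apply ae_of_all
      intro y hy
      have hy0 : (0:ℝ) < y := hy.1
      simp only [Pi.mul_apply]
      rw [← ENNReal.ofReal_mul (by positivity)]
      congr 1
      have h2b : y ^ ((2:ℝ) + β) = y ^ (2:ℕ) * y ^ β := by
        rw [Real.rpow_add hy0]; norm_num [Real.rpow_natCast]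
      rw [h2b, hc_def, Real.rpow_neg hy0.le]
      have : (y:ℝ) ^ (2:ℕ) ≠ 0 := by positivity
      have : (y:ℝ) ^ β ≠ 0 := by positivity
      field_simp
    rw [h2]
    have hint : IntegrableOn (fun y : ℝ => c * y ^ (-β)) (Set.Ioc 0 1) := by
      have := intervalIntegral.intervalIntegrable_rpow' (a := 0) (b := 1)
        (show (-1:ℝ) < -β by linarith)
      rw [intervalIntegrable_iff, uIoc_of_le zero_le_one] at this
      exact this.const_mul c
    exact hint.lintegral_lt_top.ne
  -- finiteness of restricted measures on (1,∞)
  have hπ1fin : π (Set.Ioi 1) < ⊤ := by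
    have h1 : π (Set.Ioi 1) = ∫⁻ y in Set.Ioi (1:ℝ), 1 ∂π := by
      rw [setLIntegral_one]
    rw [h1]
    refine lt_of_le_of_lt (le_trans ?_ (lintegral_mono_set (Set.Ioi_subset_Ioi zero_le_one))) hmom
    apply setLIntegral_mono' measurableSet_Ioi
    intro y hy
    have hy1 : (1:ℝ) < y := hy
    have : (1:ℝ) ≤ min y (y ^ 2) := le_min (by linarith) (by nlinarith)
    calc (1:ENNReal) = ENNReal.ofReal 1 := by simp
    _ ≤ ENNReal.ofReal (min y (y ^ 2)) := ENNReal.ofReal_le_ofReal this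
  have hμ1fin : μst (Set.Ioi 1) < ⊤ := by
    have happ : μst (Set.Ioi 1) = ∫⁻ y in Set.Ioi (1:ℝ),
        ENNReal.ofReal (η / (Real.Gamma (-1 - β) * y ^ (2 + β))) ∂(volume.restrict (Set.Ioi 0)) := by
      rw [hμst_def, stableLevyMeasure, withDensity_apply _ measurableSet_Ioi]
    rw [happ, Measure.restrict_restrict measurableSet_Ioi,
      Set.inter_eq_left.mpr (Set.Ioi_subset_Ioi zero_le_one)]
    have heq : ∀ y ∈ Set.Ioi (1:ℝ),
        ENNReal.ofReal (η / (Real.Gamma (-1 - β) * y ^ (2 + β)))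
          = ENNReal.ofReal (c * y ^ (-(2+β))) := by
      intro y hy
      have hy0 : (0:ℝ) < y := lt_trans zero_lt_one hy
      congr 1
      rw [hc_def, Real.rpow_neg hy0.le]
      have : (y:ℝ) ^ ((2:ℝ)+β) ≠ 0 := by positivity
      field_simp
    rw [setLIntegral_congr_fun measurableSet_Ioi heq]
    have hint : IntegrableOn (fun y : ℝ => c * y ^ (-(2+β))) (Set.Ioi 1) :=
      (integrableOn_Ioi_rpow_of_lt (by linarith) zero_lt_one).const_mul c
    exact hint.lintegral_lt_top
  haveI hfinπ' : IsFiniteMeasure (π.restrict (Set.Ioi 1)) :=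
    ⟨by rwa [Measure.restrict_apply_univ]⟩
  haveI hfinμ' : IsFiniteMeasure (μst.restrict (Set.Ioi 1)) :=
    ⟨by rwa [Measure.restrict_apply_univ]⟩
  set D : Measure ℝ := tvDiff (π.restrict (Set.Ioi 1)) (μst.restrict (Set.Ioi 1)) with hD_def
  set K : ENNReal := ∫⁻ y in Set.Ioi (1:ℝ), ENNReal.ofReal (y ^ (1 + β + δ)) ∂D with hK_def
  have hK : K ≠ ⊤ := hasp.ne
  have hDcompl : D (Set.Ioi 1)ᶜ = 0 := by
    have h1 : (π.restrict (Set.Ioi 1)) (Set.Ioi 1)ᶜ = 0 := by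
      rw [Measure.restrict_apply (measurableSet_Ioi.compl), Set.compl_inter_self]
      simp
    have h2 : (μst.restrict (Set.Ioi 1)) (Set.Ioi 1)ᶜ = 0 := by
      rw [Measure.restrict_apply (measurableSet_Ioi.compl), Set.compl_inter_self]
      simp
    have hle1 := Measure.le_iff'.mp (Measure.sub_le
      (μ := π.restrict (Set.Ioi 1)) (ν := μst.restrict (Set.Ioi 1))) (Set.Ioi 1)ᶜ
    have hle2 := Measure.le_iff'.mp (Measure.sub_le
      (μ := μst.restrict (Set.Ioi 1)) (ν := π.restrict (Set.Ioi 1))) (Set.Ioi 1)ᶜ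
    rw [h1] at hle1
    rw [h2] at hle2
    rw [hD_def, tvDiff, Measure.add_apply, le_zero_iff.mp hle1, le_zero_iff.mp hle2, add_zero]
  -- measure comparison on (1,∞)
  have hπleD : π.restrict (Set.Ioi 1) ≤ D + μst.restrict (Set.Ioi 1) := by
    refine (measure_le_sub_add _ _).trans (add_le_add_left ?_ _)
    rw [hD_def, tvDiff]
    exact Measure.le_add_right le_rfl
  have hμleD : μst.restrict (Set.Ioi 1) ≤ D + π.restrict (Set.Ioi 1) := by
    refine (measure_le_sub_add _ _).trans (add_le_add_left ?_ _)
    rw [hD_def, tvDiff]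
    exact Measure.le_add_left le_rfl
  -- pointwise bound on (1,∞)
  have hpt : ∀ z ∈ Set.Ioo (0:ℝ) 1, ∀ y ∈ Set.Ioi (1:ℝ),
      ENNReal.ofReal (Real.exp (-(z*y)) - 1 + z*y)
        ≤ ENNReal.ofReal (z ^ s0) * ENNReal.ofReal (y ^ (1+β+δ)) := by
    intro z hz y hy
    have hz0 : 0 < z := hz.1
    have hy1 : (1:ℝ) < y := hy
    have hy0 : (0:ℝ) < y := lt_trans zero_lt_one hy1
    have ha : 0 < z * y := mul_pos hz0 hy0
    have hmin : Real.exp (-(z*y)) - 1 + z*y ≤ (z*y) ^ s0 := by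
      rcases le_or_gt (z*y) 1 with hle | hlt
      · calc Real.exp (-(z*y)) - 1 + z*y ≤ (z*y)^2 := fle_sq ha.le
        _ = (z*y) ^ (2:ℝ) := by rw [← Real.rpow_natCast (z*y) 2]; norm_num
        _ ≤ (z*y) ^ s0 := Real.rpow_le_rpow_of_exponent_ge ha hle hs0_2
      · calc Real.exp (-(z*y)) - 1 + z*y ≤ z*y := fle_lin ha.le
        _ = (z*y) ^ (1:ℝ) := (Real.rpow_one _).symm
        _ ≤ (z*y) ^ s0 := Real.rpow_le_rpow_of_exponent_le hlt.le hs0_1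
    rw [← ENNReal.ofReal_mul (by positivity)]
    apply ENNReal.ofReal_le_ofReal
    calc Real.exp (-(z*y)) - 1 + z*y ≤ (z*y) ^ s0 := hmin
    _ = z ^ s0 * y ^ s0 := Real.mul_rpow hz0.le hy0.le
    _ ≤ z ^ s0 * y ^ (1+β+δ) := by
        exact mul_le_mul_of_nonneg_left
          (Real.rpow_le_rpow_of_exponent_le hy1.le hs0_le) (by positivity)
  -- main estimate
  have main : ∀ z ∈ Set.Ioo (0:ℝ) 1,
      |(ψ z + α * z) / z ^ (1 + β) - η|
        ≤ (ρ + Cπ.toReal + Cμ.toReal) * z ^ (1 - β) + K.toReal * z ^ δ' := by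
    intro z hz
    obtain ⟨hz0, hz1⟩ := hz
    set Lπ01 : ENNReal := ∫⁻ y in Set.Ioc (0:ℝ) 1,
      ENNReal.ofReal (Real.exp (-(z*y)) - 1 + z*y) ∂π with hLπ01
    set Lπ1 : ENNReal := ∫⁻ y in Set.Ioi (1:ℝ),
      ENNReal.ofReal (Real.exp (-(z*y)) - 1 + z*y) ∂π with hLπ1
    set Lμ01 : ENNReal := ∫⁻ y in Set.Ioc (0:ℝ) 1,
      ENNReal.ofReal (Real.exp (-(z*y)) - 1 + z*y) ∂μst with hLμ01
    set Lμ1 : ENNReal := ∫⁻ y in Set.Ioi (1:ℝ),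
      ENNReal.ofReal (Real.exp (-(z*y)) - 1 + z*y) ∂μst with hLμ1
    set Dz : ENNReal := ∫⁻ y, ENNReal.ofReal (Real.exp (-(z*y)) - 1 + z*y) ∂D with hDz
    have hsplitπ : ∫⁻ y in Set.Ioi (0:ℝ),
        ENNReal.ofReal (Real.exp (-(z*y)) - 1 + z*y) ∂π = Lπ01 + Lπ1 := by
      rw [← Set.Ioc_union_Ioi_eq_Ioi (zero_le_one (α := ℝ)),
        lintegral_union measurableSet_Ioi (Set.Ioc_disjoint_Ioi le_rfl)]
    have hsplitμ : ∫⁻ y in Set.Ioi (0:ℝ),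
        ENNReal.ofReal (Real.exp (-(z*y)) - 1 + z*y) ∂μst = Lμ01 + Lμ1 := by
      rw [← Set.Ioc_union_Ioi_eq_Ioi (zero_le_one (α := ℝ)),
        lintegral_union measurableSet_Ioi (Set.Ioc_disjoint_Ioi le_rfl)]
    have hstable : Lμ01 + Lμ1 = ENNReal.ofReal (η * z ^ (1+β)) := by
      rw [← hsplitμ, hμst_def]; exact stable_id hη ⟨hβ0, hβ1⟩ hz0
    have hb01 : ∀ (ν : Measure ℝ),
        (∫⁻ y in Set.Ioc (0:ℝ) 1, ENNReal.ofReal (Real.exp (-(z*y)) - 1 + z*y) ∂ν)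
        ≤ ENNReal.ofReal (z ^ 2) * ∫⁻ y in Set.Ioc (0:ℝ) 1, ENNReal.ofReal (y ^ 2) ∂ν := by
      intro ν
      rw [← lintegral_const_mul' _ _ ENNReal.ofReal_ne_top]
      apply setLIntegral_mono' measurableSet_Ioc
      intro y hy
      have hy0 : 0 < y := hy.1
      have hzy : 0 ≤ z * y := by positivity
      rw [← ENNReal.ofReal_mul (by positivity)]
      apply ENNReal.ofReal_le_ofReal
      calc Real.exp (-(z*y)) - 1 + z*y ≤ (z*y)^2 := fle_sq hzy
      _ = z^2 * y^2 := by ring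
    have hbπ01 : Lπ01 ≤ ENNReal.ofReal (z ^ 2) * Cπ := hb01 π
    have hbμ01 : Lμ01 ≤ ENNReal.ofReal (z ^ 2) * Cμ := hb01 μst
    have hDzb : Dz ≤ ENNReal.ofReal (z ^ s0) * K := by
      rw [hDz, ← lintegral_add_compl
        (fun y => ENNReal.ofReal (Real.exp (-(z*y)) - 1 + z*y)) measurableSet_Ioi (μ := D)]
      have hzero : ∫⁻ y in (Set.Ioi (1:ℝ))ᶜ,
          ENNReal.ofReal (Real.exp (-(z*y)) - 1 + z*y) ∂D = 0 :=
        setLIntegral_measure_zero _ _ hDcompl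
      rw [hzero, add_zero, hK_def, ← lintegral_const_mul' _ _ ENNReal.ofReal_ne_top]
      apply setLIntegral_mono' measurableSet_Ioi
      exact fun y hy => hpt z ⟨hz0, hz1⟩ y hy
    -- finiteness
    have hLμ1_ne : Lμ1 ≠ ⊤ :=
      ne_top_of_le_ne_top ENNReal.ofReal_ne_top (hstable ▸ le_add_self)
    have hLμ01_ne : Lμ01 ≠ ⊤ :=
      ne_top_of_le_ne_top ENNReal.ofReal_ne_top (hstable ▸ self_le_add_right _ _)
    have hDz_ne : Dz ≠ ⊤ :=
      ne_top_of_le_ne_top (ENNReal.mul_ne_top ENNReal.ofReal_ne_top hK) hDzb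
    have hLπ1_le : Lπ1 ≤ Dz + Lμ1 := by
      calc Lπ1 ≤ ∫⁻ y, ENNReal.ofReal (Real.exp (-(z*y)) - 1 + z*y)
            ∂(D + μst.restrict (Set.Ioi 1)) := lintegral_mono' hπleD le_rfl
      _ = Dz + Lμ1 := lintegral_add_measure _ _ _
    have hLμ1_le : Lμ1 ≤ Dz + Lπ1 := by
      calc Lμ1 ≤ ∫⁻ y, ENNReal.ofReal (Real.exp (-(z*y)) - 1 + z*y)
            ∂(D + π.restrict (Set.Ioi 1)) := lintegral_mono' hμleD le_rfl
      _ = Dz + Lπ1 := lintegral_add_measure _ _ _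
    have hLπ1_ne : Lπ1 ≠ ⊤ :=
      ne_top_of_le_ne_top (ENNReal.add_ne_top.mpr ⟨hDz_ne, hLμ1_ne⟩) hLπ1_le
    have hLπ01_ne : Lπ01 ≠ ⊤ :=
      ne_top_of_le_ne_top (ENNReal.mul_ne_top ENNReal.ofReal_ne_top hCπ) hbπ01
    -- real versions
    have habs1 : |Lπ1.toReal - Lμ1.toReal| ≤ Dz.toReal := by
      rw [abs_sub_le_iff]
      constructor
      · have := toReal_le_add' hLπ1_le hDz_ne hLμ1_ne; linarith
      · have := toReal_le_add' hLμ1_le hDz_ne hLπ1_ne; linarith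
    have h01π : Lπ01.toReal ≤ z^2 * Cπ.toReal := by
      have := ENNReal.toReal_mono (ENNReal.mul_ne_top ENNReal.ofReal_ne_top hCπ) hbπ01
      rwa [ENNReal.toReal_mul, ENNReal.toReal_ofReal (by positivity)] at this
    have h01μ : Lμ01.toReal ≤ z^2 * Cμ.toReal := by
      have := ENNReal.toReal_mono (ENNReal.mul_ne_top ENNReal.ofReal_ne_top hCμ) hbμ01
      rwa [ENNReal.toReal_mul, ENNReal.toReal_ofReal (by positivity)] at this
    have hDzr : Dz.toReal ≤ z^s0 * K.toReal := by
      have := ENNReal.toReal_mono (ENNReal.mul_ne_top ENNReal.ofReal_ne_top hK) hDzb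
      rwa [ENNReal.toReal_mul, ENNReal.toReal_ofReal (by positivity)] at this
    have hstabr : Lμ01.toReal + Lμ1.toReal = η * z^(1+β) := by
      rw [← ENNReal.toReal_add hLμ01_ne hLμ1_ne, hstable,
        ENNReal.toReal_ofReal (by positivity)]
    have hInt : ∫ y in Set.Ioi (0:ℝ), (Real.exp (-(z * y)) - 1 + z * y) ∂π
        = Lπ01.toReal + Lπ1.toReal := by
      rw [MeasureTheory.integral_eq_lintegral_of_nonneg_ae
        (ae_of_all _ (fun y => fnn (z*y)))
        ((Continuous.aestronglyMeasurable (by fun_prop)))]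
      rw [hsplitπ, ENNReal.toReal_add hLπ01_ne hLπ1_ne]
    have hψz : ψ z + α * z = ρ * z^2 + (Lπ01.toReal + Lπ1.toReal) := by
      rw [hψ z hz0.le, hInt]; ring
    have hnum : |ψ z + α*z - η * z^(1+β)|
        ≤ (ρ + Cπ.toReal + Cμ.toReal) * z^2 + K.toReal * z^s0 := by
      rw [hψz, ← hstabr]
      have h1 : |Lπ1.toReal - Lμ1.toReal| ≤ z^s0 * K.toReal := habs1.trans hDzr
      have hz2nn : (0:ℝ) ≤ z^2 := sq_nonneg z
      have hπnn : (0:ℝ) ≤ Lπ01.toReal := ENNReal.toReal_nonneg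
      have hμnn : (0:ℝ) ≤ Lμ01.toReal := ENNReal.toReal_nonneg
      have hρz : (0:ℝ) ≤ ρ * z^2 := mul_nonneg hρ hz2nn
      have hexp : (ρ + Cπ.toReal + Cμ.toReal) * z^2
          = ρ*z^2 + z^2*Cπ.toReal + z^2*Cμ.toReal := by ring
      have hcomm : z^s0 * K.toReal = K.toReal * z^s0 := mul_comm _ _
      have hp1 : (0:ℝ) ≤ z^2*Cπ.toReal := mul_nonneg hz2nn ENNReal.toReal_nonneg
      have hp2 : (0:ℝ) ≤ z^2*Cμ.toReal := mul_nonneg hz2nn ENNReal.toReal_nonneg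
      rw [abs_le] at h1 ⊢
      constructor <;> [skip; skip] <;> linarith
    have hzp : (0:ℝ) < z ^ (1+β) := Real.rpow_pos_of_pos hz0 _
    have hdiff : (ψ z + α*z)/z^(1+β) - η = (ψ z + α*z - η*z^(1+β))/z^(1+β) := by
      field_simp
    rw [hdiff, abs_div, abs_of_pos hzp]
    have e2 : (z:ℝ)^(2:ℕ) = z^(1-β) * z^(1+β) := by
      rw [← Real.rpow_add hz0, ← Real.rpow_natCast z 2]
      norm_num
    have e3 : z^s0 = z^δ' * z^(1+β) := by
      rw [← Real.rpow_add hz0]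
      congr 1
      rw [hs0_def]
      ring
    have hrhs : (ρ + Cπ.toReal + Cμ.toReal) * z^(1-β) + K.toReal * z^δ'
        = ((ρ + Cπ.toReal + Cμ.toReal) * z^2 + K.toReal * z^s0)/z^(1+β) := by
      rw [e3, e2]
      field_simp
    rw [hrhs]
    gcongr
  -- final limit
  rw [← tendsto_sub_nhds_zero_iff]
  have hev : ∀ᶠ z in nhdsWithin (0:ℝ) (Set.Ioi 0),
      ‖(ψ z + α*z)/z^(1+β) - η‖
        ≤ (ρ + Cπ.toReal + Cμ.toReal) * z^(1-β) + K.toReal * z^δ' := by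
    filter_upwards [Ioo_mem_nhdsGT_of_mem (Set.mem_Ico.mpr ⟨le_rfl, zero_lt_one⟩)] with z hz
    rw [Real.norm_eq_abs]
    exact main z hz
  apply squeeze_zero_norm' hev
  have hrp : ∀ p : ℝ, 0 < p →
      Filter.Tendsto (fun z : ℝ => z ^ p) (nhdsWithin (0:ℝ) (Set.Ioi 0)) (nhds 0) := by
    intro p hp
    have hcont := (Real.continuousAt_rpow_const 0 p (Or.inr hp.le)).tendsto
    rw [Real.zero_rpow hp.ne'] at hcont
    exact tendsto_nhdsWithin_of_tendsto_nhds hcont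
  have := ((hrp _ (by linarith : (0:ℝ) < 1-β)).const_mul (ρ + Cπ.toReal + Cμ.toReal)).add
    ((hrp _ hδ'0).const_mul K.toReal)
  simpa using this
end

section
/- Let π be a Borel measure on (0,∞) with ∫_{(0,∞)} (y ∧ y²) π(dy) < ∞. Suppose there exist η > 0, β ∈ (0,1), δ > 0 with ∫_{(1,∞)} y^{1+β+δ} |π − μ_{η,β}|(dy) < ∞, and also η' > 0, β' ∈ (0,1), δ' > 0 with ∫_{(1,∞)} y^{1+β'+δ'} |π − μ_{η',β'}|(dy) < ∞. Then η = η' and β = β'. (In other words, the parameters η and β in Assumption 2 are uniquely determined by π.) -/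
open MeasureTheory Set

open Filter

lemma gammaNegPos {β : ℝ} (hβ : β ∈ Set.Ioo (0 : ℝ) 1) : 0 < Real.Gamma (-1 - β) := by
  obtain ⟨hβ0, hβ1⟩ := hβ
  have h1 : (-1 - β : ℝ) ≠ 0 := by linarith
  have h2 : (-β : ℝ) ≠ 0 := by linarith
  have e1 : Real.Gamma (-1 - β + 1) = (-1 - β) * Real.Gamma (-1 - β) :=
    Real.Gamma_add_one h1
  have e2 : Real.Gamma (-β + 1) = (-β) * Real.Gamma (-β) := Real.Gamma_add_one h2
  have h3 : (-1 - β + 1 : ℝ) = -β := by ring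
  rw [h3] at e1
  have hpos : 0 < Real.Gamma (-β + 1) := Real.Gamma_pos_of_pos (by linarith)
  rw [e2, e1] at hpos
  have h4 : 0 < β * (1 + β) := by nlinarith
  have h5 : 0 < β * (1 + β) * Real.Gamma (-1 - β) := by nlinarith [hpos]
  nlinarith [h4, h5]

lemma stableTail {η β : ℝ} (hη : 0 < η) (hβ : β ∈ Set.Ioo (0 : ℝ) 1) {x : ℝ} (hx : 0 < x) :
    stableLevyMeasure η β (Set.Ioi x)
      = ENNReal.ofReal (η / (Real.Gamma (-1 - β) * (1 + β)) * x ^ (-(1 + β))) := by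
  have hΓ := gammaNegPos hβ
  rw [stableLevyMeasure, withDensity_apply _ measurableSet_Ioi,
    Measure.restrict_restrict measurableSet_Ioi]
  have hinter : Set.Ioi x ∩ Set.Ioi (0 : ℝ) = Set.Ioi x :=
    inter_eq_self_of_subset_left (Set.Ioi_subset_Ioi hx.le)
  rw [hinter]
  have hint : IntegrableOn (fun y : ℝ => η / (Real.Gamma (-1 - β) * y ^ (2 + β)))
      (Set.Ioi x) := by
    have h2 := (integrableOn_Ioi_rpow_of_lt
      (show -(2 + β) < -1 by linarith [hβ.1]) hx).const_mul (η / Real.Gamma (-1 - β))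
    refine IntegrableOn.congr_fun h2 (fun y hy => ?_) measurableSet_Ioi
    have hy0 : 0 < y := hx.trans hy
    rw [Real.rpow_neg hy0.le]
    field_simp
  rw [← ofReal_integral_eq_lintegral_ofReal hint ?nn]
  case nn =>
    filter_upwards [ae_restrict_mem measurableSet_Ioi] with y hy
    have hy0 : 0 < y := hx.trans hy
    exact le_of_lt (div_pos hη (mul_pos hΓ (Real.rpow_pos_of_pos hy0 _)))
  congr 1
  have hcg : ∀ y ∈ Set.Ioi x,
      η / (Real.Gamma (-1 - β) * y ^ (2 + β)) = (η / Real.Gamma (-1 - β)) * y ^ (-(2 + β)) := by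
    intro y hy
    have hy0 : 0 < y := hx.trans hy
    rw [Real.rpow_neg hy0.le]
    field_simp
  rw [setIntegral_congr_fun measurableSet_Ioi hcg, integral_const_mul,
    integral_Ioi_rpow_of_lt (show -(2 + β) < -1 by linarith [hβ.1]) hx,
    show -(2 + β) + 1 = -(1 + β) by ring, neg_div_neg_eq]
  have h1β : (1 + β) ≠ 0 := by nlinarith [hβ.1]
  field_simp

lemma measLeSubAdd {μ ν : Measure ℝ} [IsFiniteMeasure μ] [IsFiniteMeasure ν]
    {s : Set ℝ} (hs : MeasurableSet s) : μ s ≤ (μ - ν) s + ν s := by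
  obtain ⟨u, hu, h₁, h₂⟩ := MeasureTheory.hahn_decomposition (μ := μ) (ν := ν)
  have hsu : MeasurableSet (s ∩ u) := hs.inter hu
  have hle : ν.restrict u ≤ μ.restrict u := by
    rw [Measure.le_iff]
    intro t ht
    rw [Measure.restrict_apply ht, Measure.restrict_apply ht]
    exact h₁ _ (ht.inter hu) inter_subset_right
  have hmid : μ (s ∩ u) ≤ (μ - ν) (s ∩ u) + ν (s ∩ u) := by
    have e1 : (μ - ν) (s ∩ u) = μ (s ∩ u) - ν (s ∩ u) := by
      have e2 : ((μ - ν).restrict u) (s ∩ u) = (μ - ν) (s ∩ u) := by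
        rw [Measure.restrict_apply hsu, inter_assoc, inter_self]
      rw [← e2, Measure.restrict_sub_eq_restrict_sub_restrict hu,
        Measure.sub_apply hsu hle, Measure.restrict_apply hsu,
        Measure.restrict_apply hsu, inter_assoc, inter_self]
    rw [e1, tsub_add_cancel_of_le (h₁ _ hsu inter_subset_right)]
  calc μ s = μ (s ∩ u) + μ (s \ u) := (measure_inter_add_diff s hu).symm
    _ ≤ ((μ - ν) (s ∩ u) + ν (s ∩ u)) + ν (s \ u) :=
        add_le_add hmid (h₂ _ (hs.diff hu) (diff_subset_compl s u))
    _ = (μ - ν) (s ∩ u) + ν s := by rw [add_assoc, measure_inter_add_diff s hu]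
    _ ≤ (μ - ν) s + ν s := add_le_add (measure_mono inter_subset_left) le_rfl

lemma tailTendsto (π : Measure ℝ) (h1 : π (Set.Ioi 1) < ⊤)
    {η β δ : ℝ} (hη : 0 < η) (hβ : β ∈ Set.Ioo (0 : ℝ) 1) (hδ : 0 < δ)
    (hasp : Assumption2 π η β δ) :
    Tendsto (fun x : ℝ => x ^ (1 + β) * (π (Set.Ioi x)).toReal) atTop
      (nhds (η / (Real.Gamma (-1 - β) * (1 + β)))) := by
  set c := η / (Real.Gamma (-1 - β) * (1 + β)) with hc
  have hcpos : 0 < c :=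
    div_pos hη (mul_pos (gammaNegPos hβ) (by linarith [hβ.1]))
  set A := π.restrict (Set.Ioi 1) with hA
  set B := (stableLevyMeasure η β).restrict (Set.Ioi 1) with hB
  set T := tvDiff A B with hT
  set K := ∫⁻ y in Set.Ioi (1 : ℝ), ENNReal.ofReal (y ^ (1 + β + δ)) ∂T with hKdef
  have hKlt : K < ⊤ := hasp
  set M := K.toReal with hM
  have fin1 : IsFiniteMeasure A := by
    constructor
    rw [hA, Measure.restrict_apply_univ]
    exact h1
  have fin2 : IsFiniteMeasure B := by
    constructor
    rw [hB, Measure.restrict_apply_univ, stableTail hη hβ one_pos]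
    exact ENNReal.ofReal_lt_top
  have key : ∀ x : ℝ, 1 < x →
      |x ^ (1 + β) * (π (Set.Ioi x)).toReal - c| ≤ M * x ^ (-δ) := by
    intro x hx
    have hx0 : 0 < x := lt_trans one_pos hx
    have hTx : ENNReal.ofReal (x ^ (1 + β + δ)) * T (Set.Ioi x) ≤ K := by
      calc ENNReal.ofReal (x ^ (1 + β + δ)) * T (Set.Ioi x)
          = ∫⁻ _ in Set.Ioi x, ENNReal.ofReal (x ^ (1 + β + δ)) ∂T := by
            rw [setLIntegral_const]
        _ ≤ ∫⁻ y in Set.Ioi x, ENNReal.ofReal (y ^ (1 + β + δ)) ∂T := by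
            refine setLIntegral_mono' measurableSet_Ioi fun y hy => ?_
            exact ENNReal.ofReal_le_ofReal
              (Real.rpow_le_rpow hx0.le (le_of_lt hy) (by linarith [hβ.1]))
        _ ≤ K := lintegral_mono_set (Set.Ioi_subset_Ioi hx.le)
    have hxp : (0 : ℝ) < x ^ (1 + β + δ) := Real.rpow_pos_of_pos hx0 _
    have hTfin : T (Set.Ioi x) < ⊤ := by
      have hne : ENNReal.ofReal (x ^ (1 + β + δ)) ≠ 0 := by
        simp [ENNReal.ofReal_eq_zero, not_le, hxp]
      have hmul : ENNReal.ofReal (x ^ (1 + β + δ)) * T (Set.Ioi x) ≠ ⊤ := by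
        intro htop
        rw [htop] at hTx
        exact hKlt.ne (top_le_iff.mp hTx)
      exact ENNReal.lt_top_of_mul_ne_top_right hmul hne
    have hπx : A (Set.Ioi x) = π (Set.Ioi x) := by
      rw [hA, Measure.restrict_apply measurableSet_Ioi,
        inter_eq_self_of_subset_left (Set.Ioi_subset_Ioi hx.le)]
    have hμx : B (Set.Ioi x) = ENNReal.ofReal (c * x ^ (-(1 + β))) := by
      rw [hB, Measure.restrict_apply measurableSet_Ioi,
        inter_eq_self_of_subset_left (Set.Ioi_subset_Ioi hx.le), stableTail hη hβ hx0]
    have hπfin : π (Set.Ioi x) < ⊤ :=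
      lt_of_le_of_lt (measure_mono (Set.Ioi_subset_Ioi hx.le)) h1
    set a := (π (Set.Ioi x)).toReal with ha
    set b := c * x ^ (-(1 + β)) with hb
    set t := (T (Set.Ioi x)).toReal with ht
    have hbpos : 0 < b := mul_pos hcpos (Real.rpow_pos_of_pos hx0 _)
    have htnn : 0 ≤ t := ENNReal.toReal_nonneg
    -- a ≤ t + b
    have hab : a ≤ t + b := by
      have h2 : A (Set.Ioi x) ≤ T (Set.Ioi x) + B (Set.Ioi x) := by
        refine le_trans (measLeSubAdd measurableSet_Ioi) (add_le_add ?_ le_rfl)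
        rw [hT, tvDiff, Measure.add_apply]
        exact le_self_add
      rw [hπx, hμx] at h2
      have h3 := ENNReal.toReal_mono (by
        exact ENNReal.add_ne_top.mpr ⟨hTfin.ne, ENNReal.ofReal_ne_top⟩) h2
      rwa [ENNReal.toReal_add hTfin.ne ENNReal.ofReal_ne_top,
        ENNReal.toReal_ofReal hbpos.le] at h3
    -- b ≤ t + a
    have hba : b ≤ t + a := by
      have h2 : B (Set.Ioi x) ≤ T (Set.Ioi x) + A (Set.Ioi x) := by
        refine le_trans (measLeSubAdd measurableSet_Ioi) (add_le_add ?_ le_rfl)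
        rw [hT, tvDiff, Measure.add_apply]
        exact le_add_self
      rw [hπx, hμx] at h2
      have h3 := ENNReal.toReal_mono (by
        exact ENNReal.add_ne_top.mpr ⟨hTfin.ne, hπfin.ne⟩) h2
      rwa [ENNReal.toReal_add hTfin.ne hπfin.ne,
        ENNReal.toReal_ofReal hbpos.le] at h3
    -- t ≤ M * x ^ (-(1+β+δ))
    have htM : t ≤ M * x ^ (-(1 + β + δ)) := by
      have h4 : x ^ (1 + β + δ) * t ≤ M := by
        have h5 := ENNReal.toReal_mono hKlt.ne hTx
        rwa [ENNReal.toReal_mul, ENNReal.toReal_ofReal hxp.le] at h5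
      rw [Real.rpow_neg hx0.le, ← div_eq_mul_inv, le_div_iff₀ hxp]
      linarith [h4]
    have habs : |a - b| ≤ t := abs_sub_le_iff.mpr ⟨by linarith, by linarith⟩
    have hxc : x ^ (1 + β) * b = c := by
      rw [hb, mul_comm c, ← mul_assoc, ← Real.rpow_add hx0,
        show (1 + β) + -(1 + β) = (0 : ℝ) by ring, Real.rpow_zero, one_mul]
    calc |x ^ (1 + β) * a - c| = x ^ (1 + β) * |a - b| := by
          rw [← hxc, ← mul_sub, abs_mul, abs_of_pos (Real.rpow_pos_of_pos hx0 _)]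
      _ ≤ x ^ (1 + β) * (M * x ^ (-(1 + β + δ))) := by
          exact mul_le_mul_of_nonneg_left (habs.trans htM) (Real.rpow_pos_of_pos hx0 _).le
      _ = M * x ^ (-δ) := by
          rw [mul_comm M, ← mul_assoc, ← Real.rpow_add hx0]
          ring_nf
  have h0 : Tendsto (fun x : ℝ => M * x ^ (-δ)) atTop (nhds 0) := by
    have := (tendsto_rpow_neg_atTop hδ).const_mul M
    simpa using this
  rw [← tendsto_sub_nhds_zero_iff]
  refine squeeze_zero_norm' ?_ h0
  filter_upwards [eventually_gt_atTop (1 : ℝ)] with x hx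
  simpa [Real.norm_eq_abs] using key x hx

/-- The parameters `η` and `β` in Assumption 2 are uniquely determined by the
Lévy measure `π`. -/
theorem stmt2 (π : Measure ℝ)
    (hmom : ∫⁻ y in Set.Ioi (0 : ℝ), ENNReal.ofReal (min y (y ^ 2)) ∂π < ⊤)
    (η β δ : ℝ) (hη : 0 < η) (hβ : β ∈ Set.Ioo (0 : ℝ) 1) (hδ : 0 < δ)
    (hasp : Assumption2 π η β δ)
    (η' β' δ' : ℝ) (hη' : 0 < η') (hβ' : β' ∈ Set.Ioo (0 : ℝ) 1) (hδ' : 0 < δ')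
    (hasp' : Assumption2 π η' β' δ') :
    η = η' ∧ β = β' := by
  -- π is finite on (1,∞)
  have h1 : π (Set.Ioi 1) < ⊤ := by
    have hb : π (Set.Ioi 1) ≤ ∫⁻ y in Set.Ioi (1 : ℝ), ENNReal.ofReal (min y (y ^ 2)) ∂π := by
      have : π (Set.Ioi 1) = ∫⁻ _ in Set.Ioi (1 : ℝ), 1 ∂π := by
        simp
      rw [this]
      refine setLIntegral_mono' measurableSet_Ioi fun y hy => ?_
      have hy1 : (1 : ℝ) < y := hy
      have : (1 : ℝ) ≤ min y (y ^ 2) := le_min hy1.le (by nlinarith)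
      exact ENNReal.one_le_ofReal.mpr this
    calc π (Set.Ioi 1) ≤ _ := hb
      _ ≤ ∫⁻ y in Set.Ioi (0 : ℝ), ENNReal.ofReal (min y (y ^ 2)) ∂π :=
          lintegral_mono_set (Set.Ioi_subset_Ioi (by norm_num))
      _ < ⊤ := hmom
  have L := tailTendsto π h1 hη hβ hδ hasp
  have L' := tailTendsto π h1 hη' hβ' hδ' hasp'
  have hc : 0 < η / (Real.Gamma (-1 - β) * (1 + β)) := by
    apply div_pos hη
    exact mul_pos (gammaNegPos hβ) (by linarith [hβ.1])
  have hc' : 0 < η' / (Real.Gamma (-1 - β') * (1 + β')) := by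
    apply div_pos hη'
    exact mul_pos (gammaNegPos hβ') (by linarith [hβ'.1])
  -- general: from the two limits, β' ≤ β
  have key : ∀ (b b' c c' : ℝ), 0 < c →
      Tendsto (fun x : ℝ => x ^ (1 + b) * (π (Set.Ioi x)).toReal) atTop (nhds c) →
      Tendsto (fun x : ℝ => x ^ (1 + b') * (π (Set.Ioi x)).toReal) atTop (nhds c') →
      b' ≤ b := by
    intro b b' c c' hc hL hL'
    by_contra hlt
    push_neg at hlt
    have hT : Tendsto (fun x : ℝ => x ^ (1 + b') * (π (Set.Ioi x)).toReal) atTop atTop := by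
      have heq : (fun x : ℝ => x ^ (b' - b) * (x ^ (1 + b) * (π (Set.Ioi x)).toReal))
          =ᶠ[atTop] (fun x : ℝ => x ^ (1 + b') * (π (Set.Ioi x)).toReal) := by
        filter_upwards [eventually_gt_atTop (0 : ℝ)] with x hx
        rw [← mul_assoc, ← Real.rpow_add hx]
        ring_nf
      refine Tendsto.congr' heq ?_
      exact Filter.Tendsto.atTop_mul_pos hc (tendsto_rpow_atTop (by linarith)) hL
    exact (not_tendsto_nhds_of_tendsto_atTop hT _) hL'
  have hββ' : β = β' := le_antisymm (key β' β _ _ hc' L' L) (key β β' _ _ hc L L')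
  subst hββ'
  have hcc : η / (Real.Gamma (-1 - β) * (1 + β)) = η' / (Real.Gamma (-1 - β) * (1 + β)) :=
    tendsto_nhds_unique L L'
  have hD : Real.Gamma (-1 - β) * (1 + β) ≠ 0 :=
    (mul_pos (gammaNegPos hβ) (by linarith [hβ.1])).ne'
  field_simp [hD] at hcc
  exact ⟨by rwa [div_left_inj' hD] at hcc, rfl⟩
end

section
/- Let π be a Borel measure on (0,∞) with ∫_{(0,∞)} (y ∧ y²) π(dy) < ∞. Then the functions h(z) = ∫_{(0,∞)} (e^{−zy} − 1 + zy) π(dy) and h'(z) = ∫_{(0,∞)} (1 − e^{−zy}) y π(dy) are well defined for all z ∈ ℂ₊ (the integrals converge absolutely), both are continuous on ℂ₊ and holomorphic on ℂ₊⁰, and for every z₀ ∈ ℂ₊, (h(z) − h(z₀))/(z − z₀) → h'(z₀) as z → z₀ with z ∈ ℂ₊, z ≠ z₀. -/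
open MeasureTheory Complex Set Filter

/-- helper: min of products bound -/
lemma stmt7_aux_min_le {a b y : ℝ} (hy : 0 < y) (ha : 0 ≤ a) (hb : 0 ≤ b) :
    min (a * y) (b * y ^ 2) ≤ (a + b) * min y (y ^ 2) := by
  rcases le_total y 1 with h | h
  · have hmin : min y (y ^ 2) = y ^ 2 := min_eq_right (by nlinarith)
    rw [hmin]
    calc min (a * y) (b * y ^ 2) ≤ b * y ^ 2 := min_le_right _ _
      _ ≤ (a + b) * y ^ 2 := by nlinarith
  · have hmin : min y (y ^ 2) = y := min_eq_left (by nlinarith)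
    rw [hmin]
    calc min (a * y) (b * y ^ 2) ≤ a * y := min_le_left _ _
      _ ≤ (a + b) * y := by nlinarith

lemma stmt7_re_mul (z : ℂ) (y : ℝ) : (z * (y : ℂ)).re = z.re * y := by
  simp [Complex.mul_re]

lemma stmt7_norm_one_sub_exp {w : ℂ} (hw : 0 ≤ w.re) :
    ‖1 - Complex.exp (-w)‖ ≤ min 2 ‖w‖ := by
  refine le_min ?_ ?_
  · calc ‖1 - Complex.exp (-w)‖ ≤ ‖(1 : ℂ)‖ + ‖Complex.exp (-w)‖ := norm_sub_le _ _
      _ ≤ 1 + 1 := by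
          have : ‖Complex.exp (-w)‖ = Real.exp ((-w).re) := Complex.norm_exp _
          rw [this]
          have h2 : ‖Complex.exp (-w)‖ ≤ 1 := by
            rw [this]
            exact Real.exp_le_one_iff.mpr (by simp [Complex.neg_re]; linarith)
          have h3 : ‖(1:ℂ)‖ = 1 := norm_one
          linarith
      _ = 2 := by norm_num
  · have key := Convex.norm_image_sub_le_of_norm_hasDerivWithin_le
      (f := fun z : ℂ => Complex.exp (-z)) (f' := fun z : ℂ => -Complex.exp (-z))
      (s := {z : ℂ | 0 ≤ z.re}) (C := 1)
      (fun x _ => by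
        have h1 : HasDerivAt (fun z : ℂ => Complex.exp (-z)) (Complex.exp (-x) * (-1)) x :=
          (Complex.hasDerivAt_exp _).comp x (hasDerivAt_neg x)
        simpa using h1.hasDerivWithinAt)
      (fun x hx => by
        have : ‖Complex.exp (-x)‖ = Real.exp ((-x).re) := Complex.norm_exp _
        simp only [norm_neg, this]
        exact Real.exp_le_one_iff.mpr (by simpa using hx))
      (convex_halfSpace_re_ge 0) (x := 0) (by simp) hw
    simpa [norm_sub_rev] using key

lemma stmt7_hasDeriv_f (y : ℝ) (z : ℂ) :
    HasDerivAt (fun z : ℂ => Complex.exp (-(z * y)) - 1 + z * y)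
      ((1 - Complex.exp (-(z * y))) * y) z := by
  have h1 : HasDerivAt (fun z : ℂ => -(z * (y : ℂ))) (-(y : ℂ)) z := by
    have h0 := ((hasDerivAt_id' z).mul_const (y : ℂ)).neg; rw [one_mul] at h0; exact h0
  have h2 : HasDerivAt (fun z : ℂ => Complex.exp (-(z * y)))
      (Complex.exp (-(z * y)) * (-(y : ℂ))) z := (Complex.hasDerivAt_exp _).comp z h1
  have h3 : HasDerivAt (fun z : ℂ => z * (y : ℂ)) (y : ℂ) z := by
    simpa using (hasDerivAt_id z).mul_const (y : ℂ)
  have := (h2.sub_const 1).add h3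
  exact this.congr_deriv (by ring)

lemma stmt7_hasDeriv_g (y : ℝ) (z : ℂ) :
    HasDerivAt (fun z : ℂ => (1 - Complex.exp (-(z * y))) * y)
      (Complex.exp (-(z * y)) * (y : ℂ) ^ 2) z := by
  have h1 : HasDerivAt (fun z : ℂ => -(z * (y : ℂ))) (-(y : ℂ)) z := by
    have h0 := ((hasDerivAt_id' z).mul_const (y : ℂ)).neg; rw [one_mul] at h0; exact h0
  have h2 : HasDerivAt (fun z : ℂ => Complex.exp (-(z * y)))
      (Complex.exp (-(z * y)) * (-(y : ℂ))) z := (Complex.hasDerivAt_exp _).comp z h1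
  have := ((hasDerivAt_const z (1 : ℂ)).sub h2).mul_const (y : ℂ)
  exact this.congr_deriv (by ring)

/-- norm bound for the `h'` integrand -/
lemma stmt7_bound_g {z : ℂ} (hz : 0 ≤ z.re) {y : ℝ} (hy : 0 < y) :
    ‖(1 - Complex.exp (-(z * y))) * (y : ℂ)‖ ≤ (2 + ‖z‖) * min y (y ^ 2) := by
  have hre : 0 ≤ (z * (y : ℂ)).re := by rw [stmt7_re_mul]; positivity
  have h1 : ‖1 - Complex.exp (-(z * y))‖ ≤ min 2 (‖z‖ * y) := by
    have := stmt7_norm_one_sub_exp hre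
    simpa [norm_mul, Complex.norm_real, Real.norm_eq_abs, abs_of_pos hy] using this
  calc ‖(1 - Complex.exp (-(z * y))) * (y : ℂ)‖
      = ‖1 - Complex.exp (-(z * y))‖ * y := by
        simp [norm_mul, Complex.norm_real, Real.norm_eq_abs, abs_of_pos hy]
    _ ≤ min 2 (‖z‖ * y) * y := by
        apply mul_le_mul_of_nonneg_right h1 hy.le
    _ = min (2 * y) (‖z‖ * y ^ 2) := by
        rw [min_mul_of_nonneg _ _ hy.le]; ring_nf
    _ ≤ (2 + ‖z‖) * min y (y ^ 2) :=
        stmt7_aux_min_le hy (by norm_num) (norm_nonneg _)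

/-- mean value bound on the half-plane intersected with a ball -/
lemma stmt7_segKey {R y : ℝ} (hy : 0 < y) (hR : 0 ≤ R) {z w : ℂ}
    (hz : 0 ≤ z.re) (hzR : ‖z‖ ≤ R) (hw : 0 ≤ w.re) (hwR : ‖w‖ ≤ R) :
    ‖(Complex.exp (-(z * y)) - 1 + z * y) - (Complex.exp (-(w * y)) - 1 + w * y)‖
      ≤ ((2 + R) * min y (y ^ 2)) * ‖z - w‖ := by
  set s : Set ℂ := {ζ : ℂ | 0 ≤ ζ.re} ∩ Metric.closedBall 0 R with hs
  have hconv : Convex ℝ s := (convex_halfSpace_re_ge 0).inter (convex_closedBall 0 R)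
  refine Convex.norm_image_sub_le_of_norm_hasDerivWithin_le
    (f := fun ζ : ℂ => Complex.exp (-(ζ * y)) - 1 + ζ * y)
    (f' := fun ζ : ℂ => (1 - Complex.exp (-(ζ * y))) * y)
    (C := (2 + R) * min y (y ^ 2))
    (fun ζ _ => (stmt7_hasDeriv_f y ζ).hasDerivWithinAt)
    (fun ζ hζ => ?_) hconv ⟨hw, by simpa using hwR⟩ ⟨hz, by simpa using hzR⟩
  have hζre : 0 ≤ ζ.re := hζ.1
  have hζR : ‖ζ‖ ≤ R := by simpa using hζ.2
  calc ‖(1 - Complex.exp (-(ζ * y))) * (y : ℂ)‖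
      ≤ (2 + ‖ζ‖) * min y (y ^ 2) := stmt7_bound_g hζre hy
    _ ≤ (2 + R) * min y (y ^ 2) := by
        have : 0 ≤ min y (y ^ 2) := le_min hy.le (by positivity)
        nlinarith

/-- norm bound for the `h` integrand -/
lemma stmt7_bound_f {z : ℂ} (hz : 0 ≤ z.re) {y : ℝ} (hy : 0 < y) :
    ‖Complex.exp (-(z * y)) - 1 + z * y‖ ≤ (2 + ‖z‖) * ‖z‖ * min y (y ^ 2) := by
  have key := stmt7_segKey hy (norm_nonneg z) hz le_rfl (w := 0) (by simp) (by simp)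
  calc ‖Complex.exp (-(z * y)) - 1 + z * y‖
      ≤ (2 + ‖z‖) * min y (y ^ 2) * ‖z‖ := by simpa [Complex.exp_zero] using key
    _ = (2 + ‖z‖) * ‖z‖ * min y (y ^ 2) := by ring


lemma stmt7_exp_sq_bound {d y : ℝ} (hd : 0 < d) (hy : 0 < y) :
    Real.exp (-(d * y)) * y ^ 2 ≤ (1 + 1 / d) * min y (y ^ 2) := by
  have hdy : 0 < d * y := by positivity
  rcases le_total y 1 with hy1 | hy1
  · have hmin : min y (y ^ 2) = y ^ 2 := min_eq_right (by nlinarith)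
    rw [hmin]
    have h1 : Real.exp (-(d * y)) ≤ 1 := Real.exp_le_one_iff.mpr (by nlinarith)
    have h2 : (0:ℝ) < 1 / d := by positivity
    nlinarith [sq_nonneg y]
  · have hmin : min y (y ^ 2) = y := min_eq_left (by nlinarith)
    rw [hmin]
    have h1 : d * y < Real.exp (d * y) := by
      have := Real.add_one_le_exp (d * y); linarith
    have h2 : (Real.exp (d * y))⁻¹ ≤ (d * y)⁻¹ := by
      apply inv_anti₀ hdy h1.le
    calc Real.exp (-(d * y)) * y ^ 2 ≤ (d * y)⁻¹ * y ^ 2 := by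
          rw [Real.exp_neg]
          exact mul_le_mul_of_nonneg_right h2 (by positivity)
      _ = (1 / d) * y := by field_simp
      _ ≤ (1 + 1 / d) * y := by nlinarith

lemma stmt7_slope_main (π : Measure ℝ)
    (hm_int : IntegrableOn (fun y : ℝ => min y (y ^ 2)) (Set.Ioi 0) π)
    (cont_fy : ∀ z : ℂ, Continuous (fun y : ℝ => Complex.exp (-(z * y)) - 1 + z * y))
    (z₀ : ℂ) (hz₀ : 0 ≤ z₀.re) :
    Filter.Tendsto (fun z : ℂ => ∫ y in Set.Ioi (0:ℝ),
      ((Complex.exp (-(z * y)) - 1 + z * y) - (Complex.exp (-(z₀ * y)) - 1 + z₀ * y)) / (z - z₀) ∂π)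
      (nhdsWithin z₀ ({z : ℂ | 0 ≤ z.re} \ {z₀}))
      (nhds (∫ y in Set.Ioi (0:ℝ), ((1 - Complex.exp (-(z₀ * y))) * y) ∂π)) := by
  have hnorm_event : ∀ᶠ z in nhdsWithin z₀ ({z : ℂ | 0 ≤ z.re} \ {z₀}), ‖z‖ ≤ ‖z₀‖ + 1 := by
    apply nhdsWithin_le_nhds
    exact ((continuous_norm.tendsto z₀).eventually_lt_const
      (by linarith : ‖z₀‖ < ‖z₀‖ + 1)).mono fun z hz => hz.le
  refine tendsto_integral_filter_of_dominated_convergence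
      (μ := π.restrict (Set.Ioi 0))
      (F := fun (z : ℂ) (y : ℝ) =>
        ((Complex.exp (-(z * y)) - 1 + z * y) - (Complex.exp (-(z₀ * y)) - 1 + z₀ * y)) / (z - z₀))
      (f := fun (y : ℝ) => (1 - Complex.exp (-(z₀ * y))) * (y : ℂ))
      (fun y => (2 + (‖z₀‖ + 1)) * min y (y ^ 2)) ?_ ?_ ?_ ?_
  · exact Filter.Eventually.of_forall fun z =>
      (((cont_fy z).sub (cont_fy z₀)).div_const (z - z₀)).aestronglyMeasurable
  · filter_upwards [hnorm_event, eventually_mem_nhdsWithin] with z hz1 hz2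
    rw [ae_restrict_iff' measurableSet_Ioi]
    refine ae_of_all _ fun y hy => ?_
    have hy' : (0:ℝ) < y := hy
    have hzS : 0 ≤ z.re := hz2.1
    have hzne : z ≠ z₀ := fun hc => hz2.2 (by simp [hc])
    have hkey := stmt7_segKey hy' (R := ‖z₀‖ + 1) (by positivity) hzS hz1 hz₀
      (by linarith [norm_nonneg z₀])
    have hpos : 0 < ‖z - z₀‖ := by
      rw [norm_pos_iff]; exact sub_ne_zero.mpr hzne
    rw [norm_div, div_le_iff₀ hpos]
    exact hkey
  · exact hm_int.const_mul _
  · refine ae_of_all _ fun y => ?_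
    have hle : nhdsWithin z₀ ({z : ℂ | 0 ≤ z.re} \ {z₀}) ≤ nhdsWithin z₀ {z₀}ᶜ :=
      nhdsWithin_mono _ (fun z hz => hz.2)
    have h2 := (hasDerivAt_iff_tendsto_slope.mp (stmt7_hasDeriv_f y z₀)).mono_left hle
    refine h2.congr fun z => ?_
    rw [slope_def_field]

set_option maxHeartbeats 1000000 in
/-- Let `π` be a Borel measure on `(0,∞)` with `∫ (y ∧ y²) π(dy) < ∞`.  Then
`h(z) = ∫ (e^{−zy} − 1 + zy) π(dy)` and `h'(z) = ∫ (1 − e^{−zy}) y π(dy)` are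
well defined on `ℂ₊` (the integrals converge absolutely), both are continuous on
`ℂ₊` and holomorphic on `ℂ₊⁰`, and the difference quotient of `h` converges to
`h'(z₀)` within `ℂ₊`. -/
theorem stmt7 (π : Measure ℝ)
    (hmom : ∫⁻ y in Set.Ioi (0 : ℝ), ENNReal.ofReal (min y (y ^ 2)) ∂π < ⊤)
    (h h' : ℂ → ℂ)
    (hh : ∀ z : ℂ, 0 ≤ z.re →
      h z = ∫ y in Set.Ioi (0 : ℝ), (Complex.exp (-(z * y)) - 1 + z * y) ∂π)
    (hh' : ∀ z : ℂ, 0 ≤ z.re →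
      h' z = ∫ y in Set.Ioi (0 : ℝ), ((1 - Complex.exp (-(z * y))) * y) ∂π) :
    (∀ z : ℂ, 0 ≤ z.re →
        IntegrableOn (fun y : ℝ => Complex.exp (-(z * y)) - 1 + z * y) (Set.Ioi 0) π
        ∧ IntegrableOn (fun y : ℝ => (1 - Complex.exp (-(z * y))) * y) (Set.Ioi 0) π)
    ∧ ContinuousOn h {z : ℂ | 0 ≤ z.re}
    ∧ ContinuousOn h' {z : ℂ | 0 ≤ z.re}
    ∧ DifferentiableOn ℂ h {z : ℂ | 0 < z.re}
    ∧ DifferentiableOn ℂ h' {z : ℂ | 0 < z.re}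
    ∧ ∀ z₀ : ℂ, 0 ≤ z₀.re →
        Filter.Tendsto (fun z : ℂ => (h z - h z₀) / (z - z₀))
          (nhdsWithin z₀ ({z : ℂ | 0 ≤ z.re} \ {z₀})) (nhds (h' z₀)) := by
  -- integrability of the dominating function
  have hm_int : IntegrableOn (fun y : ℝ => min y (y ^ 2)) (Set.Ioi 0) π := by
    constructor
    · exact (continuous_id.min (continuous_pow 2)).aestronglyMeasurable
    · rw [hasFiniteIntegral_iff_norm]
      calc ∫⁻ y in Set.Ioi (0:ℝ), ENNReal.ofReal ‖min y (y ^ 2)‖ ∂π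
          = ∫⁻ y in Set.Ioi (0:ℝ), ENNReal.ofReal (min y (y ^ 2)) ∂π := by
            apply lintegral_congr_ae
            filter_upwards [ae_restrict_mem measurableSet_Ioi] with y hy
            have hy' : (0:ℝ) < y := hy
            rw [Real.norm_eq_abs, _root_.abs_of_nonneg (le_min hy'.le (by positivity))]
        _ < ⊤ := hmom

  -- measurability in y
  have cont_fy : ∀ z : ℂ, Continuous (fun y : ℝ => Complex.exp (-(z * y)) - 1 + z * y) := by
    intro z
    exact ((Complex.continuous_exp.comp
      ((continuous_const.mul Complex.continuous_ofReal).neg)).sub continuous_const).add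
      (continuous_const.mul Complex.continuous_ofReal)
  have cont_gy : ∀ z : ℂ, Continuous (fun y : ℝ => (1 - Complex.exp (-(z * y))) * (y : ℂ)) := by
    intro z
    exact ((continuous_const.sub (Complex.continuous_exp.comp
      ((continuous_const.mul Complex.continuous_ofReal).neg))).mul Complex.continuous_ofReal)
  have cont_Fy : ∀ z : ℂ, Continuous (fun y : ℝ => Complex.exp (-(z * y)) * (y : ℂ) ^ 2) := by
    intro z
    exact (Complex.continuous_exp.comp
      ((continuous_const.mul Complex.continuous_ofReal).neg)).mul
      (Complex.continuous_ofReal.pow 2)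
  have hmeas_f : ∀ z : ℂ, AEStronglyMeasurable (fun y : ℝ => Complex.exp (-(z * y)) - 1 + z * y)
      (π.restrict (Set.Ioi 0)) := fun z => (cont_fy z).aestronglyMeasurable
  have hmeas_g : ∀ z : ℂ, AEStronglyMeasurable (fun y : ℝ => (1 - Complex.exp (-(z * y))) * (y : ℂ))
      (π.restrict (Set.Ioi 0)) := fun z => (cont_gy z).aestronglyMeasurable
  -- integrability
  have int_f : ∀ z : ℂ, 0 ≤ z.re →
      IntegrableOn (fun y : ℝ => Complex.exp (-(z * y)) - 1 + z * y) (Set.Ioi 0) π := by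
    intro z hz
    refine Integrable.mono' (hm_int.const_mul ((2 + ‖z‖) * ‖z‖)) (hmeas_f z) ?_
    rw [ae_restrict_iff' measurableSet_Ioi]
    exact ae_of_all _ fun y hy => stmt7_bound_f hz hy
  have int_g : ∀ z : ℂ, 0 ≤ z.re →
      IntegrableOn (fun y : ℝ => (1 - Complex.exp (-(z * y))) * (y : ℂ)) (Set.Ioi 0) π := by
    intro z hz
    refine Integrable.mono' (hm_int.const_mul (2 + ‖z‖)) (hmeas_g z) ?_
    rw [ae_restrict_iff' measurableSet_Ioi]
    exact ae_of_all _ fun y hy => stmt7_bound_g hz hy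
  have hnorm_event : ∀ z₀ : ℂ, ∀ s : Set ℂ,
      ∀ᶠ z in nhdsWithin z₀ s, ‖z‖ ≤ ‖z₀‖ + 1 := by
    intro z₀ s
    apply nhdsWithin_le_nhds
    exact ((continuous_norm.tendsto z₀).eventually_lt_const
      (by linarith : ‖z₀‖ < ‖z₀‖ + 1)).mono fun z hz => hz.le
  have hminnn : ∀ y : ℝ, 0 < y → 0 ≤ min y (y ^ 2) := fun y hy => le_min hy.le (by positivity)
  -- continuity of h
  have conth : ContinuousOn h {z : ℂ | 0 ≤ z.re} := by
    intro z₀ hz₀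
    have key : ContinuousWithinAt
        (fun z : ℂ => ∫ y in Set.Ioi (0:ℝ), (Complex.exp (-(z * y)) - 1 + z * y) ∂π)
        {z : ℂ | 0 ≤ z.re} z₀ := by
      apply continuousWithinAt_of_dominated
        (bound := fun y => (2 + (‖z₀‖ + 1)) * (‖z₀‖ + 1) * min y (y ^ 2))
      · exact Filter.Eventually.of_forall hmeas_f
      · filter_upwards [hnorm_event z₀ _, eventually_mem_nhdsWithin] with z hz1 hz2
        rw [ae_restrict_iff' measurableSet_Ioi]
        refine ae_of_all _ fun y hy => ?_
        have hy' : (0:ℝ) < y := hy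
        have h1 := stmt7_bound_f (z := z) hz2 hy'
        have h2 : (2 + ‖z‖) * ‖z‖ ≤ (2 + (‖z₀‖ + 1)) * (‖z₀‖ + 1) := by
          nlinarith [norm_nonneg z, norm_nonneg z₀]
        calc ‖Complex.exp (-(z * y)) - 1 + z * y‖ ≤ (2 + ‖z‖) * ‖z‖ * min y (y ^ 2) := h1
          _ ≤ (2 + (‖z₀‖ + 1)) * (‖z₀‖ + 1) * min y (y ^ 2) :=
              mul_le_mul_of_nonneg_right h2 (hminnn y hy')
      · exact hm_int.const_mul _
      · exact ae_of_all _ fun y =>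
          ((stmt7_hasDeriv_f y z₀).continuousAt.continuousWithinAt)
    exact key.congr (fun z hz => hh z hz) (hh z₀ hz₀)
  -- continuity of h'
  have conth' : ContinuousOn h' {z : ℂ | 0 ≤ z.re} := by
    intro z₀ hz₀
    have key : ContinuousWithinAt
        (fun z : ℂ => ∫ y in Set.Ioi (0:ℝ), ((1 - Complex.exp (-(z * y))) * y) ∂π)
        {z : ℂ | 0 ≤ z.re} z₀ := by
      apply continuousWithinAt_of_dominated
        (bound := fun y => (2 + (‖z₀‖ + 1)) * min y (y ^ 2))
      · exact Filter.Eventually.of_forall hmeas_g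
      · filter_upwards [hnorm_event z₀ _, eventually_mem_nhdsWithin] with z hz1 hz2
        rw [ae_restrict_iff' measurableSet_Ioi]
        refine ae_of_all _ fun y hy => ?_
        have hy' : (0:ℝ) < y := hy
        have h1 := stmt7_bound_g (z := z) hz2 hy'
        calc ‖(1 - Complex.exp (-(z * y))) * (y:ℂ)‖ ≤ (2 + ‖z‖) * min y (y ^ 2) := h1
          _ ≤ (2 + (‖z₀‖ + 1)) * min y (y ^ 2) :=
              mul_le_mul_of_nonneg_right (by linarith) (hminnn y hy')
      · exact hm_int.const_mul _
      · exact ae_of_all _ fun y =>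
          ((stmt7_hasDeriv_g y z₀).continuousAt.continuousWithinAt)
    exact key.congr (fun z hz => hh' z hz) (hh' z₀ hz₀)
  -- differentiability of h
  have diffh : DifferentiableOn ℂ h {z : ℂ | 0 < z.re} := by
    intro z₀ hz₀
    have hz₀' : 0 < z₀.re := hz₀
    have hεpos : 0 < z₀.re / 2 := by linarith
    have hball : ∀ z ∈ Metric.ball z₀ (z₀.re / 2), 0 ≤ z.re ∧ ‖z‖ ≤ ‖z₀‖ + z₀.re / 2 := by
      intro z hz
      have hd : ‖z - z₀‖ < z₀.re / 2 := by rwa [Metric.mem_ball, dist_eq_norm] at hz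
      have hre : |(z - z₀).re| ≤ ‖z - z₀‖ := Complex.abs_re_le_norm _
      have hre2 : (z - z₀).re = z.re - z₀.re := by simp
      constructor
      · have := (abs_lt.mp (lt_of_le_of_lt hre hd)).1
        rw [hre2] at this; linarith
      · calc ‖z‖ = ‖z₀ + (z - z₀)‖ := by ring_nf
          _ ≤ ‖z₀‖ + ‖z - z₀‖ := norm_add_le _ _
          _ ≤ ‖z₀‖ + z₀.re / 2 := by linarith
    have hbnd : ∀ᵐ (y : ℝ) ∂(π.restrict (Set.Ioi (0:ℝ))), ∀ z ∈ Metric.ball z₀ (z₀.re / 2),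
        ‖(1 - Complex.exp (-(z * y))) * (y : ℂ)‖
          ≤ (2 + (‖z₀‖ + z₀.re / 2)) * min y (y ^ 2) := by
      rw [ae_restrict_iff' measurableSet_Ioi]
      refine ae_of_all _ fun y hy z hzball => ?_
      obtain ⟨hre, hnorm⟩ := hball z hzball
      have hy' : (0:ℝ) < y := hy
      have h1 := stmt7_bound_g hre hy'
      calc ‖(1 - Complex.exp (-(z * y))) * (y:ℂ)‖ ≤ (2 + ‖z‖) * min y (y ^ 2) := h1
        _ ≤ (2 + (‖z₀‖ + z₀.re / 2)) * min y (y ^ 2) :=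
            mul_le_mul_of_nonneg_right (by linarith) (hminnn y hy')
    obtain ⟨-, hd⟩ := hasDerivAt_integral_of_dominated_loc_of_deriv_le
      (μ := π.restrict (Set.Ioi 0))
      (F := fun (z : ℂ) (y : ℝ) => Complex.exp (-(z * y)) - 1 + z * y)
      (F' := fun (z : ℂ) (y : ℝ) => (1 - Complex.exp (-(z * y))) * y)
      (bound := fun y => (2 + (‖z₀‖ + z₀.re / 2)) * min y (y ^ 2)) (Metric.ball_mem_nhds z₀ hεpos)
      (Filter.Eventually.of_forall hmeas_f) (int_f z₀ hz₀.le) (hmeas_g z₀)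
      hbnd (hm_int.const_mul _) (ae_of_all _ fun y z _ => stmt7_hasDeriv_f y z)
    have heq : h =ᶠ[nhds z₀]
        fun z => ∫ y in Set.Ioi (0:ℝ), (Complex.exp (-(z * y)) - 1 + z * y) ∂π := by
      filter_upwards [(isOpen_lt continuous_const Complex.continuous_re).mem_nhds hz₀']
        with z hz
      exact hh z (le_of_lt hz)
    exact ((hd.congr_of_eventuallyEq heq).differentiableAt).differentiableWithinAt
  -- differentiability of h'
  have diffh' : DifferentiableOn ℂ h' {z : ℂ | 0 < z.re} := by
    intro z₀ hz₀
    have hz₀' : 0 < z₀.re := hz₀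
    have hεpos : 0 < z₀.re / 2 := by linarith
    have hball : ∀ z ∈ Metric.ball z₀ (z₀.re / 2), z₀.re / 2 ≤ z.re := by
      intro z hz
      have hd : ‖z - z₀‖ < z₀.re / 2 := by rwa [Metric.mem_ball, dist_eq_norm] at hz
      have hre : |(z - z₀).re| ≤ ‖z - z₀‖ := Complex.abs_re_le_norm _
      have hre2 : (z - z₀).re = z.re - z₀.re := by simp
      have := (abs_lt.mp (lt_of_le_of_lt hre hd)).1
      rw [hre2] at this; linarith
    have hbnd : ∀ᵐ (y : ℝ) ∂(π.restrict (Set.Ioi (0:ℝ))), ∀ z ∈ Metric.ball z₀ (z₀.re / 2),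
        ‖Complex.exp (-(z * y)) * (y : ℂ) ^ 2‖ ≤ (1 + 1 / (z₀.re / 2)) * min y (y ^ 2) := by
      rw [ae_restrict_iff' measurableSet_Ioi]
      refine ae_of_all _ fun y hy z hzball => ?_
      have hre := hball z hzball
      have hy' : (0:ℝ) < y := hy
      have hnorm : ‖Complex.exp (-(z * y)) * (y : ℂ) ^ 2‖ = Real.exp (-(z.re * y)) * y ^ 2 := by
        rw [norm_mul, norm_pow]
        have e1 : ‖Complex.exp (-(z * y))‖ = Real.exp ((-(z * y)).re) := Complex.norm_exp _
        have e2 : ‖(y : ℂ)‖ = y := by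
          rw [Complex.norm_real, Real.norm_eq_abs, _root_.abs_of_pos hy']
        rw [e1, e2, Complex.neg_re, stmt7_re_mul]
      rw [hnorm]
      calc Real.exp (-(z.re * y)) * y ^ 2 ≤ Real.exp (-(z₀.re / 2 * y)) * y ^ 2 := by
            apply mul_le_mul_of_nonneg_right _ (by positivity)
            apply Real.exp_le_exp.mpr
            nlinarith
        _ ≤ (1 + 1 / (z₀.re / 2)) * min y (y ^ 2) := stmt7_exp_sq_bound hεpos hy'
    obtain ⟨-, hd⟩ := hasDerivAt_integral_of_dominated_loc_of_deriv_le
      (μ := π.restrict (Set.Ioi 0))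
      (F := fun (z : ℂ) (y : ℝ) => (1 - Complex.exp (-(z * y))) * y)
      (F' := fun (z : ℂ) (y : ℝ) => Complex.exp (-(z * y)) * (y : ℂ) ^ 2)
      (bound := fun y => (1 + 1 / (z₀.re / 2)) * min y (y ^ 2)) (Metric.ball_mem_nhds z₀ hεpos)
      (Filter.Eventually.of_forall hmeas_g) (int_g z₀ hz₀.le)
      ((cont_Fy z₀).aestronglyMeasurable)
      hbnd (hm_int.const_mul _) (ae_of_all _ fun y z _ => stmt7_hasDeriv_g y z)
    have heq : h' =ᶠ[nhds z₀]
        fun z => ∫ y in Set.Ioi (0:ℝ), ((1 - Complex.exp (-(z * y))) * y) ∂π := by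
      filter_upwards [(isOpen_lt continuous_const Complex.continuous_re).mem_nhds hz₀']
        with z hz
      exact hh' z (le_of_lt hz)
    exact ((hd.congr_of_eventuallyEq heq).differentiableAt).differentiableWithinAt
  refine ⟨fun z hz => ⟨int_f z hz, int_g z hz⟩, conth, conth', diffh, diffh', ?_⟩
  -- difference quotient
  intro z₀ hz₀
  have hmain := stmt7_slope_main π hm_int cont_fy z₀ hz₀
  rw [hh' z₀ hz₀]
  refine hmain.congr' ?_
  filter_upwards [eventually_mem_nhdsWithin (s := {z : ℂ | 0 ≤ z.re} \ {z₀}) (a := z₀)]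
    with z hz
  rw [hh z hz.1, hh z₀ hz₀, ← integral_sub (int_f z hz.1) (int_f z₀ hz₀), ← integral_div]
end

section
/- Let β ∈ (0,1). For every z ∈ ℂ with Re z ≥ 0, the integral ∫_0^∞ (e^{−zy} − 1) / (Γ(−β) y^{1+β}) dy converges absolutely and equals z^β, where Γ is the Gamma function extended to negative non-integer arguments (note Γ(−β) < 0) and z^β is the principal-branch power with 0^β = 0. -/
open MeasureTheory Complex Set Filter

lemma aux_norm_exp_sub_one_le {w : ℂ} (hw : w.re ≤ 0) : ‖Complex.exp w - 1‖ ≤ ‖w‖ := by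
  have key : Complex.exp w - 1 = ∫ t in (0:ℝ)..1, w * Complex.exp ((t : ℂ) * w) := by
    have hd : ∀ t ∈ Set.uIcc (0:ℝ) 1,
        HasDerivAt (fun t : ℝ => Complex.exp ((t : ℂ) * w)) (w * Complex.exp ((t : ℂ) * w)) t := by
      intro t _
      have h1 : HasDerivAt (fun u : ℂ => Complex.exp (u * w)) (w * Complex.exp ((t:ℂ) * w)) (t:ℂ) := by
        simpa [mul_comm] using ((hasDerivAt_id ((t:ℂ))).mul_const w).cexp
      exact h1.comp_ofReal
    have hi : IntervalIntegrable (fun t : ℝ => w * Complex.exp ((t : ℂ) * w)) volume 0 1 :=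
      (Continuous.intervalIntegrable (by continuity) 0 1)
    simpa using (intervalIntegral.integral_eq_sub_of_hasDerivAt hd hi).symm
  rw [key]
  have := intervalIntegral.norm_integral_le_of_norm_le_const
    (C := ‖w‖) (f := fun t : ℝ => w * Complex.exp ((t : ℂ) * w)) (a := 0) (b := 1) ?_
  · simpa using this
  · intro t ht
    rw [Set.uIoc_of_le zero_le_one] at ht
    rw [norm_mul, Complex.norm_exp]
    have : ((t:ℂ) * w).re = t * w.re := by simp
    rw [this]
    nlinarith [ht.1.le, ht.2, Real.exp_le_one_iff.mpr (mul_nonpos_of_nonneg_of_nonpos ht.1.le hw),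
      norm_nonneg w, Real.exp_pos (t * w.re)]

lemma aux_norm_exp_sub_one_le_two {w : ℂ} (hw : w.re ≤ 0) : ‖Complex.exp w - 1‖ ≤ 2 := by
  calc ‖Complex.exp w - 1‖ ≤ ‖Complex.exp w‖ + ‖(1:ℂ)‖ := norm_sub_le _ _
  _ ≤ 1 + 1 := by
      rw [Complex.norm_exp]
      simp [Real.exp_le_one_iff.mpr hw]
  _ = 2 := by norm_num


lemma aux_bound_integrable {β : ℝ} (hβ : β ∈ Set.Ioo (0:ℝ) 1) {M : ℝ} (hM : 0 ≤ M) :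
    IntegrableOn (fun y : ℝ => min (M * y) 2 * y ^ (-(1+β))) (Set.Ioi 0) := by
  obtain ⟨hβ0, hβ1⟩ := hβ
  have hmeas : ∀ s : Set ℝ, MeasurableSet s → s ⊆ Set.Ioi 0 →
      AEStronglyMeasurable (fun y : ℝ => min (M * y) 2 * y ^ (-(1+β))) (volume.restrict s) := by
    intro s hs hsub
    apply ContinuousOn.aestronglyMeasurable ?_ hs
    apply ContinuousOn.mono ?_ hsub
    apply ContinuousOn.mul
    · exact ((continuous_const.mul continuous_id).min continuous_const).continuousOn
    · intro y hy
      exact (Real.continuousAt_rpow_const y _ (Or.inl (ne_of_gt hy))).continuousWithinAt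
  rw [← Set.Ioc_union_Ioi_eq_Ioi (zero_le_one (α := ℝ))]
  apply IntegrableOn.union
  · apply Integrable.mono' (g := fun y : ℝ => M * y ^ (-β))
    · have h1 : IntervalIntegrable (fun y : ℝ => y ^ (-β)) volume 0 1 :=
        intervalIntegral.intervalIntegrable_rpow' (by linarith)
      rw [intervalIntegrable_iff_integrableOn_Ioc_of_le zero_le_one] at h1
      exact h1.const_mul M
    · exact hmeas _ measurableSet_Ioc (Set.Ioc_subset_Ioi_self)
    · filter_upwards [ae_restrict_mem measurableSet_Ioc] with y hy
      have hy0 : 0 < y := hy.1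
      have hnn : 0 ≤ min (M * y) 2 := le_min (by positivity) (by norm_num)
      rw [_root_.Real.norm_eq_abs, _root_.abs_of_nonneg (by positivity)]
      calc min (M * y) 2 * y ^ (-(1+β)) ≤ M * y * y ^ (-(1+β)) := by
            apply mul_le_mul_of_nonneg_right (min_le_left _ _) (by positivity)
      _ = M * y ^ (-β) := by
            rw [mul_assoc]
            congr 1
            rw [show (-β) = 1 + -(1+β) by ring, Real.rpow_add hy0, Real.rpow_one]
  · apply Integrable.mono' (g := fun y : ℝ => 2 * y ^ (-(1+β)))
    · exact (integrableOn_Ioi_rpow_of_lt (by linarith) one_pos).const_mul 2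
    · exact hmeas _ measurableSet_Ioi (Set.Ioi_subset_Ioi zero_le_one)
    · filter_upwards [ae_restrict_mem measurableSet_Ioi] with y hy
      have hy0 : (0:ℝ) < y := lt_trans one_pos hy
      have hnn : 0 ≤ min (M * y) 2 := le_min (by positivity) (by norm_num)
      rw [_root_.Real.norm_eq_abs, _root_.abs_of_nonneg (by positivity)]
      exact mul_le_mul_of_nonneg_right (min_le_right _ _) (by positivity)

lemma aux_norm_F_le {β : ℝ} (hβ : β ∈ Set.Ioo (0:ℝ) 1) {z : ℂ} (hz : 0 ≤ z.re) {y : ℝ} (hy : 0 < y) :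
    ‖(Complex.exp (-(z * y)) - 1) / ((Real.Gamma (-β) : ℂ) * ((y ^ (1 + β) : ℝ) : ℂ))‖
      ≤ |Real.Gamma (-β)|⁻¹ * (min (‖z‖ * y) 2 * y ^ (-(1+β))) := by
  obtain ⟨hβ0, hβ1⟩ := hβ
  have hc : Real.Gamma (-β) ≠ 0 := by
    apply Real.Gamma_ne_zero
    intro m hm
    rcases m with _ | m
    · simp at hm; linarith
    · push_cast at hm
      have h0 : (0:ℝ) ≤ (m:ℝ) := Nat.cast_nonneg m
      linarith
  have hp : (0:ℝ) < y ^ (1+β) := Real.rpow_pos_of_pos hy _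
  have hcabs : (0:ℝ) < |Real.Gamma (-β)| := abs_pos.mpr hc
  have hden : ‖(Real.Gamma (-β) : ℂ) * ((y ^ (1 + β) : ℝ) : ℂ)‖ = |Real.Gamma (-β)| * y ^ (1+β) := by
    rw [norm_mul, Complex.norm_real, Complex.norm_real, _root_.Real.norm_eq_abs,
      _root_.Real.norm_eq_abs, _root_.abs_of_nonneg hp.le]
  have hre : (-(z * (y:ℂ))).re ≤ 0 := by
    simp only [neg_re, Complex.mul_re, Complex.ofReal_re, Complex.ofReal_im]
    simp only [mul_zero, sub_zero, neg_nonpos]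
    positivity
  have hnum : ‖Complex.exp (-(z * y)) - 1‖ ≤ min (‖z‖ * y) 2 := by
    apply le_min
    · have h := aux_norm_exp_sub_one_le hre
      calc ‖Complex.exp (-(z * y)) - 1‖ ≤ ‖-(z * (y:ℂ))‖ := h
      _ = ‖z‖ * y := by
          rw [norm_neg, norm_mul, Complex.norm_real, _root_.Real.norm_eq_abs,
            _root_.abs_of_nonneg hy.le]
    · exact aux_norm_exp_sub_one_le_two hre
  rw [norm_div, hden, Real.rpow_neg hy.le, div_le_iff₀ (by positivity)]
  have heq : |Real.Gamma (-β)|⁻¹ * (min (‖z‖ * y) 2 * (y ^ (1+β))⁻¹) * (|Real.Gamma (-β)| * y ^ (1+β))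
      = min (‖z‖ * y) 2 := by
    field_simp
  rw [heq]
  exact hnum


lemma aux_Gamma_ne_zero {β : ℝ} (hβ : β ∈ Set.Ioo (0:ℝ) 1) : Real.Gamma (-β) ≠ 0 := by
  obtain ⟨hβ0, hβ1⟩ := hβ
  apply Real.Gamma_ne_zero
  intro m hm
  rcases m with _ | m
  · simp at hm; linarith
  · push_cast at hm
    have h0 : (0:ℝ) ≤ (m:ℝ) := Nat.cast_nonneg m
    linarith

lemma aux_contOn {β : ℝ} (hβ : β ∈ Set.Ioo (0:ℝ) 1) (z : ℂ) :
    ContinuousOn (fun y : ℝ => (Complex.exp (-(z * y)) - 1) /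
      ((Real.Gamma (-β) : ℂ) * ((y ^ (1 + β) : ℝ) : ℂ))) (Set.Ioi 0) := by
  apply ContinuousOn.div
  · exact (Continuous.comp Complex.continuous_exp
      ((continuous_const.mul Complex.continuous_ofReal).neg)).sub continuous_const |>.continuousOn
  · apply ContinuousOn.mul continuousOn_const
    apply Complex.continuous_ofReal.comp_continuousOn
    intro y hy
    exact (Real.continuousAt_rpow_const y _ (Or.inl (ne_of_gt hy))).continuousWithinAt
  · intro y hy
    apply mul_ne_zero
    · exact Complex.ofReal_ne_zero.mpr (aux_Gamma_ne_zero hβ)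
    · exact Complex.ofReal_ne_zero.mpr (Real.rpow_pos_of_pos hy _).ne'

lemma aux_integrableF {β : ℝ} (hβ : β ∈ Set.Ioo (0:ℝ) 1) {z : ℂ} (hz : 0 ≤ z.re) :
    IntegrableOn (fun y : ℝ => (Complex.exp (-(z * y)) - 1) /
      ((Real.Gamma (-β) : ℂ) * ((y ^ (1 + β) : ℝ) : ℂ))) (Set.Ioi 0) := by
  apply Integrable.mono' ((aux_bound_integrable hβ (norm_nonneg z)).const_mul |Real.Gamma (-β)|⁻¹)
  · exact (aux_contOn hβ z).aestronglyMeasurable measurableSet_Ioi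
  · filter_upwards [ae_restrict_mem measurableSet_Ioi] with y hy
    exact aux_norm_F_le hβ hz hy

section
variable {β : ℝ} (hβ : β ∈ Set.Ioo (0:ℝ) 1)

-- derivative of y ↦ exp(-(z y)) - 1
lemma aux_hd1 (z : ℂ) (y : ℝ) :
    HasDerivAt (fun y : ℝ => Complex.exp (-(z * y)) - 1)
      (Complex.exp (-(z * y)) * -z) y := by
  have h : HasDerivAt (fun u : ℂ => Complex.exp (-(z * u)) - 1)
      (Complex.exp (-(z * y)) * -z) (y : ℂ) := by
    have := (((hasDerivAt_id ((y:ℝ) : ℂ)).const_mul z).neg).cexp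
    simpa using this.sub_const 1
  exact h.comp_ofReal

-- derivative of y ↦ (y:ℂ)^(-β)
lemma aux_hd2 (hβ : β ∈ Set.Ioo (0:ℝ) 1) {y : ℝ} (hy : 0 < y) :
    HasDerivAt (fun y : ℝ => ((y:ℂ) ^ (-(β:ℂ))))
      (-(β:ℂ) * (y:ℂ) ^ (-(β:ℂ) - 1)) y := by
  have hβ0 := hβ.1
  have hβc : -(β:ℂ) ≠ 0 := by
    simpa using Complex.ofReal_ne_zero.mpr hβ0.ne'
  have hne : -(β:ℂ) - 1 ≠ -1 := by
    intro h
    apply hβc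
    linear_combination h
  have h := hasDerivAt_ofReal_cpow_const' hy.ne' hne
  rw [sub_add_cancel] at h
  have h3 := h.const_mul (-(β:ℂ))
  have heq : (fun y : ℝ => -(β:ℂ) * ((y:ℂ) ^ (-(β:ℂ)) / (-(β:ℂ))))
      = fun y : ℝ => (y:ℂ) ^ (-(β:ℂ)) := by
    funext t
    rw [mul_div_assoc']
    exact mul_div_cancel_left₀ _ hβc
  rw [heq] at h3
  exact h3

end

lemma aux_norm_cpow {y : ℝ} (hy : 0 < y) (w : ℂ) : ‖(y:ℂ) ^ w‖ = y ^ w.re := by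
  exact Complex.norm_cpow_eq_rpow_re_of_pos hy w

lemma aux_real_case {β : ℝ} (hβ : β ∈ Set.Ioo (0:ℝ) 1) {r : ℝ} (hr : 0 < r) :
    ∫ y in Set.Ioi (0:ℝ), (Complex.exp (-((r:ℂ) * y)) - 1) /
      ((Real.Gamma (-β) : ℂ) * ((y ^ (1 + β) : ℝ) : ℂ)) = (r:ℂ) ^ (β:ℂ) := by
  obtain ⟨hβ0, hβ1⟩ := hβ
  have hβ' : β ∈ Set.Ioo (0:ℝ) 1 := ⟨hβ0, hβ1⟩
  have hc : Real.Gamma (-β) ≠ 0 := by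
    apply Real.Gamma_ne_zero; intro m hm
    rcases m with _ | m
    · simp at hm; linarith
    · push_cast at hm
      have h0 : (0:ℝ) ≤ (m:ℝ) := Nat.cast_nonneg m
      linarith
  have hβc : (β:ℂ) ≠ 0 := Complex.ofReal_ne_zero.mpr hβ0.ne'
  have hrc : (r:ℂ) ≠ 0 := Complex.ofReal_ne_zero.mpr hr.ne'
  set f : ℝ → ℂ := fun y => (Complex.exp (-((r:ℂ) * y)) - 1) * (y:ℂ) ^ (-(β:ℂ)) with hf
  set A : ℝ → ℂ := fun y => Complex.exp (-((r:ℂ) * y)) * -(r:ℂ) * (y:ℂ) ^ (-(β:ℂ)) with hA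
  set B : ℝ → ℂ := fun y =>
    (Complex.exp (-((r:ℂ) * y)) - 1) * (-(β:ℂ) * (y:ℂ) ^ (-(β:ℂ) - 1)) with hB
  -- derivative
  have hderiv : ∀ y ∈ Set.Ioi (0:ℝ), HasDerivAt f (A y + B y) y := by
    intro y hy
    exact (aux_hd1 (r:ℂ) y).mul (aux_hd2 hβ' hy)
  -- f 0 = 0
  have hf0 : f 0 = 0 := by simp [hf]
  -- continuity at 0 within Ici 0
  have hcont : ContinuousWithinAt f (Set.Ici (0:ℝ)) 0 := by
    rw [ContinuousWithinAt, hf0]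
    have hg : Tendsto (fun y : ℝ => r * y ^ (1 - β)) (nhdsWithin 0 (Set.Ici 0)) (nhds 0) := by
      have h1 : Tendsto (fun y : ℝ => y ^ (1 - β)) (nhdsWithin 0 (Set.Ici 0)) (nhds ((0:ℝ) ^ (1-β))) :=
        ((Real.continuousAt_rpow_const 0 (1-β) (Or.inr (by linarith))).continuousWithinAt)
      rw [Real.zero_rpow (by linarith : (1:ℝ) - β ≠ 0)] at h1
      simpa using h1.const_mul r
    apply squeeze_zero_norm' _ hg
    filter_upwards [self_mem_nhdsWithin] with y (hy : (0:ℝ) ≤ y)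
    rcases eq_or_lt_of_le hy with h | h
    · simp [hf, ← h, Real.zero_rpow (by linarith : (1:ℝ) - β ≠ 0)]
    · have hre : (-((r:ℂ) * (y:ℝ))).re ≤ 0 := by
        simp only [neg_re, Complex.mul_re, Complex.ofReal_re, Complex.ofReal_im]
        simp only [mul_zero, sub_zero, neg_nonpos]
        positivity
      have h1 := aux_norm_exp_sub_one_le hre
      have h2 : ‖-((r:ℂ) * (y:ℝ))‖ = r * y := by
        rw [norm_neg, norm_mul, Complex.norm_real, Complex.norm_real,
          _root_.Real.norm_eq_abs, _root_.Real.norm_eq_abs,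
          _root_.abs_of_nonneg hr.le, _root_.abs_of_nonneg hy]
      rw [hf, norm_mul, aux_norm_cpow h]
      calc ‖Complex.exp (-((r:ℂ) * y)) - 1‖ * y ^ (-(β:ℂ)).re
          ≤ (r * y) * y ^ (-(β:ℂ)).re := by
            apply mul_le_mul_of_nonneg_right (h1.trans h2.le) (Real.rpow_nonneg hy _)
      _ = r * y ^ (1 - β) := by
            simp only [Complex.neg_re, Complex.ofReal_re]
            rw [mul_assoc]
            congr 1
            rw [show (1 - β) = 1 + -β by ring, Real.rpow_add h, Real.rpow_one]
  -- tendsto 0 at top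
  have htop : Tendsto f atTop (nhds (0:ℂ)) := by
    have hg : Tendsto (fun y : ℝ => 2 * y ^ (-β)) atTop (nhds 0) := by
      simpa using (tendsto_rpow_neg_atTop hβ0).const_mul 2
    apply squeeze_zero_norm' _ hg
    filter_upwards [Ioi_mem_atTop (0:ℝ)] with y (hy : 0 < y)
    have hre : (-((r:ℂ) * (y:ℝ))).re ≤ 0 := by
      simp only [neg_re, Complex.mul_re, Complex.ofReal_re, Complex.ofReal_im]
      simp only [mul_zero, sub_zero, neg_nonpos]
      positivity
    rw [hf, norm_mul, aux_norm_cpow hy]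
    simp only [Complex.neg_re, Complex.ofReal_re]
    exact mul_le_mul_of_nonneg_right (aux_norm_exp_sub_one_le_two hre) (Real.rpow_nonneg hy.le _)
  -- integrability of A
  have hA_int : IntegrableOn A (Set.Ioi (0:ℝ)) := by
    apply Integrable.mono' (g := fun y : ℝ => r * (y ^ (-β) * Real.exp (-r * y)))
    · have := (integrableOn_rpow_mul_exp_neg_mul_rpow
        (show (-1:ℝ) < -β by linarith) one_pos hr)
      simpa [Real.rpow_one] using this.const_mul r
    · apply ContinuousOn.aestronglyMeasurable ?_ measurableSet_Ioi
      apply ContinuousOn.mul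
      · exact ((Complex.continuous_exp.comp
          ((continuous_const.mul Complex.continuous_ofReal).neg)).mul continuous_const).continuousOn
      · intro y hy
        exact (aux_hd2 hβ' hy).continuousAt.continuousWithinAt
    · filter_upwards [ae_restrict_mem measurableSet_Ioi] with y (hy : 0 < y)
      rw [hA]
      rw [norm_mul, norm_mul, aux_norm_cpow hy, Complex.norm_exp]
      have h1 : (-((r:ℂ) * (y:ℝ))).re = -r * y := by
        simp [Complex.mul_re]
      have h2 : ‖-(r:ℂ)‖ = r := by
        rw [norm_neg, Complex.norm_real, _root_.Real.norm_eq_abs, _root_.abs_of_nonneg hr.le]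
      rw [h1, h2]
      simp only [Complex.neg_re, Complex.ofReal_re]
      apply le_of_eq
      ring
  -- integrability of B
  have hB_int : IntegrableOn B (Set.Ioi (0:ℝ)) := by
    apply Integrable.mono'
      (g := fun y : ℝ => β * (min (r * y) 2 * y ^ (-(1+β))))
      (((aux_bound_integrable hβ' hr.le)).const_mul β)
    · apply ContinuousOn.aestronglyMeasurable ?_ measurableSet_Ioi
      apply ContinuousOn.mul
      · exact ((Complex.continuous_exp.comp
          ((continuous_const.mul Complex.continuous_ofReal).neg)).sub continuous_const).continuousOn
      · apply ContinuousOn.mul continuousOn_const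
        intro y hy
        exact (continuousAt_ofReal_cpow_const _ _ (Or.inr (ne_of_gt hy))).continuousWithinAt
    · filter_upwards [ae_restrict_mem measurableSet_Ioi] with y (hy : 0 < y)
      rw [hB, norm_mul, norm_mul, aux_norm_cpow hy]
      have hre : (-((r:ℂ) * (y:ℝ))).re ≤ 0 := by
        simp only [neg_re, Complex.mul_re, Complex.ofReal_re, Complex.ofReal_im]
        simp only [mul_zero, sub_zero, neg_nonpos]
        positivity
      have hnum : ‖Complex.exp (-((r:ℂ) * y)) - 1‖ ≤ min (r * y) 2 := by
        apply le_min
        · have h1 := aux_norm_exp_sub_one_le hre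
          have h2 : ‖-((r:ℂ) * (y:ℝ))‖ = r * y := by
            rw [norm_neg, norm_mul, Complex.norm_real, Complex.norm_real,
              _root_.Real.norm_eq_abs, _root_.Real.norm_eq_abs,
              _root_.abs_of_nonneg hr.le, _root_.abs_of_nonneg hy.le]
          exact h1.trans h2.le
        · exact aux_norm_exp_sub_one_le_two hre
      have hβnorm : ‖-(β:ℂ)‖ = β := by
        rw [norm_neg, Complex.norm_real, _root_.Real.norm_eq_abs, _root_.abs_of_nonneg hβ0.le]
      have hexp : (-(β:ℂ) - 1).re = -(1+β) := by
        simp; ring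
      rw [hβnorm, hexp]
      have hb : (0:ℝ) ≤ β * y ^ (-(1+β)) := by positivity
      calc ‖Complex.exp (-((r:ℂ) * y)) - 1‖ * (β * y ^ (-(1+β)))
          ≤ min (r * y) 2 * (β * y ^ (-(1+β))) := mul_le_mul_of_nonneg_right hnum hb
      _ = β * (min (r * y) 2 * y ^ (-(1+β))) := by ring
  -- FTC
  have key : ∫ y in Set.Ioi (0:ℝ), (A y + B y) = 0 - f 0 :=
    integral_Ioi_of_hasDerivAt_of_tendsto hcont hderiv (hA_int.add hB_int) htop
  rw [hf0, sub_zero] at key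
  rw [integral_add hA_int hB_int] at key
  -- compute ∫ A via the Gamma integral
  have hGamma := integral_cpow_mul_exp_neg_mul_Ioi
    (a := 1 - (β:ℂ)) (r := r) (by simp; linarith) hr
  have hexp2 : (1 : ℂ) - (β:ℂ) - 1 = -(β:ℂ) := by ring
  rw [hexp2] at hGamma
  have hIA : ∫ y in Set.Ioi (0:ℝ), A y
      = -(r:ℂ) * ((1/(r:ℂ)) ^ (1 - (β:ℂ)) * Complex.Gamma (1 - (β:ℂ))) := by
    rw [← hGamma, ← integral_const_mul]
    apply setIntegral_congr_fun measurableSet_Ioi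
    intro y hy
    rw [hA]
    ring
  have hIB : ∫ y in Set.Ioi (0:ℝ), B y
      = -(β:ℂ) * ∫ y in Set.Ioi (0:ℝ),
          (Complex.exp (-((r:ℂ) * y)) - 1) * (y:ℂ) ^ (-(β:ℂ) - 1) := by
    rw [← integral_const_mul]
    apply setIntegral_congr_fun measurableSet_Ioi
    intro y hy
    rw [hB]
    ring
  -- rewrite target integral
  have hT : ∫ y in Set.Ioi (0:ℝ), (Complex.exp (-((r:ℂ) * y)) - 1) /
        ((Real.Gamma (-β) : ℂ) * ((y ^ (1 + β) : ℝ) : ℂ))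
      = ((Real.Gamma (-β) : ℂ))⁻¹ * ∫ y in Set.Ioi (0:ℝ),
          (Complex.exp (-((r:ℂ) * y)) - 1) * (y:ℂ) ^ (-(β:ℂ) - 1) := by
    rw [← integral_const_mul]
    apply setIntegral_congr_fun measurableSet_Ioi
    intro y hy
    dsimp only
    have h1 : ((y ^ (1 + β) : ℝ) : ℂ) = (y:ℂ) ^ ((1:ℂ) + (β:ℂ)) := by
      rw [Complex.ofReal_cpow (le_of_lt hy)]
      push_cast
      ring_nf
    have h2 : (y:ℂ) ^ (-(β:ℂ) - 1) = ((y:ℂ) ^ ((1:ℂ) + (β:ℂ)))⁻¹ := by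
      rw [← Complex.cpow_neg]
      congr 1
      ring
    rw [h1, h2, div_eq_mul_inv, mul_inv]
    ring
  -- Gamma relation
  have hGam : Complex.Gamma (1 - (β:ℂ)) = ((-β * Real.Gamma (-β) : ℝ) : ℂ) := by
    have h1 : (1 : ℂ) - (β:ℂ) = (((1 - β : ℝ)) : ℂ) := by push_cast; ring
    rw [h1, Complex.Gamma_ofReal]
    congr 1
    rw [show (1 : ℝ) - β = -β + 1 by ring, Real.Gamma_add_one (by simpa using hβ0.ne')]
  -- power computation
  have hpow : -(r:ℂ) * ((1/(r:ℂ)) ^ (1 - (β:ℂ))) = -((r:ℂ) ^ (β:ℂ)) := by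
    rw [one_div, Complex.inv_cpow _ _ (by
      rw [Complex.arg_ofReal_of_nonneg hr.le]
      exact Real.pi_ne_zero.symm)]
    rw [show (β:ℂ) = 1 - (1 - (β:ℂ)) by ring, Complex.cpow_sub _ _ hrc, Complex.cpow_one]
    field_simp
  -- final algebra
  rw [hT]
  have hIB' : ∫ y in Set.Ioi (0:ℝ),
      (Complex.exp (-((r:ℂ) * y)) - 1) * (y:ℂ) ^ (-(β:ℂ) - 1)
      = (Real.Gamma (-β) : ℂ) * (r:ℂ) ^ (β:ℂ) := by
    have h := key
    rw [hIA, hIB, hGam] at h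
    push_cast at h
    set IB := ∫ y in Set.Ioi (0:ℝ),
      (Complex.exp (-((r:ℂ) * y)) - 1) * (y:ℂ) ^ (-(β:ℂ) - 1) with hIBdef
    have h3 : -((r:ℂ) ^ (β:ℂ)) * (-(β:ℂ) * (Real.Gamma (-β):ℂ)) + -(β:ℂ) * IB = 0 := by
      rw [← hpow] at *
      linear_combination h
    have h4 : -(β:ℂ) * ((Real.Gamma (-β):ℂ) * (r:ℂ) ^ (β:ℂ)) = -(β:ℂ) * IB := by
      linear_combination -h3
    exact (mul_left_cancel₀ (neg_ne_zero.mpr hβc) h4).symm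
  rw [hIB']
  rw [← mul_assoc, inv_mul_cancel₀ (Complex.ofReal_ne_zero.mpr hc), one_mul]

lemma aux_differentiable {β : ℝ} (hβ : β ∈ Set.Ioo (0:ℝ) 1) {z₀ : ℂ} (hz : 0 < z₀.re) :
    DifferentiableAt ℂ (fun z : ℂ => ∫ y in Set.Ioi (0:ℝ),
      (Complex.exp (-(z * y)) - 1) / ((Real.Gamma (-β) : ℂ) * ((y ^ (1 + β) : ℝ) : ℂ))) z₀ := by
  have hc : Real.Gamma (-β) ≠ 0 := aux_Gamma_ne_zero hβ
  set ε : ℝ := z₀.re / 2 with hεdef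
  have hε0 : 0 < ε := half_pos hz
  have key := hasDerivAt_integral_of_dominated_loc_of_deriv_le
    (μ := volume.restrict (Set.Ioi (0:ℝ))) (x₀ := z₀) (s := Metric.ball z₀ ε)
    (F := fun (z : ℂ) (y : ℝ) => (Complex.exp (-(z * y)) - 1) /
      ((Real.Gamma (-β) : ℂ) * ((y ^ (1 + β) : ℝ) : ℂ)))
    (F' := fun (z : ℂ) (y : ℝ) => Complex.exp (-(z * y)) * -(y:ℂ) /
      ((Real.Gamma (-β) : ℂ) * ((y ^ (1 + β) : ℝ) : ℂ)))
    (bound := fun y : ℝ => |Real.Gamma (-β)|⁻¹ * (y ^ (-β) * Real.exp (-ε * y)))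
    (Metric.ball_mem_nhds z₀ hε0) ?_ ?_ ?_ ?_ ?_ ?_
  · exact key.2.differentiableAt
  · exact Eventually.of_forall fun z =>
      (aux_contOn hβ z).aestronglyMeasurable measurableSet_Ioi
  · exact aux_integrableF hβ hz.le
  · apply ContinuousOn.aestronglyMeasurable ?_ measurableSet_Ioi
    apply ContinuousOn.div
    · exact ((Complex.continuous_exp.comp
        ((continuous_const.mul Complex.continuous_ofReal).neg)).mul
        (Complex.continuous_ofReal.neg)).continuousOn
    · apply ContinuousOn.mul continuousOn_const
      apply Complex.continuous_ofReal.comp_continuousOn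
      intro y hy
      exact (Real.continuousAt_rpow_const y _ (Or.inl (ne_of_gt hy))).continuousWithinAt
    · intro y hy
      exact mul_ne_zero (Complex.ofReal_ne_zero.mpr hc)
        (Complex.ofReal_ne_zero.mpr (Real.rpow_pos_of_pos hy _).ne')
  · filter_upwards [ae_restrict_mem measurableSet_Ioi] with y (hy : 0 < y)
    intro z hzball
    have hzre : ε ≤ z.re := by
      rw [Metric.mem_ball] at hzball
      have h1 : |(z - z₀).re| ≤ dist z z₀ := by
        rw [Complex.dist_eq]
        exact Complex.abs_re_le_norm _
      have h2 := (abs_le.mp h1).1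
      simp only [Complex.sub_re] at h2
      rw [hεdef] at *
      linarith
    have hp : (0:ℝ) < y ^ (1+β) := Real.rpow_pos_of_pos hy _
    have hden : ‖(Real.Gamma (-β) : ℂ) * ((y ^ (1 + β) : ℝ) : ℂ)‖ = |Real.Gamma (-β)| * y ^ (1+β) := by
      rw [norm_mul, Complex.norm_real, Complex.norm_real, _root_.Real.norm_eq_abs,
        _root_.Real.norm_eq_abs, _root_.abs_of_nonneg hp.le]
    rw [norm_div, hden, norm_mul, norm_neg, Complex.norm_real, _root_.Real.norm_eq_abs,
      _root_.abs_of_nonneg hy.le, Complex.norm_exp]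
    have hre : (-(z * (y:ℝ))).re = -(z.re * y) := by simp [Complex.mul_re]
    rw [hre]
    have hyy : y * (y ^ (1+β))⁻¹ = y ^ (-β) := by
      rw [← Real.rpow_neg hy.le, show (-β) = 1 + -(1+β) by ring, Real.rpow_add hy,
        Real.rpow_one]
    calc Real.exp (-(z.re * y)) * y / (|Real.Gamma (-β)| * y ^ (1+β))
        ≤ Real.exp (-ε * y) * y / (|Real.Gamma (-β)| * y ^ (1+β)) := by
          have hdenpos : 0 < |Real.Gamma (-β)| * y ^ (1+β) := mul_pos (abs_pos.mpr hc) hp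
          gcongr
          nlinarith
    _ = |Real.Gamma (-β)|⁻¹ * (y ^ (-β) * Real.exp (-ε * y)) := by
          rw [← hyy, div_eq_mul_inv, mul_inv]
          ring
  · have := (integrableOn_rpow_mul_exp_neg_mul_rpow
      (show (-1:ℝ) < -β by have h := hβ.2; linarith) one_pos hε0)
    simp only [Real.rpow_one] at this
    exact this.const_mul _
  · filter_upwards [ae_restrict_mem measurableSet_Ioi] with y (hy : 0 < y)
    intro z hzball
    have hd : HasDerivAt (fun z : ℂ => Complex.exp (-(z * y)) - 1)
        (Complex.exp (-(z * y)) * -(y:ℂ)) z := by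
      have h1 := hasDerivAt_mul_const (x := z) (-(y:ℂ))
      simpa [mul_neg] using h1.cexp.sub_const 1
    exact hd.div_const _

lemma aux_eqOn {β : ℝ} (hβ : β ∈ Set.Ioo (0:ℝ) 1) :
    Set.EqOn (fun z : ℂ => ∫ y in Set.Ioi (0:ℝ),
        (Complex.exp (-(z * y)) - 1) / ((Real.Gamma (-β) : ℂ) * ((y ^ (1 + β) : ℝ) : ℂ)))
      (fun z : ℂ => z ^ ((β:ℝ) : ℂ)) {z : ℂ | 0 < z.re} := by
  have hopen : IsOpen {z : ℂ | 0 < z.re} := isOpen_lt continuous_const Complex.continuous_re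
  apply AnalyticOnNhd.eqOn_of_preconnected_of_frequently_eq
    (f := fun z : ℂ => ∫ y in Set.Ioi (0:ℝ),
        (Complex.exp (-(z * y)) - 1) / ((Real.Gamma (-β) : ℂ) * ((y ^ (1 + β) : ℝ) : ℂ)))
    (g := fun z : ℂ => z ^ ((β:ℝ) : ℂ)) (z₀ := (1:ℂ))
  · apply DifferentiableOn.analyticOnNhd ?_ hopen
    intro z hz
    exact (aux_differentiable hβ hz).differentiableWithinAt
  · apply DifferentiableOn.analyticOnNhd ?_ hopen
    intro z hz
    apply DifferentiableAt.differentiableWithinAt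
    exact differentiableAt_id.cpow (differentiableAt_const _) (Or.inl hz)
  · exact (convex_halfSpace_re_gt 0).isPreconnected
  · simp
  · have hseq : Tendsto (fun n : ℕ => ((1 + 1/((n:ℝ)+1) : ℝ) : ℂ)) atTop
        (nhdsWithin (1:ℂ) {x | x ≠ 1}) := by
      apply tendsto_nhdsWithin_of_tendsto_nhds_of_eventually_within
      · have h1 : Tendsto (fun n : ℕ => (1 + 1/((n:ℝ)+1) : ℝ)) atTop (nhds 1) := by
          have := tendsto_one_div_add_atTop_nhds_zero_nat (𝕜 := ℝ)
          simpa using (tendsto_const_nhds (x := (1:ℝ))).add this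
        have := (Complex.continuous_ofReal.tendsto 1).comp h1
        simpa [Function.comp_def] using this
      · apply Eventually.of_forall
        intro n
        simp only [Set.mem_setOf_eq, ne_eq]
        intro h
        have h2 : (1 + 1/((n:ℝ)+1) : ℝ) = 1 := by exact_mod_cast h
        have : (0:ℝ) < 1/((n:ℝ)+1) := by positivity
        linarith
    apply hseq.frequently
    apply Frequently.of_forall
    intro n
    exact aux_real_case hβ (by positivity : (0:ℝ) < 1 + 1/((n:ℝ)+1))

/-- For `β ∈ (0,1)` and `z ∈ ℂ₊`, the integral
`∫_0^∞ (e^{−zy} − 1)/(Γ(−β) y^{1+β}) dy` converges absolutely and equals `z^β`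
(principal branch, `0^β = 0`). -/
theorem stmt8 (β : ℝ) (hβ : β ∈ Set.Ioo (0 : ℝ) 1) (z : ℂ) (hz : 0 ≤ z.re) :
    IntegrableOn
      (fun y : ℝ => (Complex.exp (-(z * y)) - 1) /
        ((Real.Gamma (-β) : ℂ) * ((y ^ (1 + β) : ℝ) : ℂ)))
      (Set.Ioi 0) volume
    ∧ ∫ y in Set.Ioi (0 : ℝ),
        (Complex.exp (-(z * y)) - 1) /
          ((Real.Gamma (-β) : ℂ) * ((y ^ (1 + β) : ℝ) : ℂ))
      = z ^ ((β : ℝ) : ℂ) := by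
  refine ⟨aux_integrableF hβ hz, ?_⟩
  rcases hz.lt_or_eq with h | h
  · exact aux_eqOn hβ h
  · by_cases hz0 : z = 0
    · subst hz0
      simp only [zero_mul, neg_zero, Complex.exp_zero, sub_self, zero_div]
      rw [integral_zero, Complex.zero_cpow (Complex.ofReal_ne_zero.mpr hβ.1.ne')]
    · have him : z.im ≠ 0 := by
        intro h2
        exact hz0 (Complex.ext (by simp [← h]) (by simp [h2]))
      set zn : ℕ → ℂ := fun n => z + ((1/((n:ℝ)+1) : ℝ) : ℂ) with hzn
      have hznre : ∀ n, 0 < (zn n).re := by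
        intro n
        simp only [hzn, Complex.add_re, Complex.ofReal_re, ← h, zero_add]
        positivity
      have htz : Tendsto zn atTop (nhds z) := by
        rw [hzn]
        have h1 : Tendsto (fun n : ℕ => ((1/((n:ℝ)+1):ℝ):ℂ)) atTop (nhds ((0:ℝ):ℂ)) :=
          (Complex.continuous_ofReal.tendsto 0).comp
            (by simpa using tendsto_one_div_add_atTop_nhds_zero_nat (𝕜 := ℝ))
        have h2 := (tendsto_const_nhds (x := z) (f := (atTop : Filter ℕ))).add h1
        simpa only [Complex.ofReal_zero, add_zero] using h2
      have hRHS : Tendsto (fun n => (zn n) ^ ((β:ℝ):ℂ)) atTop (nhds (z ^ ((β:ℝ):ℂ))) :=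
        (continuousAt_cpow_const (Or.inr him)).tendsto.comp htz
      have hLHS : Tendsto (fun n => ∫ y in Set.Ioi (0:ℝ),
          (Complex.exp (-(zn n * y)) - 1) /
            ((Real.Gamma (-β) : ℂ) * ((y ^ (1 + β) : ℝ) : ℂ))) atTop
          (nhds (∫ y in Set.Ioi (0:ℝ), (Complex.exp (-(z * y)) - 1) /
            ((Real.Gamma (-β) : ℂ) * ((y ^ (1 + β) : ℝ) : ℂ)))) := by
        apply tendsto_integral_of_dominated_convergence
          (bound := fun y : ℝ => |Real.Gamma (-β)|⁻¹ * (min ((‖z‖+1) * y) 2 * y ^ (-(1+β))))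
        · exact fun n => (aux_contOn hβ (zn n)).aestronglyMeasurable measurableSet_Ioi
        · exact (aux_bound_integrable hβ (by positivity : (0:ℝ) ≤ ‖z‖ + 1)).const_mul _
        · intro n
          filter_upwards [ae_restrict_mem measurableSet_Ioi] with y (hy : 0 < y)
          have hn : ‖zn n‖ ≤ ‖z‖ + 1 := by
            apply (norm_add_le _ _).trans
            have : ‖((1/((n:ℝ)+1):ℝ):ℂ)‖ ≤ 1 := by
              rw [Complex.norm_real, _root_.Real.norm_eq_abs,
                _root_.abs_of_nonneg (by positivity)]
              rw [div_le_one (by positivity)]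
              linarith [Nat.cast_nonneg (α := ℝ) n]
            linarith
          calc ‖(Complex.exp (-(zn n * y)) - 1) /
              ((Real.Gamma (-β) : ℂ) * ((y ^ (1 + β) : ℝ) : ℂ))‖
              ≤ |Real.Gamma (-β)|⁻¹ * (min (‖zn n‖ * y) 2 * y ^ (-(1+β))) :=
                aux_norm_F_le hβ (hznre n).le hy
          _ ≤ |Real.Gamma (-β)|⁻¹ * (min ((‖z‖+1) * y) 2 * y ^ (-(1+β))) := by
                gcongr
        · filter_upwards [ae_restrict_mem measurableSet_Ioi] with y (hy : 0 < y)
          have hcont : Continuous (fun w : ℂ => (Complex.exp (-(w * y)) - 1) /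
              ((Real.Gamma (-β):ℂ) * ((y^(1+β):ℝ):ℂ))) :=
            ((Complex.continuous_exp.comp
              ((continuous_id.mul continuous_const).neg)).sub continuous_const).div_const _
          exact (hcont.tendsto z).comp htz
      have heq : ∀ n, (∫ y in Set.Ioi (0:ℝ),
          (Complex.exp (-(zn n * y)) - 1) /
            ((Real.Gamma (-β) : ℂ) * ((y ^ (1 + β) : ℝ) : ℂ))) = (zn n) ^ ((β:ℝ):ℂ) :=
        fun n => aux_eqOn hβ (hznre n)
      rw [tendsto_congr heq] at hLHS
      exact tendsto_nhds_unique hLHS hRHS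
end

section
/- Let β ∈ (0,1). For every z ∈ ℂ with Re z ≥ 0, the integral ∫_0^∞ (e^{−zy} − 1 + zy) / (Γ(−1−β) y^{2+β}) dy converges absolutely and equals z^{1+β}, where Γ is the Gamma function extended to negative non-integer arguments (note Γ(−1−β) > 0) and z^{1+β} is the principal-branch power with 0^{1+β} = 0. -/
open MeasureTheory Complex Set Filter

namespace Stmt9Aux

noncomputable def Fi (β : ℝ) (z : ℂ) (y : ℝ) : ℂ :=
  (Complex.exp (-(z * y)) - 1 + z * y) / ((Real.Gamma (-1 - β) : ℂ) * ((y ^ (2 + β) : ℝ) : ℂ))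

variable {β : ℝ}

lemma gamma_rec (h0 : 0 < β) (h1 : β < 1) :
    Real.Gamma (1 - β) = β * (1 + β) * Real.Gamma (-1 - β) := by
  have e1 : Real.Gamma (-β + 1) = -β * Real.Gamma (-β) := Real.Gamma_add_one (by linarith)
  have e2 : Real.Gamma (-1 - β + 1) = (-1 - β) * Real.Gamma (-1 - β) :=
    Real.Gamma_add_one (by intro h; nlinarith)
  rw [show (1 : ℝ) - β = -β + 1 by ring, e1, show -β = -1 - β + 1 by ring, e2]; ring

lemma gamma_pos (h0 : 0 < β) (h1 : β < 1) : 0 < Real.Gamma (-1 - β) := by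
  have hg : 0 < Real.Gamma (1 - β) := Real.Gamma_pos_of_pos (by linarith)
  have hrec := gamma_rec h0 h1
  rw [hrec] at hg
  by_contra hle
  push_neg at hle
  have hb : 0 < β * (1 + β) := by nlinarith
  nlinarith [mul_nonpos_of_nonneg_of_nonpos hb.le hle]

lemma aux_int {a A B D p q r : ℝ} (ha : 0 < a) (hp : -1 < p) (hq : q < -1) (hr : r < -1) :
    IntegrableOn (fun y : ℝ => if y ≤ a then A * y ^ p else B * y ^ q + D * y ^ r)
      (Ioi (0:ℝ)) := by
  have h1 : IntegrableOn (fun y : ℝ => A * y ^ p) (Ioc (0:ℝ) a) :=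
    ((intervalIntegral.intervalIntegrable_rpow' hp (a := 0) (b := a)).1).const_mul A
  have h2 : IntegrableOn (fun y : ℝ => B * y ^ q + D * y ^ r) (Ioi a) :=
    (((integrableOn_Ioi_rpow_iff ha).2 hq).const_mul B).add
      (((integrableOn_Ioi_rpow_iff ha).2 hr).const_mul D)
  have h3 := (h1.congr_fun (fun y hy => (if_pos hy.2).symm) measurableSet_Ioc).union
      (h2.congr_fun (fun y hy => (if_neg (not_le.2 hy)).symm) measurableSet_Ioi)
  rwa [Set.Ioc_union_Ioi_eq_Ioi ha.le] at h3

lemma num_le_sq {w : ℂ} (hw : ‖w‖ ≤ 1) : ‖Complex.exp (-w) - 1 + w‖ ≤ ‖w‖ ^ 2 := by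
  have h := Complex.norm_exp_sub_one_sub_id_le (x := -w)
    (by simpa using hw)
  simpa [sub_neg_eq_add] using h

lemma num_le_lin {w : ℂ} (hw : 0 ≤ w.re) : ‖Complex.exp (-w) - 1 + w‖ ≤ 2 + ‖w‖ := by
  have h1 : ‖Complex.exp (-w)‖ ≤ 1 := by
    rw [Complex.norm_exp]
    calc Real.exp ((-w).re) ≤ Real.exp 0 := Real.exp_le_exp.2 (by simpa using hw)
      _ = 1 := Real.exp_zero
  calc ‖Complex.exp (-w) - 1 + w‖ ≤ ‖Complex.exp (-w) - 1‖ + ‖w‖ := norm_add_le _ _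
    _ ≤ (‖Complex.exp (-w)‖ + ‖(1:ℂ)‖) + ‖w‖ := by gcongr; exact norm_sub_le _ _
    _ ≤ 2 + ‖w‖ := by simp only [norm_one]; linarith

lemma one_sub_exp_le_two {w : ℂ} (hw : 0 ≤ w.re) : ‖1 - Complex.exp (-w)‖ ≤ 2 := by
  have h1 : ‖Complex.exp (-w)‖ ≤ 1 := by
    rw [Complex.norm_exp]
    calc Real.exp ((-w).re) ≤ Real.exp 0 := Real.exp_le_exp.2 (by simpa using hw)
      _ = 1 := Real.exp_zero
  calc ‖1 - Complex.exp (-w)‖ ≤ ‖(1:ℂ)‖ + ‖Complex.exp (-w)‖ := norm_sub_le _ _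
    _ ≤ 2 := by simp only [norm_one]; linarith

lemma one_sub_exp_le_lin {w : ℂ} (hw : ‖w‖ ≤ 1) : ‖1 - Complex.exp (-w)‖ ≤ 2 * ‖w‖ := by
  rw [norm_sub_rev]
  have h := Complex.norm_exp_sub_one_le (x := -w) (by simpa using hw)
  simpa using h

lemma den_norm (h0 : 0 < β) (h1 : β < 1) {y : ℝ} (hy : 0 < y) :
    ‖((Real.Gamma (-1 - β) : ℂ) * ((y ^ (2 + β) : ℝ) : ℂ))‖
      = Real.Gamma (-1 - β) * y ^ (2 + β) := by
  rw [norm_mul, Complex.norm_real, Complex.norm_real, Real.norm_eq_abs, Real.norm_eq_abs,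
    abs_of_pos (gamma_pos h0 h1), abs_of_pos (Real.rpow_pos_of_pos hy _)]


lemma norm_Fi_le (h0 : 0 < β) (h1 : β < 1) {z : ℂ} (hz : 0 ≤ z.re) {R : ℝ} (hR : 0 < R)
    (hzR : ‖z‖ ≤ R) {y : ℝ} (hy : 0 < y) :
    ‖Fi β z y‖ ≤ if y ≤ R⁻¹ then ((Real.Gamma (-1 - β))⁻¹ * R ^ 2) * y ^ (-β)
      else ((Real.Gamma (-1 - β))⁻¹ * 2) * y ^ (-(2 + β))
        + ((Real.Gamma (-1 - β))⁻¹ * R) * y ^ (-(1 + β)) := by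
  set c := Real.Gamma (-1 - β) with hc
  have hcpos := gamma_pos h0 h1
  have hnorm : ‖Fi β z y‖ = ‖Complex.exp (-(z * y)) - 1 + z * y‖ / (c * y ^ (2 + β)) := by
    rw [Fi, norm_div, den_norm h0 h1 hy]
  have hzy : ‖z * (y:ℂ)‖ = ‖z‖ * y := by
    rw [norm_mul, Complex.norm_real, Real.norm_eq_abs, abs_of_pos hy]
  have hrezy : 0 ≤ (z * (y:ℂ)).re := by
    rw [Complex.mul_re]
    simp only [Complex.ofReal_re, Complex.ofReal_im, mul_zero, sub_zero]
    exact mul_nonneg hz hy.le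
  rw [hnorm]
  split_ifs with hcase
  · have hsm : ‖z * (y:ℂ)‖ ≤ 1 := by
      rw [hzy]
      calc ‖z‖ * y ≤ R * R⁻¹ := by
            apply mul_le_mul hzR hcase hy.le hR.le
        _ = 1 := mul_inv_cancel₀ hR.ne'
    have hb := num_le_sq hsm
    rw [div_le_iff₀ (by positivity)]
    have h2 : y ^ (-β) * y ^ (2 + β) = y ^ (2:ℕ) := by
      rw [← Real.rpow_natCast y 2, ← Real.rpow_add hy]
      norm_num
    calc ‖Complex.exp (-(z * y)) - 1 + z * y‖ ≤ ‖z * (y:ℂ)‖ ^ 2 := hb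
      _ ≤ (R * y) ^ 2 := by
          rw [hzy]
          have : ‖z‖ * y ≤ R * y := by gcongr
          exact pow_le_pow_left₀ (by positivity) this 2
      _ = (c⁻¹ * R ^ 2) * y ^ (-β) * (c * y ^ (2 + β)) := by
          have : (c⁻¹ * R ^ 2) * y ^ (-β) * (c * y ^ (2 + β))
              = (c⁻¹ * c) * R ^ 2 * (y ^ (-β) * y ^ (2 + β)) := by ring
          rw [this, inv_mul_cancel₀ hcpos.ne', h2, mul_pow]
          ring
  · have hb := num_le_lin (w := z * y) hrezy
    rw [div_le_iff₀ (by positivity)]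
    have h2 : y ^ (-(2 + β)) * y ^ (2 + β) = 1 := by
      rw [← Real.rpow_add hy, show -(2 + β) + (2 + β) = (0:ℝ) by ring, Real.rpow_zero]
    have h3 : y ^ (-(1 + β)) * y ^ (2 + β) = y := by
      rw [← Real.rpow_add hy, show -(1 + β) + (2 + β) = 1 by ring, Real.rpow_one]
    calc ‖Complex.exp (-(z * y)) - 1 + z * y‖ ≤ 2 + ‖z * (y:ℂ)‖ := hb
      _ ≤ 2 + R * y := by rw [hzy]; gcongr
      _ = ((c⁻¹ * 2) * y ^ (-(2 + β)) + (c⁻¹ * R) * y ^ (-(1 + β))) * (c * y ^ (2 + β)) := by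
          have : ((c⁻¹ * 2) * y ^ (-(2 + β)) + (c⁻¹ * R) * y ^ (-(1 + β))) * (c * y ^ (2 + β))
              = (c⁻¹ * c) * 2 * (y ^ (-(2 + β)) * y ^ (2 + β))
                + (c⁻¹ * c) * R * (y ^ (-(1 + β)) * y ^ (2 + β)) := by ring
          rw [this, inv_mul_cancel₀ hcpos.ne', h2, h3]
          ring

lemma norm_deriv_le (h0 : 0 < β) (h1 : β < 1) {z : ℂ} (hz : 0 ≤ z.re) {R : ℝ} (hR : 0 < R)
    (hzR : ‖z‖ ≤ R) {y : ℝ} (hy : 0 < y) :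
    ‖((y:ℂ) * (1 - Complex.exp (-(z * y)))) / ((Real.Gamma (-1 - β) : ℂ) * ((y ^ (2 + β) : ℝ) : ℂ))‖
      ≤ if y ≤ R⁻¹ then ((Real.Gamma (-1 - β))⁻¹ * (2 * R)) * y ^ (-β)
        else ((Real.Gamma (-1 - β))⁻¹ * 2) * y ^ (-(1 + β)) + 0 * y ^ (-(2 + β)) := by
  set c := Real.Gamma (-1 - β) with hc
  have hcpos := gamma_pos h0 h1
  have hnorm : ‖((y:ℂ) * (1 - Complex.exp (-(z * y)))) / ((c : ℂ) * ((y ^ (2 + β) : ℝ) : ℂ))‖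
      = y * ‖1 - Complex.exp (-(z * y))‖ / (c * y ^ (2 + β)) := by
    rw [norm_div, den_norm h0 h1 hy, norm_mul, Complex.norm_real, Real.norm_eq_abs,
      abs_of_pos hy]
  have hzy : ‖z * (y:ℂ)‖ = ‖z‖ * y := by
    rw [norm_mul, Complex.norm_real, Real.norm_eq_abs, abs_of_pos hy]
  have hrezy : 0 ≤ (z * (y:ℂ)).re := by
    rw [Complex.mul_re]
    simp only [Complex.ofReal_re, Complex.ofReal_im, mul_zero, sub_zero]
    exact mul_nonneg hz hy.le
  rw [hnorm]
  split_ifs with hcase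
  · have hsm : ‖z * (y:ℂ)‖ ≤ 1 := by
      rw [hzy]
      calc ‖z‖ * y ≤ R * R⁻¹ := by apply mul_le_mul hzR hcase hy.le hR.le
        _ = 1 := mul_inv_cancel₀ hR.ne'
    have hb := one_sub_exp_le_lin hsm
    rw [div_le_iff₀ (by positivity)]
    have h2 : y ^ (-β) * y ^ (2 + β) = y ^ (2:ℕ) := by
      rw [← Real.rpow_natCast y 2, ← Real.rpow_add hy]
      norm_num
    calc y * ‖1 - Complex.exp (-(z * y))‖ ≤ y * (2 * ‖z * (y:ℂ)‖) := by
          gcongr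
      _ ≤ y * (2 * (R * y)) := by rw [hzy]; gcongr
      _ = ((c⁻¹ * (2 * R)) * y ^ (-β)) * (c * y ^ (2 + β)) := by
          have : ((c⁻¹ * (2 * R)) * y ^ (-β)) * (c * y ^ (2 + β))
              = (c⁻¹ * c) * (2 * R) * (y ^ (-β) * y ^ (2 + β)) := by ring
          rw [this, inv_mul_cancel₀ hcpos.ne', h2]
          ring
  · have hb := one_sub_exp_le_two (w := z * y) hrezy
    rw [div_le_iff₀ (by positivity)]
    have h3 : y ^ (-(1 + β)) * y ^ (2 + β) = y := by
      rw [← Real.rpow_add hy, show -(1 + β) + (2 + β) = 1 by ring, Real.rpow_one]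
    calc y * ‖1 - Complex.exp (-(z * y))‖ ≤ y * 2 := by gcongr
      _ = ((c⁻¹ * 2) * y ^ (-(1 + β)) + 0 * y ^ (-(2 + β))) * (c * y ^ (2 + β)) := by
          have : ((c⁻¹ * 2) * y ^ (-(1 + β)) + 0 * y ^ (-(2 + β))) * (c * y ^ (2 + β))
              = (c⁻¹ * c) * 2 * (y ^ (-(1 + β)) * y ^ (2 + β)) := by ring
          rw [this, inv_mul_cancel₀ hcpos.ne', h3]
          ring

lemma meas_Fi (β : ℝ) (z : ℂ) :
    AEStronglyMeasurable (Fi β z) (volume.restrict (Ioi (0:ℝ))) := by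
  apply Measurable.aestronglyMeasurable
  unfold Fi
  fun_prop

lemma meas_deriv (β : ℝ) (z : ℂ) :
    AEStronglyMeasurable (fun y : ℝ => ((y:ℂ) * (1 - Complex.exp (-(z * y))))
      / ((Real.Gamma (-1 - β) : ℂ) * ((y ^ (2 + β) : ℝ) : ℂ))) (volume.restrict (Ioi (0:ℝ))) := by
  apply Measurable.aestronglyMeasurable
  fun_prop

lemma integrable_Fi (h0 : 0 < β) (h1 : β < 1) (z : ℂ) (hz : 0 ≤ z.re) :
    IntegrableOn (Fi β z) (Ioi (0:ℝ)) volume := by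
  have hR : (0:ℝ) < ‖z‖ + 1 := by positivity
  refine Integrable.mono' (aux_int (inv_pos.2 hR) (by linarith : (-1:ℝ) < -β)
    (by linarith : -(2 + β) < -1) (by linarith : -(1 + β) < -1)
    (A := (Real.Gamma (-1 - β))⁻¹ * (‖z‖ + 1) ^ 2) (B := (Real.Gamma (-1 - β))⁻¹ * 2)
    (D := (Real.Gamma (-1 - β))⁻¹ * (‖z‖ + 1))) (meas_Fi β z) ?_
  filter_upwards [ae_restrict_mem measurableSet_Ioi] with y hy
  exact norm_Fi_le h0 h1 hz hR (by linarith [norm_nonneg z]) hy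


lemma u_nonneg {y : ℝ} : 0 ≤ Real.exp (-y) - 1 + y := by
  have := Real.add_one_le_exp (-y); linarith

lemma exp_neg_le_one {y : ℝ} (hy : 0 ≤ y) : Real.exp (-y) ≤ 1 := by
  calc Real.exp (-y) ≤ Real.exp 0 := Real.exp_le_exp.2 (by linarith)
    _ = 1 := Real.exp_zero

lemma u_le {y : ℝ} (hy : 0 ≤ y) : Real.exp (-y) - 1 + y ≤ y := by
  have := exp_neg_le_one hy; linarith

lemma u_ofReal (y : ℝ) :
    Complex.exp (-((y:ℝ) : ℂ)) - 1 + (y : ℂ) = ((Real.exp (-y) - 1 + y : ℝ) : ℂ) := by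
  rw [Complex.ofReal_add, Complex.ofReal_sub, Complex.ofReal_exp, Complex.ofReal_neg,
    Complex.ofReal_one]

lemma u_le_sq {y : ℝ} (hy : 0 ≤ y) (hy1 : y ≤ 1) : Real.exp (-y) - 1 + y ≤ y ^ 2 := by
  have hn : ‖(y:ℂ)‖ ≤ 1 := by
    rw [Complex.norm_real, Real.norm_eq_abs, _root_.abs_of_nonneg hy]; exact hy1
  have h := num_le_sq hn
  rw [u_ofReal y, Complex.norm_real, Real.norm_eq_abs, _root_.abs_of_nonneg u_nonneg,
    Complex.norm_real, Real.norm_eq_abs, _root_.abs_of_nonneg hy] at h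
  exact h

lemma one_sub_exp_nonneg {y : ℝ} (hy : 0 ≤ y) : 0 ≤ 1 - Real.exp (-y) := by
  have := exp_neg_le_one hy; linarith

lemma one_sub_exp_le_y {y : ℝ} : 1 - Real.exp (-y) ≤ y := by
  have := Real.add_one_le_exp (-y); linarith

lemma one_sub_exp_le_one {y : ℝ} : 1 - Real.exp (-y) ≤ 1 := by
  have := Real.exp_pos (-y); linarith

lemma rpow_merge_two {y : ℝ} (hy : 0 < y) (h0 : 0 < β) :
    y ^ (2:ℕ) * y ^ (-(2 + β)) = y ^ (-β) := by
  rw [← Real.rpow_natCast y 2, ← Real.rpow_add hy]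
  congr 1
  push_cast; ring

lemma rpow_merge_one {y : ℝ} (hy : 0 < y) :
    y * y ^ (-(2 + β)) = y ^ (-(1 + β)) := by
  nth_rewrite 1 [← Real.rpow_one y]
  rw [← Real.rpow_add hy]
  congr 1; ring

lemma rpow_merge_one' {y : ℝ} (hy : 0 < y) :
    y * y ^ (-(1 + β)) = y ^ (-β) := by
  nth_rewrite 1 [← Real.rpow_one y]
  rw [← Real.rpow_add hy]
  congr 1; ring

lemma int_u (h0 : 0 < β) (h1 : β < 1) :
    IntegrableOn (fun y : ℝ => (Real.exp (-y) - 1 + y) * y ^ (-(2 + β))) (Ioi (0:ℝ)) := by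
  refine Integrable.mono' (aux_int (a := 1) one_pos (p := -β) (by linarith)
    (q := -(2 + β)) (by linarith) (r := -(1 + β)) (by linarith) (A := 1) (B := 0) (D := 1))
    ((by fun_prop : Measurable fun y : ℝ => (Real.exp (-y) - 1 + y) * y ^ (-(2 + β))).aestronglyMeasurable) ?_
  filter_upwards [ae_restrict_mem measurableSet_Ioi] with y hy
  have hy0 : (0:ℝ) < y := hy
  have hrp := Real.rpow_pos_of_pos hy0 (-(2 + β))
  rw [Real.norm_eq_abs, abs_mul, _root_.abs_of_nonneg u_nonneg, _root_.abs_of_pos hrp]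
  split_ifs with hcase
  · calc (Real.exp (-y) - 1 + y) * y ^ (-(2 + β)) ≤ y ^ (2:ℕ) * y ^ (-(2 + β)) := by
          gcongr; exact u_le_sq hy0.le hcase
      _ = 1 * y ^ (-β) := by rw [rpow_merge_two hy0 h0, one_mul]
  · calc (Real.exp (-y) - 1 + y) * y ^ (-(2 + β)) ≤ y * y ^ (-(2 + β)) := by
          gcongr; exact u_le hy0.le
      _ = 0 * y ^ (-(2 + β)) + 1 * y ^ (-(1 + β)) := by rw [rpow_merge_one hy0]; ring

lemma int_h (h0 : 0 < β) (h1 : β < 1) :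
    IntegrableOn (fun y : ℝ => (1 - Real.exp (-y)) * y ^ (-(1 + β))) (Ioi (0:ℝ)) := by
  refine Integrable.mono' (aux_int (a := 1) one_pos (p := -β) (by linarith)
    (q := -(2 + β)) (by linarith) (r := -(1 + β)) (by linarith) (A := 1) (B := 0) (D := 1))
    ((by fun_prop : Measurable fun y : ℝ => (1 - Real.exp (-y)) * y ^ (-(1 + β))).aestronglyMeasurable) ?_
  filter_upwards [ae_restrict_mem measurableSet_Ioi] with y hy
  have hy0 : (0:ℝ) < y := hy
  have hrp := Real.rpow_pos_of_pos hy0 (-(1 + β))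
  rw [Real.norm_eq_abs, abs_mul, _root_.abs_of_nonneg (one_sub_exp_nonneg hy0.le), _root_.abs_of_pos hrp]
  split_ifs with hcase
  · calc (1 - Real.exp (-y)) * y ^ (-(1 + β)) ≤ y * y ^ (-(1 + β)) := by
          gcongr; exact one_sub_exp_le_y
      _ = 1 * y ^ (-β) := by rw [rpow_merge_one' hy0, one_mul]
  · calc (1 - Real.exp (-y)) * y ^ (-(1 + β)) ≤ 1 * y ^ (-(1 + β)) := by
          gcongr; exact one_sub_exp_le_one
      _ = 0 * y ^ (-(2 + β)) + 1 * y ^ (-(1 + β)) := by ring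

lemma int_e (h0 : 0 < β) (h1 : β < 1) :
    IntegrableOn (fun y : ℝ => Real.exp (-y) * y ^ (-β)) (Ioi (0:ℝ)) := by
  have h := Real.GammaIntegral_convergent (s := 1 - β) (by linarith)
  simpa [show (1:ℝ) - β - 1 = -β by ring] using h


lemma tendsto_pow_pos_zero (h0 : 0 < β) (h1 : β < 1) {c : ℝ} :
    Tendsto (fun y : ℝ => y ^ (1 - β) / c) (nhdsWithin 0 (Ioi 0)) (nhds 0) := by
  have h := (Real.continuousAt_rpow_const 0 (1 - β) (Or.inr (by linarith))).tendsto
  rw [Real.zero_rpow (by intro hc; nlinarith : (1:ℝ) - β ≠ 0)] at h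
  simpa using (h.mono_left nhdsWithin_le_nhds).div_const c

lemma ibp_div_helper {q p w c : ℝ} (hc : c ≠ 0) : (q + p * (-c * w)) / -c = p * w - q / c := by
  have key : q / c * c = q := div_mul_cancel₀ _ hc
  rw [div_eq_iff (neg_ne_zero.mpr hc)]
  nlinarith [key]

lemma int_h_eq (h0 : 0 < β) (h1 : β < 1) :
    ∫ y in Ioi (0:ℝ), (1 - Real.exp (-y)) * y ^ (-(1 + β))
      = Real.Gamma (1 - β) / β := by
  set H : ℝ → ℝ := fun y => (1 - Real.exp (-y)) * y ^ (-β) / (-β) with hH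
  have hH0 : H 0 = 0 := by simp [hH]
  have hder : ∀ y ∈ Ioi (0:ℝ), HasDerivAt H
      ((1 - Real.exp (-y)) * y ^ (-(1 + β)) - Real.exp (-y) * y ^ (-β) / β) y := by
    intro y hy
    have hy0 : (0:ℝ) < y := hy
    have hu : HasDerivAt (fun y : ℝ => 1 - Real.exp (-y)) (Real.exp (-y)) y := by
      have h := ((hasDerivAt_id y).neg.exp).const_sub 1
      refine h.congr_deriv ?_
      simp [id_eq]
    have hv : HasDerivAt (fun y : ℝ => y ^ (-β)) (-β * y ^ (-β - 1)) y :=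
      Real.hasDerivAt_rpow_const (Or.inl hy0.ne')
    have h := (hu.mul hv).div_const (-β)
    refine h.congr_deriv ?_
    rw [show -β - 1 = -(1 + β) by ring, ibp_div_helper (ne_of_gt h0)]
  have hcont : ContinuousWithinAt H (Ici 0) 0 := by
    rw [← continuousWithinAt_Ioi_iff_Ici]
    have ht : Tendsto H (nhdsWithin 0 (Ioi 0)) (nhds 0) := by
      apply squeeze_zero_norm' ?_ (tendsto_pow_pos_zero h0 h1 (c := β))
      filter_upwards [self_mem_nhdsWithin] with y hy
      have hy0 : (0:ℝ) < y := hy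
      have hrp := Real.rpow_pos_of_pos hy0 (-β)
      have hb1 : (1 - Real.exp (-y)) * y ^ (-β) ≤ y ^ (1 - β) := by
        calc (1 - Real.exp (-y)) * y ^ (-β) ≤ y * y ^ (-β) := by
              gcongr
              exact one_sub_exp_le_y
          _ = y ^ (1 - β) := by
              nth_rewrite 1 [← Real.rpow_one y]
              rw [← Real.rpow_add hy0, show (1:ℝ) + -β = 1 - β by ring]
      have hn : ‖H y‖ = (1 - Real.exp (-y)) * y ^ (-β) / β := by
        simp only [hH]
        rw [Real.norm_eq_abs, abs_div, abs_neg, _root_.abs_of_pos h0,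
          _root_.abs_of_nonneg (mul_nonneg (one_sub_exp_nonneg hy0.le) hrp.le)]
      rw [hn]
      gcongr
    show Tendsto H (nhdsWithin 0 (Ioi 0)) (nhds (H 0))
    rw [hH0]
    exact ht
  have htop : Tendsto H atTop (nhds 0) := by
    have htt : Tendsto (fun y : ℝ => y ^ (-β) / β) atTop (nhds 0) := by
      simpa using (tendsto_rpow_neg_atTop h0).div_const β
    apply squeeze_zero_norm' ?_ htt
    filter_upwards [eventually_gt_atTop (0:ℝ)] with y hy0
    have hrp := Real.rpow_pos_of_pos hy0 (-β)
    have hn : ‖H y‖ = (1 - Real.exp (-y)) * y ^ (-β) / β := by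
      simp only [hH]
      rw [Real.norm_eq_abs, abs_div, abs_neg, _root_.abs_of_pos h0,
        _root_.abs_of_nonneg (mul_nonneg (one_sub_exp_nonneg hy0.le) hrp.le)]
    rw [hn]
    gcongr
    calc (1 - Real.exp (-y)) * y ^ (-β) ≤ 1 * y ^ (-β) := by
          gcongr
          exact one_sub_exp_le_one
      _ = y ^ (-β) := one_mul _
  have hint : IntegrableOn (fun y : ℝ =>
      (1 - Real.exp (-y)) * y ^ (-(1 + β)) - Real.exp (-y) * y ^ (-β) / β) (Ioi (0:ℝ)) :=
    (int_h h0 h1).sub ((int_e h0 h1).div_const β)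
  have key := integral_Ioi_of_hasDerivAt_of_tendsto hcont hder hint htop
  rw [integral_sub (int_h h0 h1) ((int_e h0 h1).div_const β), integral_div, hH0] at key
  have hGam : ∫ y in Ioi (0:ℝ), Real.exp (-y) * y ^ (-β) = Real.Gamma (1 - β) := by
    rw [Real.Gamma_eq_integral (by linarith : (0:ℝ) < 1 - β)]
    refine setIntegral_congr_fun measurableSet_Ioi (fun y hy => ?_)
    rw [show (1:ℝ) - β - 1 = -β by ring]
  rw [hGam] at key
  have : (0:ℝ) - 0 = 0 := by ring
  linarith [key]

lemma J_eq (h0 : 0 < β) (h1 : β < 1) :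
    ∫ y in Ioi (0:ℝ), (Real.exp (-y) - 1 + y) * y ^ (-(2 + β))
      = Real.Gamma (1 - β) / (β * (1 + β)) := by
  have hb1 : (0:ℝ) < 1 + β := by linarith
  set G : ℝ → ℝ := fun y => (Real.exp (-y) - 1 + y) * y ^ (-(1 + β)) / (-(1 + β)) with hG
  have hG0 : G 0 = 0 := by simp [hG]
  have hder : ∀ y ∈ Ioi (0:ℝ), HasDerivAt G
      ((Real.exp (-y) - 1 + y) * y ^ (-(2 + β))
        - (1 - Real.exp (-y)) * y ^ (-(1 + β)) / (1 + β)) y := by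
    intro y hy
    have hy0 : (0:ℝ) < y := hy
    have hu : HasDerivAt (fun y : ℝ => Real.exp (-y) - 1 + y) (1 - Real.exp (-y)) y := by
      have h := (((hasDerivAt_id y).neg.exp).sub_const 1).add (hasDerivAt_id y)
      refine h.congr_deriv ?_
      simp only [Pi.neg_apply, id_eq]
      ring
    have hv : HasDerivAt (fun y : ℝ => y ^ (-(1 + β))) (-(1 + β) * y ^ (-(1 + β) - 1)) y :=
      Real.hasDerivAt_rpow_const (Or.inl hy0.ne')
    have h := (hu.mul hv).div_const (-(1 + β))
    refine h.congr_deriv ?_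
    rw [show -(1 + β) - 1 = -(2 + β) by ring, ibp_div_helper (ne_of_gt hb1)]
  have hcont : ContinuousWithinAt G (Ici 0) 0 := by
    rw [← continuousWithinAt_Ioi_iff_Ici]
    have ht : Tendsto G (nhdsWithin 0 (Ioi 0)) (nhds 0) := by
      apply squeeze_zero_norm' ?_ (tendsto_pow_pos_zero h0 h1 (c := 1 + β))
      filter_upwards [self_mem_nhdsWithin,
        mem_nhdsWithin_of_mem_nhds (Iio_mem_nhds (by norm_num : (0:ℝ) < 1))] with y hy hy1
      have hy0 : (0:ℝ) < y := hy
      have hrp := Real.rpow_pos_of_pos hy0 (-(1 + β))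
      have hb : (Real.exp (-y) - 1 + y) * y ^ (-(1 + β)) ≤ y ^ (1 - β) := by
        calc (Real.exp (-y) - 1 + y) * y ^ (-(1 + β)) ≤ y ^ (2:ℕ) * y ^ (-(1 + β)) := by
              gcongr
              exact u_le_sq hy0.le hy1.le
          _ = y ^ (1 - β) := by
              rw [← Real.rpow_natCast y 2, ← Real.rpow_add hy0]
              congr 1; push_cast; ring
      have hn : ‖G y‖ = (Real.exp (-y) - 1 + y) * y ^ (-(1 + β)) / (1 + β) := by
        simp only [hG]
        rw [Real.norm_eq_abs, abs_div, abs_neg, _root_.abs_of_pos hb1,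
          _root_.abs_of_nonneg (mul_nonneg u_nonneg hrp.le)]
      rw [hn]
      gcongr
    show Tendsto G (nhdsWithin 0 (Ioi 0)) (nhds (G 0))
    rw [hG0]
    exact ht
  have htop : Tendsto G atTop (nhds 0) := by
    have htt : Tendsto (fun y : ℝ => y ^ (-β) / (1 + β)) atTop (nhds 0) := by
      simpa using (tendsto_rpow_neg_atTop h0).div_const (1 + β)
    apply squeeze_zero_norm' ?_ htt
    filter_upwards [eventually_gt_atTop (0:ℝ)] with y hy0
    have hrp := Real.rpow_pos_of_pos hy0 (-(1 + β))
    have hn : ‖G y‖ = (Real.exp (-y) - 1 + y) * y ^ (-(1 + β)) / (1 + β) := by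
      simp only [hG]
      rw [Real.norm_eq_abs, abs_div, abs_neg, _root_.abs_of_pos hb1,
        _root_.abs_of_nonneg (mul_nonneg u_nonneg hrp.le)]
    rw [hn]
    gcongr
    calc (Real.exp (-y) - 1 + y) * y ^ (-(1 + β)) ≤ y * y ^ (-(1 + β)) := by
          gcongr
          exact u_le hy0.le
      _ = y ^ (-β) := rpow_merge_one' hy0
  have hint : IntegrableOn (fun y : ℝ =>
      (Real.exp (-y) - 1 + y) * y ^ (-(2 + β))
        - (1 - Real.exp (-y)) * y ^ (-(1 + β)) / (1 + β)) (Ioi (0:ℝ)) :=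
    (int_u h0 h1).sub ((int_h h0 h1).div_const (1 + β))
  have key := integral_Ioi_of_hasDerivAt_of_tendsto hcont hder hint htop
  rw [integral_sub (int_u h0 h1) ((int_h h0 h1).div_const (1 + β)), integral_div, hG0,
    int_h_eq h0 h1] at key
  have hdd : Real.Gamma (1 - β) / β / (1 + β) = Real.Gamma (1 - β) / (β * (1 + β)) := div_div _ _ _
  linarith [key]


lemma Fi_real (h0 : 0 < β) (h1 : β < 1) {x : ℝ} (hx : 0 < x) :
    ∫ y in Ioi (0:ℝ), Fi β (x:ℂ) y = ((x:ℂ)) ^ ((1 + β : ℝ) : ℂ) := by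
  have hcpos := gamma_pos h0 h1
  have hstep : ∀ y ∈ Ioi (0:ℝ), Fi β (x:ℂ) y
      = ((((Real.Gamma (-1 - β))⁻¹ * x ^ (2 + β)) *
          ((Real.exp (-(x * y)) - 1 + x * y) * (x * y) ^ (-(2 + β))) : ℝ) : ℂ) := by
    intro y hy
    have hy0 : (0:ℝ) < y := hy
    have hxy : (0:ℝ) < x * y := mul_pos hx hy0
    unfold Fi
    rw [show (x:ℂ) * (y:ℂ) = ((x * y : ℝ) : ℂ) by push_cast; ring]
    rw [show Complex.exp (-((x * y : ℝ) : ℂ)) - 1 + ((x * y : ℝ) : ℂ)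
        = ((Real.exp (-(x * y)) - 1 + x * y : ℝ) : ℂ) from u_ofReal (x * y)]
    rw [show ((Real.Gamma (-1 - β) : ℂ) * ((y ^ (2 + β) : ℝ) : ℂ))
        = ((Real.Gamma (-1 - β) * y ^ (2 + β) : ℝ) : ℂ) by push_cast; ring]
    rw [← Complex.ofReal_div]
    congr 1
    have hrp : (x * y) ^ (-(2 + β)) = (x ^ (2 + β))⁻¹ * (y ^ (2 + β))⁻¹ := by
      rw [Real.rpow_neg hxy.le, Real.mul_rpow hx.le hy0.le, mul_inv]
    rw [hrp]
    have hx2 : x ^ (2 + β) ≠ 0 := ne_of_gt (Real.rpow_pos_of_pos hx _)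
    have hy2 : y ^ (2 + β) ≠ 0 := ne_of_gt (Real.rpow_pos_of_pos hy0 _)
    field_simp
  have hcast : (∫ y in Ioi (0:ℝ), ((((Real.Gamma (-1 - β))⁻¹ * x ^ (2 + β) *
        ((Real.exp (-(x * y)) - 1 + x * y) * (x * y) ^ (-(2 + β)))) : ℝ) : ℂ))
      = (((∫ y in Ioi (0:ℝ), (Real.Gamma (-1 - β))⁻¹ * x ^ (2 + β) *
        ((Real.exp (-(x * y)) - 1 + x * y) * (x * y) ^ (-(2 + β)))) : ℝ) : ℂ) :=
    integral_ofReal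
  rw [setIntegral_congr_fun measurableSet_Ioi hstep, hcast,
    MeasureTheory.integral_const_mul]
  have hsub := integral_comp_mul_left_Ioi
    (fun u : ℝ => (Real.exp (-u) - 1 + u) * u ^ (-(2 + β))) 0 hx
  rw [mul_zero] at hsub
  rw [hsub, smul_eq_mul, J_eq h0 h1, gamma_rec h0 h1]
  have hb : β * (1 + β) ≠ 0 := ne_of_gt (mul_pos h0 (by linarith))
  have hxinv : x ^ (2 + β) * x⁻¹ = x ^ (1 + β) := by
    rw [show x⁻¹ = x ^ (-1 : ℝ) by rw [Real.rpow_neg_one], ← Real.rpow_add hx,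
      show (2 + β) + (-1 : ℝ) = 1 + β by ring]
  have hcancel : β * (1 + β) * Real.Gamma (-1 - β) / (β * (1 + β)) = Real.Gamma (-1 - β) := by
    rw [mul_comm (β * (1 + β)) _, mul_div_assoc, div_self hb, mul_one]
  have hreal : (Real.Gamma (-1 - β))⁻¹ * x ^ (2 + β)
      * (x⁻¹ * (β * (1 + β) * Real.Gamma (-1 - β) / (β * (1 + β)))) = x ^ (1 + β) := by
    rw [hcancel]
    calc (Real.Gamma (-1 - β))⁻¹ * x ^ (2 + β) * (x⁻¹ * Real.Gamma (-1 - β))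
        = ((Real.Gamma (-1 - β))⁻¹ * Real.Gamma (-1 - β)) * (x ^ (2 + β) * x⁻¹) := by ring
      _ = x ^ (1 + β) := by rw [inv_mul_cancel₀ hcpos.ne', hxinv, one_mul]
  rw [hreal, Complex.ofReal_cpow hx.le]

lemma hasDeriv (h0 : 0 < β) (h1 : β < 1) {z₀ : ℂ} (hz : 0 < z₀.re) :
    HasDerivAt (fun z : ℂ => ∫ y in Ioi (0:ℝ), Fi β z y)
      (∫ y in Ioi (0:ℝ), ((y:ℂ) * (1 - Complex.exp (-(z₀ * y))))
        / ((Real.Gamma (-1 - β) : ℂ) * ((y ^ (2 + β) : ℝ) : ℂ))) z₀ := by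
  set ε := z₀.re / 2 with hε
  have hεpos : 0 < ε := half_pos hz
  set R := ‖z₀‖ + ε with hR
  have hRpos : 0 < R := by
    have := norm_nonneg z₀
    simp only [hR]
    linarith
  have key := hasDerivAt_integral_of_dominated_loc_of_deriv_le (μ := volume.restrict (Ioi 0))
    (F := fun z (y : ℝ) => Fi β z y)
    (F' := fun z (y : ℝ) => ((y:ℂ) * (1 - Complex.exp (-(z * y))))
      / ((Real.Gamma (-1 - β) : ℂ) * ((y ^ (2 + β) : ℝ) : ℂ)))
    (bound := fun y : ℝ => if y ≤ R⁻¹ then ((Real.Gamma (-1 - β))⁻¹ * (2 * R)) * y ^ (-β)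
      else ((Real.Gamma (-1 - β))⁻¹ * 2) * y ^ (-(1 + β)) + 0 * y ^ (-(2 + β)))
    (x₀ := z₀) (Metric.ball_mem_nhds z₀ hεpos)
    (Eventually.of_forall (fun z => meas_Fi β z))
    (integrable_Fi h0 h1 z₀ hz.le)
    (meas_deriv β z₀)
    ?_ ?_ ?_
  · exact key.2
  · -- bound
    filter_upwards [ae_restrict_mem measurableSet_Ioi] with y hy
    intro z hzb
    have hy0 : (0:ℝ) < y := hy
    rw [Metric.mem_ball] at hzb
    have hd : ‖z - z₀‖ < ε := by rwa [dist_eq_norm] at hzb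
    have hre : 0 ≤ z.re := by
      have h1' : |(z - z₀).re| ≤ ‖z - z₀‖ := Complex.abs_re_le_norm _
      have h2' : z.re = z₀.re + (z - z₀).re := by rw [Complex.sub_re]; ring
      have := abs_le.mp (le_of_lt (lt_of_le_of_lt h1' hd))
      rw [h2']
      simp only [hε] at this ⊢
      linarith [this.1]
    have hzR : ‖z‖ ≤ R := by
      calc ‖z‖ = ‖z₀ + (z - z₀)‖ := by congr 1; ring
        _ ≤ ‖z₀‖ + ‖z - z₀‖ := norm_add_le _ _
        _ ≤ R := by simp only [hR]; linarith
    exact norm_deriv_le h0 h1 hre hRpos hzR hy0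
  · exact aux_int (inv_pos.2 hRpos) (by linarith : (-1:ℝ) < -β)
      (by linarith : -(1 + β) < -1) (by linarith : -(2 + β) < -1)
  · -- differentiability
    filter_upwards [ae_restrict_mem measurableSet_Ioi] with y hy
    intro z hzb
    have hd1 : HasDerivAt (fun z : ℂ => -(z * (y:ℂ))) (-(y:ℂ)) z :=
      (hasDerivAt_mul_const ((y:ℝ) : ℂ)).neg
    have hd2 := hd1.cexp
    have hd3 := (hd2.sub_const 1).add (hasDerivAt_mul_const ((y:ℝ) : ℂ))
    have hd4 := hd3.div_const ((Real.Gamma (-1 - β) : ℂ) * ((y ^ (2 + β) : ℝ) : ℂ))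
    have heq : ((y:ℂ) * (1 - Complex.exp (-(z * y))))
        / ((Real.Gamma (-1 - β) : ℂ) * ((y ^ (2 + β) : ℝ) : ℂ))
        = (Complex.exp (-(z * (y:ℂ))) * -(y:ℂ) + (y:ℂ))
          / ((Real.Gamma (-1 - β) : ℂ) * ((y ^ (2 + β) : ℝ) : ℂ)) := by
      congr 1
      ring
    rw [heq]
    exact hd4

lemma value_pos (h0 : 0 < β) (h1 : β < 1) {z : ℂ} (hz : 0 < z.re) :
    ∫ y in Ioi (0:ℝ), Fi β z y = z ^ ((1 + β : ℝ) : ℂ) := by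
  have hU : IsOpen {w : ℂ | 0 < w.re} := isOpen_Ioi.preimage Complex.continuous_re
  have hdif : DifferentiableOn ℂ (fun z : ℂ => ∫ y in Ioi (0:ℝ), Fi β z y) {w : ℂ | 0 < w.re} :=
    fun w hw => ((hasDeriv h0 h1 hw).differentiableAt).differentiableWithinAt
  have hA1 := hdif.analyticOnNhd hU
  have hdif2 : DifferentiableOn ℂ (fun z : ℂ => z ^ ((1 + β : ℝ) : ℂ)) {w : ℂ | 0 < w.re} := by
    intro w hw
    exact ((differentiableAt_id.cpow (differentiableAt_const _)
      (Complex.mem_slitPlane_iff.mpr (Or.inl hw)))).differentiableWithinAt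
  have hA2 := hdif2.analyticOnNhd hU
  have hpre : IsPreconnected {w : ℂ | 0 < w.re} := (convex_halfSpace_re_gt 0).isPreconnected
  have h1mem : (1:ℂ) ∈ {w : ℂ | 0 < w.re} := by simp
  have hfreq : ∃ᶠ w in nhdsWithin (1:ℂ) {(1:ℂ)}ᶜ,
      (fun z : ℂ => ∫ y in Ioi (0:ℝ), Fi β z y) w = w ^ ((1 + β : ℝ) : ℂ) := by
    have hseq : Tendsto (fun n : ℕ => ((1 + 1 / (n + 1) : ℝ) : ℂ)) atTop
        (nhdsWithin (1:ℂ) {(1:ℂ)}ᶜ) := by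
      apply tendsto_nhdsWithin_of_tendsto_nhds_of_eventually_within
      · have hre : Tendsto (fun n : ℕ => (1 + 1 / (n + 1) : ℝ)) atTop (nhds 1) := by
          have := tendsto_one_div_add_atTop_nhds_zero_nat (𝕜 := ℝ)
          simpa using tendsto_const_nhds.add this
        have h3 := (Complex.continuous_ofReal.tendsto 1).comp hre
        rw [show ((1:ℝ):ℂ) = 1 from Complex.ofReal_one] at h3
        exact h3
      · apply Eventually.of_forall
        intro n
        simp only [Set.mem_compl_iff, Set.mem_singleton_iff]
        intro hcon
        have h1n : (1 + 1 / (n + 1) : ℝ) = 1 := by exact_mod_cast hcon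
        have : (0:ℝ) < 1 / (n + 1) := by positivity
        linarith
    apply hseq.frequently
    apply Frequently.of_forall
    intro n
    exact Fi_real h0 h1 (by positivity : (0:ℝ) < 1 + 1 / (n + 1))
  exact hA1.eqOn_of_preconnected_of_frequently_eq hA2 hpre h1mem hfreq hz

lemma value_boundary (h0 : 0 < β) (h1 : β < 1) {z : ℂ} (hz : z.re = 0) (hz0 : z ≠ 0) :
    ∫ y in Ioi (0:ℝ), Fi β z y = z ^ ((1 + β : ℝ) : ℂ) := by
  set w : ℕ → ℂ := fun n => z + ((1 / (n + 1) : ℝ) : ℂ) with hw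
  have hwre : ∀ n, 0 < (w n).re := by
    intro n
    simp only [hw, Complex.add_re, Complex.ofReal_re, hz]
    positivity
  have hwlim : Tendsto w atTop (nhds z) := by
    have h2 := (Complex.continuous_ofReal.tendsto 0).comp
      tendsto_one_div_add_atTop_nhds_zero_nat
    have h3 := (tendsto_const_nhds (x := z) (f := (atTop : Filter ℕ))).add h2
    rw [Complex.ofReal_zero, add_zero] at h3
    exact h3
  have hInt : Tendsto (fun n => ∫ y in Ioi (0:ℝ), Fi β (w n) y) atTop
      (nhds (∫ y in Ioi (0:ℝ), Fi β z y)) := by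
    apply tendsto_integral_of_dominated_convergence
      (fun y : ℝ => if y ≤ (‖z‖ + 1)⁻¹ then ((Real.Gamma (-1 - β))⁻¹ * (‖z‖ + 1) ^ 2) * y ^ (-β)
        else ((Real.Gamma (-1 - β))⁻¹ * 2) * y ^ (-(2 + β))
          + ((Real.Gamma (-1 - β))⁻¹ * (‖z‖ + 1)) * y ^ (-(1 + β)))
      (fun n => meas_Fi β (w n))
      (aux_int (inv_pos.2 (by positivity)) (by linarith : (-1:ℝ) < -β)
        (by linarith : -(2 + β) < -1) (by linarith : -(1 + β) < -1))
      ?_ ?_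
    · intro n
      filter_upwards [ae_restrict_mem measurableSet_Ioi] with y hy
      have hy0 : (0:ℝ) < y := hy
      have hb : ‖((1 / (n + 1) : ℝ) : ℂ)‖ ≤ 1 := by
        rw [Complex.norm_real, Real.norm_eq_abs,
          _root_.abs_of_pos (by positivity : (0:ℝ) < 1 / (n + 1)),
          div_le_one (by positivity : (0:ℝ) < (n:ℝ) + 1)]
        have : (0:ℝ) ≤ n := Nat.cast_nonneg n
        linarith
      have hnorm : ‖w n‖ ≤ ‖z‖ + 1 := by
        calc ‖w n‖ ≤ ‖z‖ + ‖((1 / (n + 1) : ℝ) : ℂ)‖ := norm_add_le _ _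
          _ ≤ ‖z‖ + 1 := by linarith [hb]
      exact norm_Fi_le h0 h1 (hwre n).le (by positivity) hnorm hy0
    · filter_upwards [ae_restrict_mem measurableSet_Ioi] with y hy
      have hc : Continuous (fun x : ℂ => Fi β x y) := by
        unfold Fi
        apply Continuous.div_const
        fun_prop
      exact ((hc.tendsto z).comp hwlim)
  have hRHS : Tendsto (fun n => (w n) ^ ((1 + β : ℝ) : ℂ)) atTop
      (nhds (z ^ ((1 + β : ℝ) : ℂ))) := by
    have hc : ContinuousAt (fun x : ℂ => x ^ ((1 + β : ℝ) : ℂ)) z :=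
      Complex.continuousAt_cpow_const_of_re_pos (Or.inl (le_of_eq hz.symm))
        (by simp only [Complex.ofReal_re]; linarith)
    exact (hc.tendsto).comp hwlim
  have heq : ∀ n, ∫ y in Ioi (0:ℝ), Fi β (w n) y = (w n) ^ ((1 + β : ℝ) : ℂ) :=
    fun n => value_pos h0 h1 (hwre n)
  exact tendsto_nhds_unique (hInt.congr heq) hRHS

end Stmt9Aux

open Stmt9Aux in
/-- For `β ∈ (0,1)` and `z ∈ ℂ₊`, the integral
`∫_0^∞ (e^{−zy} − 1 + zy)/(Γ(−1−β) y^{2+β}) dy` converges absolutely and equals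
`z^{1+β}` (principal branch, `0^{1+β} = 0`). -/
theorem stmt9 (β : ℝ) (hβ : β ∈ Set.Ioo (0 : ℝ) 1) (z : ℂ) (hz : 0 ≤ z.re) :
    IntegrableOn
      (fun y : ℝ => (Complex.exp (-(z * y)) - 1 + z * y) /
        ((Real.Gamma (-1 - β) : ℂ) * ((y ^ (2 + β) : ℝ) : ℂ)))
      (Set.Ioi 0) volume
    ∧ ∫ y in Set.Ioi (0 : ℝ),
        (Complex.exp (-(z * y)) - 1 + z * y) /
          ((Real.Gamma (-1 - β) : ℂ) * ((y ^ (2 + β) : ℝ) : ℂ))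
      = z ^ ((1 + β : ℝ) : ℂ) := by
  obtain ⟨h0, h1⟩ := hβ
  constructor
  · exact integrable_Fi h0 h1 z hz
  · rcases lt_or_eq_of_le hz with hz' | hz'
    · exact value_pos h0 h1 hz'
    · by_cases hz0 : z = 0
      · subst hz0
        have hzero : ∀ y ∈ Ioi (0:ℝ), Fi β 0 y = 0 := by
          intro y hy
          simp [Fi]
        rw [show (∫ y in Set.Ioi (0 : ℝ),
            (Complex.exp (-(0 * (y:ℂ))) - 1 + 0 * (y:ℂ)) /
              ((Real.Gamma (-1 - β) : ℂ) * ((y ^ (2 + β) : ℝ) : ℂ)))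
            = ∫ y in Ioi (0:ℝ), Fi β 0 y from rfl]
        rw [setIntegral_congr_fun measurableSet_Ioi hzero, integral_zero,
          Complex.zero_cpow (by
            simp only [ne_eq, Complex.ofReal_eq_zero]
            intro hcon
            linarith)]
      · exact value_boundary h0 h1 hz'.symm hz0
end

section
/- For every n ∈ ℕ (n ≥ 1) and every real x with −n < x < −n+1, the integral ∫_0^∞ t^{x−1} ( e^{−t} − ∑_{k=0}^{n−1} (−t)^k / k! ) dt converges absolutely and equals Γ(x), where Γ is the Gamma function analytically continued to negative non-integer arguments via the recursion Γ(x+1) = xΓ(x). -/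
open MeasureTheory Real

section Aux
open Set Filter Topology

noncomputable def Fn (n : ℕ) (t : ℝ) : ℝ :=
  Real.exp (-t) - ∑ k ∈ Finset.range n, (-t) ^ k / (Nat.factorial k)


lemma Fn_bound_top (m : ℕ) {t : ℝ} (h1 : 1 ≤ t) :
    |Fn (m + 1) t| ≤ (m + 2) * t ^ m := by
  have ht0 : 0 ≤ t := le_trans zero_le_one h1
  have htm : (1:ℝ) ≤ t ^ m := one_le_pow₀ h1
  have hS : |∑ k ∈ Finset.range (m+1), (-t) ^ k / (Nat.factorial k)| ≤ (m+1) * t ^ m := by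
    calc |∑ k ∈ Finset.range (m+1), (-t) ^ k / (Nat.factorial k)|
        ≤ ∑ k ∈ Finset.range (m+1), |(-t) ^ k / (Nat.factorial k)| :=
          Finset.abs_sum_le_sum_abs _ _
      _ ≤ ∑ _k ∈ Finset.range (m+1), t ^ m := by
          refine Finset.sum_le_sum fun k hk => ?_
          have hkm : k ≤ m := Nat.lt_succ_iff.mp (Finset.mem_range.mp hk)
          have h1k : (1:ℝ) ≤ (Nat.factorial k : ℝ) := by
            exact_mod_cast Nat.one_le_iff_ne_zero.mpr (Nat.factorial_ne_zero k)
          rw [abs_div, abs_pow, abs_neg, abs_of_nonneg ht0, Nat.abs_cast]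
          calc t ^ k / (Nat.factorial k : ℝ) ≤ t ^ k := div_le_self (pow_nonneg ht0 k) h1k
            _ ≤ t ^ m := pow_le_pow_right₀ h1 hkm
      _ = (m+1) * t ^ m := by rw [Finset.sum_const, Finset.card_range]; push_cast; ring
  have hexp : |Real.exp (-t)| ≤ 1 := by
    rw [abs_of_nonneg (Real.exp_nonneg _)]
    exact Real.exp_le_one_iff.mpr (neg_nonpos.mpr ht0)
  calc |Fn (m+1) t| ≤ |Real.exp (-t)| + |∑ k ∈ Finset.range (m+1), (-t) ^ k / (Nat.factorial k)| :=
        abs_sub _ _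
    _ ≤ 1 + (m+1) * t ^ m := add_le_add hexp hS
    _ ≤ t ^ m + (m+1) * t ^ m := by linarith
    _ = (m+2) * t ^ m := by ring


lemma Fn_hasDeriv (m : ℕ) (t : ℝ) :
    HasDerivAt (Fn (m + 1)) (-(Fn m t)) t := by
  have hexp : HasDerivAt (fun s : ℝ => Real.exp (-s)) (Real.exp (-t) * (-1)) t :=
    (Real.hasDerivAt_exp (-t)).comp t (hasDerivAt_neg t)
  have hsum : HasDerivAt (fun s : ℝ => ∑ k ∈ Finset.range (m+1), (-s) ^ k / (Nat.factorial k))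
      (∑ k ∈ Finset.range (m+1), ((k:ℝ) * (-t) ^ (k-1) * (-1)) / (Nat.factorial k)) t := by
    refine HasDerivAt.fun_sum fun k _ => ?_
    exact (((hasDerivAt_pow k (-t)).comp t (hasDerivAt_neg t))).div_const _
  have hkey : (∑ k ∈ Finset.range (m+1), ((k:ℝ) * (-t) ^ (k-1) * (-1)) / (Nat.factorial k))
      = -∑ j ∈ Finset.range m, (-t) ^ j / (Nat.factorial j) := by
    rw [Finset.sum_range_succ']
    have hc : ∀ i ∈ Finset.range m,
        (((i+1 : ℕ):ℝ) * (-t) ^ ((i+1)-1) * (-1)) / (Nat.factorial (i+1))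
          = -((-t) ^ i / (Nat.factorial i)) := by
      intro i _
      have hfac : ((Nat.factorial (i+1)) : ℝ) = (i+1) * (Nat.factorial i : ℝ) := by
        rw [Nat.factorial_succ]; push_cast; ring
      have hne : (Nat.factorial i : ℝ) ≠ 0 := Nat.cast_ne_zero.2 (Nat.factorial_ne_zero i)
      rw [hfac]
      push_cast
      have : (i : ℝ) + 1 ≠ 0 := by positivity
      field_simp
    rw [Finset.sum_congr rfl hc]
    simp
  unfold Fn
  refine (hexp.sub hsum).congr_deriv ?_
  rw [hkey]
  ring



lemma Fn_bound_zero (n : ℕ) (hn : 0 < n) {t : ℝ} (h0 : 0 ≤ t) (h1 : t ≤ 1) :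
    |Fn n t| ≤ (n + 1) / (Nat.factorial n * n) * t ^ n := by
  have hx : |(-t)| ≤ 1 := by rw [abs_neg, abs_of_nonneg h0]; exact h1
  have := Real.exp_bound hx hn
  unfold Fn
  calc |Real.exp (-t) - ∑ k ∈ Finset.range n, (-t) ^ k / (Nat.factorial k)|
      ≤ |(-t)| ^ n * (n.succ / (Nat.factorial n * n)) := this
    _ = (n + 1) / (Nat.factorial n * n) * t ^ n := by
        rw [abs_neg, abs_of_nonneg h0]; push_cast; ring


lemma Fn_cont (n : ℕ) : Continuous (Fn n) := by
  unfold Fn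
  exact (Real.continuous_exp.comp continuous_neg).sub
    (continuous_finset_sum _ fun k _ => ((continuous_pow k).comp continuous_neg).div_const _)


lemma meas_aux (n : ℕ) (y : ℝ) (s : Set ℝ) (hs : MeasurableSet s) (h : s ⊆ Ioi 0) :
    AEStronglyMeasurable (fun t : ℝ => t ^ y * Fn n t) (volume.restrict s) := by
  refine ContinuousOn.aestronglyMeasurable ?_ hs
  refine ContinuousOn.mul (fun t ht => ?_) (Fn_cont n).continuousOn
  exact (Real.continuousAt_rpow_const t y (Or.inl (ne_of_gt (h ht)))).continuousWithinAt


lemma Fn_integrable (m : ℕ) (x : ℝ) (h1 : -(((m:ℝ)+1)) < x) (h2 : x < -((m:ℝ)+1) + 1) :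
    IntegrableOn (fun t : ℝ => t ^ (x - 1) * Fn (m+1) t) (Ioi 0) volume := by
  have hunion : Ioc (0:ℝ) 1 ∪ Ioi 1 = Ioi 0 := Ioc_union_Ioi_eq_Ioi zero_le_one
  rw [← hunion]
  refine IntegrableOn.union ?_ ?_
  · -- on (0,1]
    set C : ℝ := ((m:ℝ)+1+1) / (Nat.factorial (m+1) * (m+1))
    have hC : 0 ≤ C := by positivity
    have hint : IntegrableOn (fun t : ℝ => C * t ^ (x + (m+1) - 1)) (Ioc (0:ℝ) 1) volume := by
      have h : (-1:ℝ) < x + (m+1) - 1 := by linarith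
      have := intervalIntegral.intervalIntegrable_rpow' (a := 0) (b := 1) h
      rw [intervalIntegrable_iff_integrableOn_Ioc_of_le zero_le_one] at this
      exact this.const_mul C
    refine Integrable.mono' hint (meas_aux (m+1) (x-1) _ measurableSet_Ioc
      (fun t ht => ht.1)) ?_
    refine (ae_restrict_iff' measurableSet_Ioc).mpr (ae_of_all _ fun t ht => ?_)
    have ht0 : 0 < t := ht.1
    have hb := Fn_bound_zero (m+1) (Nat.succ_pos m) ht0.le ht.2
    rw [norm_mul, Real.norm_eq_abs, Real.norm_eq_abs,
      abs_of_nonneg (Real.rpow_nonneg ht0.le _)]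
    calc t ^ (x-1) * |Fn (m+1) t| ≤ t ^ (x-1) * (C * t ^ (m+1)) := by
          refine mul_le_mul_of_nonneg_left ?_ (Real.rpow_nonneg ht0.le _)
          convert hb using 2
          · rfl
          simp only [C]; push_cast; ring
      _ = C * t ^ (x + (m+1) - 1) := by
          rw [mul_comm C, mul_comm C, ← mul_assoc]
          congr 1
          rw [← Real.rpow_natCast t (m+1), ← Real.rpow_add ht0]
          congr 1; push_cast; ring
  · -- on (1,∞)
    have hint : IntegrableOn (fun t : ℝ => ((m:ℝ)+2) * t ^ (x + (m+1) - 2)) (Ioi (1:ℝ)) volume := by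
      have h : x + ((m:ℝ)+1) - 2 < -1 := by linarith
      exact (integrableOn_Ioi_rpow_of_lt h one_pos).const_mul _
    refine Integrable.mono' hint (meas_aux (m+1) (x-1) _ measurableSet_Ioi
      (fun t ht => mem_Ioi.mpr (lt_trans one_pos (mem_Ioi.mp ht)))) ?_
    refine (ae_restrict_iff' measurableSet_Ioi).mpr (ae_of_all _ fun t ht => ?_)
    have ht1 : (1:ℝ) ≤ t := le_of_lt ht
    have ht0 : 0 < t := lt_of_lt_of_le one_pos ht1
    have hb := Fn_bound_top m ht1
    rw [norm_mul, Real.norm_eq_abs, Real.norm_eq_abs,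
      abs_of_nonneg (Real.rpow_nonneg ht0.le _)]
    calc t ^ (x-1) * |Fn (m+1) t| ≤ t ^ (x-1) * (((m:ℝ)+2) * t ^ m) :=
          mul_le_mul_of_nonneg_left hb (Real.rpow_nonneg ht0.le _)
      _ = ((m:ℝ)+2) * t ^ (x + (m+1) - 2) := by
          rw [mul_comm ((m:ℝ)+2), mul_comm ((m:ℝ)+2), ← mul_assoc]
          congr 1
          rw [← Real.rpow_natCast t m, ← Real.rpow_add ht0]
          congr 1; push_cast; ring


lemma key (n : ℕ) : ∀ x : ℝ, -(n:ℝ) < x → x < -(n:ℝ) + 1 →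
    IntegrableOn (fun t : ℝ => t ^ (x-1) * Fn n t) (Ioi 0) volume ∧
    ∫ t in Ioi (0:ℝ), t ^ (x-1) * Fn n t = Real.Gamma x := by
  induction n with
  | zero =>
    intro x h1 h2
    simp only [Nat.cast_zero, neg_zero] at h1 h2
    have heq : ∀ t ∈ Ioi (0:ℝ), t ^ (x-1) * Fn 0 t = Real.exp (-t) * t ^ (x-1) := by
      intro t _; unfold Fn; simp [mul_comm]
    constructor
    · exact (Real.GammaIntegral_convergent h1).congr_fun
        (fun t ht => (heq t ht).symm) measurableSet_Ioi
    · rw [setIntegral_congr_fun measurableSet_Ioi heq, ← Real.Gamma_eq_integral h1]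
  | succ m ih =>
    intro x h1 h2
    have h1' : -((m:ℝ)+1) < x := by push_cast at h1; linarith
    have h2' : x < -((m:ℝ)+1) + 1 := by push_cast at h2; linarith
    have hx0 : x < 0 := by linarith [Nat.cast_nonneg (α := ℝ) m]
    have hxne : x ≠ 0 := ne_of_lt hx0
    obtain ⟨ihInt, ihVal⟩ := ih (x+1) (by linarith) (by linarith)
    have ihInt' : IntegrableOn (fun t : ℝ => t ^ x * Fn m t) (Ioi 0) volume := by
      simpa only [add_sub_cancel_right] using ihInt
    have ihVal' : ∫ t in Ioi (0:ℝ), t ^ x * Fn m t = Real.Gamma (x+1) := by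
      rw [← ihVal]; simp only [add_sub_cancel_right]
    have hNint : IntegrableOn (fun t : ℝ => t ^ (x-1) * Fn (m+1) t) (Ioi 0) volume :=
      Fn_integrable m x h1' h2'
    set g : ℝ → ℝ := fun t => x⁻¹ * (t ^ x * Fn (m+1) t) with hg
    set G : ℝ → ℝ := fun t => t ^ (x-1) * Fn (m+1) t - x⁻¹ * (t ^ x * Fn m t) with hG
    have hg0 : g 0 = 0 := by simp [hg, Real.zero_rpow hxne]
    have hderiv : ∀ t ∈ Ioi (0:ℝ), HasDerivAt g (G t) t := by
      intro t ht
      have hd : HasDerivAt (fun s : ℝ => s ^ x) (x * t ^ (x-1)) t :=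
        Real.hasDerivAt_rpow_const (Or.inl (ne_of_gt ht))
      have := (hd.mul (Fn_hasDeriv m t)).const_mul x⁻¹
      refine this.congr_deriv ?_
      simp only [hG]
      field_simp
      ring
    have hGint : IntegrableOn G (Ioi 0) volume := hNint.sub (ihInt'.const_mul x⁻¹)
    -- limit at infinity
    have hpos : (0:ℝ) < -(x + (m:ℝ)) := by push_cast at h2; linarith
    have htop : Tendsto g atTop (𝓝 0) := by
      have hrp : Tendsto (fun t : ℝ => t ^ (x + (m:ℝ))) atTop (𝓝 0) := by
        simpa using tendsto_rpow_neg_atTop hpos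
      refine squeeze_zero_norm' ?_ (by simpa using hrp.const_mul (|x⁻¹| * ((m:ℝ)+2)))
      filter_upwards [eventually_ge_atTop (1:ℝ)] with t ht1
      have ht0 : (0:ℝ) < t := lt_of_lt_of_le one_pos ht1
      have hb := Fn_bound_top m ht1
      simp only [hg, norm_mul, Real.norm_eq_abs]
      rw [abs_of_nonneg (Real.rpow_nonneg ht0.le x)]
      calc |x⁻¹| * (t ^ x * |Fn (m+1) t|)
          ≤ |x⁻¹| * (t ^ x * (((m:ℝ)+2) * t ^ m)) := by
            refine mul_le_mul_of_nonneg_left ?_ (abs_nonneg _)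
            exact mul_le_mul_of_nonneg_left hb (Real.rpow_nonneg ht0.le _)
        _ = |x⁻¹| * ((m:ℝ)+2) * t ^ (x + (m:ℝ)) := by
            have hmul : t ^ x * t ^ (m:ℕ) = t ^ (x + (m:ℝ)) := by
              rw [← Real.rpow_natCast t m, ← Real.rpow_add ht0]
            rw [← hmul]; ring
      rw [abs_inv]
    -- continuity at 0 from the right
    have hcont : ContinuousWithinAt g (Ici 0) 0 := by
      have hpos2 : (0:ℝ) < x + ((m:ℝ)+1) := by linarith
      rw [ContinuousWithinAt, hg0]
      set C : ℝ := ((m:ℝ)+1+1) / (Nat.factorial (m+1) * ((m:ℝ)+1)) with hC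
      have hC0 : 0 ≤ C := by positivity
      have hrp : Tendsto (fun t : ℝ => t ^ (x + ((m:ℝ)+1))) (𝓝[Ici 0] 0) (𝓝 0) := by
        have := (Real.continuousAt_rpow_const 0 (x + ((m:ℝ)+1)) (Or.inr hpos2.le)).tendsto
        rw [Real.zero_rpow (ne_of_gt hpos2)] at this
        exact this.mono_left nhdsWithin_le_nhds
      refine squeeze_zero_norm' ?_ (by simpa using hrp.const_mul (|x⁻¹| * C))
      have hmem : Icc (0:ℝ) 1 ∈ 𝓝[Ici (0:ℝ)] 0 := by
        rw [← Set.Ici_inter_Iic]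
        exact inter_mem self_mem_nhdsWithin
          (mem_nhdsWithin_of_mem_nhds (Iic_mem_nhds one_pos))
      filter_upwards [hmem] with t ht
      rcases eq_or_lt_of_le ht.1 with rfl | ht0
      · simp [hg0, Real.zero_rpow (ne_of_gt hpos2)]
      · have hb := Fn_bound_zero (m+1) (Nat.succ_pos m) ht0.le ht.2
        simp only [hg, norm_mul, Real.norm_eq_abs]
        rw [abs_of_nonneg (Real.rpow_nonneg ht0.le x)]
        calc |x⁻¹| * (t ^ x * |Fn (m+1) t|)
            ≤ |x⁻¹| * (t ^ x * (C * t ^ (m+1))) := by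
              refine mul_le_mul_of_nonneg_left ?_ (abs_nonneg _)
              refine mul_le_mul_of_nonneg_left ?_ (Real.rpow_nonneg ht0.le _)
              convert hb using 2
              · rfl
              · push_cast [hC]; ring
          _ = |x⁻¹| * C * t ^ (x + ((m:ℝ)+1)) := by
              have hmul : t ^ x * t ^ (m+1:ℕ) = t ^ (x + ((m:ℝ)+1)) := by
                rw [← Real.rpow_natCast t (m+1), ← Real.rpow_add ht0]
                congr 1; push_cast; ring
              rw [← hmul]; ring
        rw [abs_inv]
    -- FTC
    have hFTC : ∫ t in Ioi (0:ℝ), G t = 0 - g 0 :=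
      integral_Ioi_of_hasDerivAt_of_tendsto hcont hderiv hGint htop
    rw [hg0, sub_zero] at hFTC
    have hsplit : ∫ t in Ioi (0:ℝ), G t
        = (∫ t in Ioi (0:ℝ), t ^ (x-1) * Fn (m+1) t) - x⁻¹ * ∫ t in Ioi (0:ℝ), t ^ x * Fn m t := by
      rw [hG, integral_sub hNint (ihInt'.const_mul x⁻¹), MeasureTheory.integral_const_mul]
    have hval : ∫ t in Ioi (0:ℝ), t ^ (x-1) * Fn (m+1) t = Real.Gamma x := by
      have := hsplit.symm.trans hFTC
      rw [ihVal', Real.Gamma_add_one hxne] at this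
      have h2 : (∫ t in Ioi (0:ℝ), t ^ (x-1) * Fn (m+1) t) = x⁻¹ * (x * Real.Gamma x) :=
        by linarith
      rw [h2, ← mul_assoc, inv_mul_cancel₀ hxne, one_mul]
    exact ⟨hNint, hval⟩

end Aux

/-- For `n ≥ 1` and `−n < x < −n+1`, the integral
`∫_0^∞ t^{x−1}(e^{−t} − ∑_{k=0}^{n−1} (−t)^k/k!) dt` converges absolutely and
equals `Γ(x)`, the Gamma function analytically continued via `Γ(x+1) = xΓ(x)`. -/
theorem stmt10 (n : ℕ) (hn : 1 ≤ n) (x : ℝ)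
    (hx1 : -(n : ℝ) < x) (hx2 : x < -(n : ℝ) + 1) :
    IntegrableOn
      (fun t : ℝ => t ^ (x - 1) *
        (Real.exp (-t) - ∑ k ∈ Finset.range n, (-t) ^ k / (Nat.factorial k)))
      (Set.Ioi 0) volume
    ∧ ∫ t in Set.Ioi (0 : ℝ),
        t ^ (x - 1) *
          (Real.exp (-t) - ∑ k ∈ Finset.range n, (-t) ^ k / (Nat.factorial k))
      = Real.Gamma x := by
  have h := key n x hx1 hx2
  simpa only [Fn] using h
end

section
/- Let d ∈ ℕ, σ, b > 0, and let φ be the Gaussian density on ℝ^d and (P_t)_{t≥0} the Mehler (Ornstein–Uhlenbeck) semigroup P_t f(x) = ∫_{ℝ^d} f(x e^{−bt} + y √(1 − e^{−2bt})) φ(y) dy. Let f : ℝ^d → ℝ be continuously differentiable such that f and each partial derivative ∂_j f (1 ≤ j ≤ d) are of polynomial growth (i.e. bounded by C(1+|x|)^n for some C > 0, n ∈ ℕ). Then for every t ≥ 0, P_t f is differentiable on ℝ^d and ∂_j (P_t f)(x) = e^{−bt} P_t(∂_j f)(x) for all j ∈ {1,…,d} and x ∈ ℝ^d. -/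
open MeasureTheory

section aux

private lemma gauss_base (d : ℕ) {k : ℝ} (hk : 0 < k) :
    Integrable (fun y : EuclideanSpace ℝ (Fin d) => Real.exp (-k * ‖y‖^2)) := by
  have h := GaussianFourier.integrable_cexp_neg_mul_sq_norm_add
    (V := EuclideanSpace ℝ (Fin d)) (b := (k:ℂ)) (by simpa using hk) 0 0
  have h2 := h.norm
  refine h2.congr ?_
  filter_upwards with y
  simp only [Complex.norm_exp]
  norm_num
  left
  rw [← Complex.ofReal_pow, Complex.ofReal_re]

private lemma gauss_poly (d : ℕ) {k : ℝ} (hk : 0 < k) (n : ℕ) :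
    Integrable (fun y : EuclideanSpace ℝ (Fin d) =>
      (1+‖y‖)^n * Real.exp (-k * ‖y‖^2)) := by
  refine (((gauss_base d (half_pos hk)).const_mul
    (Real.exp ((n:ℝ)^2/(2*k)))).mono' ?_ ?_)
  · exact (Continuous.aestronglyMeasurable (by continuity))
  · filter_upwards with y
    have hr : (0:ℝ) ≤ ‖y‖ := norm_nonneg y
    set r := ‖y‖ with hrdef
    have h1 : (1+r)^n ≤ Real.exp ((n:ℝ)*r) := by
      calc (1+r)^n ≤ (Real.exp r)^n := by
            apply pow_le_pow_left₀ (by positivity)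
            linarith [Real.add_one_le_exp r]
        _ = Real.exp ((n:ℝ)*r) := by rw [← Real.exp_nat_mul]
    have harg : (n:ℝ)*r + (-k * r^2) ≤ (n:ℝ)^2/(2*k) + (-(k/2) * r^2) := by
      have h2 : ((n:ℝ)*r + (-k*r^2) + (k/2)*r^2) * (2*k) ≤ (n:ℝ)^2 := by
        nlinarith [sq_nonneg (k*r - (n:ℝ))]
      have h3 : (n:ℝ)*r + (-k*r^2) + (k/2)*r^2 ≤ (n:ℝ)^2/(2*k) := by
        rw [le_div_iff₀ (by positivity)]
        exact h2
      linarith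
    have hnonneg : (0:ℝ) ≤ (1+r)^n * Real.exp (-k * r^2) := by positivity
    rw [Real.norm_eq_abs, abs_of_nonneg hnonneg]
    calc (1+r)^n * Real.exp (-k * r^2)
        ≤ Real.exp ((n:ℝ)*r) * Real.exp (-k * r^2) := by
          apply mul_le_mul_of_nonneg_right h1 (Real.exp_nonneg _)
      _ = Real.exp ((n:ℝ)*r + (-k * r^2)) := by rw [← Real.exp_add]
      _ ≤ Real.exp ((n:ℝ)^2/(2*k) + (-(k/2) * r^2)) := Real.exp_le_exp.mpr harg
      _ = Real.exp ((n:ℝ)^2/(2*k)) * Real.exp (-(k/2) * r^2) := Real.exp_add _ _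

/-- integrability of a polynomial-growth function composed with an affine map,
against a Gaussian weight -/
private lemma comp_integrable (d : ℕ) {k K : ℝ} (hk : 0 < k) (hK : 0 ≤ K)
    (g : EuclideanSpace ℝ (Fin d) → ℝ) (hcont : Continuous g)
    {C : ℝ} {n : ℕ} (hC : 0 ≤ C) (hg : ∀ z, |g z| ≤ C * (1+‖z‖)^n)
    (u : EuclideanSpace ℝ (Fin d)) {c : ℝ} (hc : 0 ≤ c) :
    Integrable (fun y : EuclideanSpace ℝ (Fin d) =>
      g (u + c • y) * (K * Real.exp (-k * ‖y‖^2))) := by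
  refine ((gauss_poly d hk n).const_mul (C * (1+‖u‖+c)^n * K)).mono' ?_ ?_
  · refine Continuous.aestronglyMeasurable ?_
    exact (hcont.comp (continuous_const.add (continuous_id.const_smul c))).mul (by continuity)
  · filter_upwards with y
    have h0 : ‖u + c • y‖ ≤ ‖u‖ + c * ‖y‖ := by
      calc ‖u + c • y‖ ≤ ‖u‖ + ‖c • y‖ := norm_add_le _ _
        _ = ‖u‖ + c * ‖y‖ := by rw [norm_smul, Real.norm_eq_abs, abs_of_nonneg hc]
    have h1 : 1 + ‖u + c • y‖ ≤ (1+‖u‖+c) * (1+‖y‖) := by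
      nlinarith [norm_nonneg y, norm_nonneg u]
    have h2 : (1 + ‖u + c • y‖)^n ≤ ((1+‖u‖+c) * (1+‖y‖))^n :=
      pow_le_pow_left₀ (by positivity) h1 n
    rw [Real.norm_eq_abs, abs_mul, abs_of_nonneg (by positivity :
      (0:ℝ) ≤ K * Real.exp (-k * ‖y‖^2))]
    calc |g (u + c • y)| * (K * Real.exp (-k * ‖y‖^2))
        ≤ (C * (1 + ‖u + c • y‖)^n) * (K * Real.exp (-k * ‖y‖^2)) := by
          apply mul_le_mul_of_nonneg_right (hg _) (by positivity)
      _ ≤ (C * ((1+‖u‖+c) * (1+‖y‖))^n) * (K * Real.exp (-k * ‖y‖^2)) := by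
          apply mul_le_mul_of_nonneg_right _ (by positivity)
          exact mul_le_mul_of_nonneg_left h2 hC
      _ = C * (1+‖u‖+c)^n * K * ((1+‖y‖)^n * Real.exp (-k * ‖y‖^2)) := by
          rw [mul_pow]; ring

private lemma coord_le_norm {d : ℕ} (v : EuclideanSpace ℝ (Fin d)) (j : Fin d) :
    |v j| ≤ ‖v‖ := by
  rw [EuclideanSpace.norm_eq, ← Real.sqrt_sq_eq_abs]
  apply Real.sqrt_le_sqrt
  simp only [Real.norm_eq_abs, sq_abs]
  exact Finset.single_le_sum (f := fun i => v i ^ 2) (fun i _ => sq_nonneg _)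
    (Finset.mem_univ j)

private lemma clm_decomp {d : ℕ} (L : EuclideanSpace ℝ (Fin d) →L[ℝ] ℝ)
    (v : EuclideanSpace ℝ (Fin d)) :
    L v = ∑ j, v j * L (EuclideanSpace.single j 1) := by
  have hv : v = ∑ j, v j • EuclideanSpace.single j 1 := by
    refine ((EuclideanSpace.basisFun (Fin d) ℝ).sum_repr v).symm.trans ?_
    simp [EuclideanSpace.basisFun_repr, EuclideanSpace.basisFun_apply]
  conv_lhs => rw [hv]
  simp [map_sum, mul_comm]

end aux

set_option maxHeartbeats 1000000 in
/-- For the Mehler (Ornstein–Uhlenbeck) semigroup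
`P_t f(x) = ∫ f(x e^{−bt} + y √(1−e^{−2bt})) φ(y) dy` with Gaussian density `φ`,
if `f` is `C¹` and `f` and all its partial derivatives are of polynomial growth,
then `P_t f` is differentiable and `∂_j(P_t f)(x) = e^{−bt} P_t(∂_j f)(x)`. -/
theorem stmt12 (d : ℕ) (hd : 0 < d) (σ b : ℝ) (hσ : 0 < σ) (hb : 0 < b)
    (φ : EuclideanSpace ℝ (Fin d) → ℝ)
    (hφ : ∀ x, φ x = (b / (Real.pi * σ ^ 2)) ^ ((d : ℝ) / 2) *
        Real.exp (-(b / σ ^ 2) * ‖x‖ ^ 2))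
    (P : ℝ → (EuclideanSpace ℝ (Fin d) → ℝ) → EuclideanSpace ℝ (Fin d) → ℝ)
    (hP : ∀ t g x, P t g x =
        ∫ y, g (Real.exp (-(b * t)) • x + Real.sqrt (1 - Real.exp (-(2 * b * t))) • y)
          * φ y ∂volume)
    (f : EuclideanSpace ℝ (Fin d) → ℝ)
    (hf : ContDiff ℝ 1 f)
    (hfgrowth : ∃ C : ℝ, 0 < C ∧ ∃ n : ℕ, ∀ x, |f x| ≤ C * (1 + ‖x‖) ^ n)
    (hdfgrowth : ∀ j : Fin d, ∃ C : ℝ, 0 < C ∧ ∃ n : ℕ, ∀ x,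
        |fderiv ℝ f x (EuclideanSpace.single j 1)| ≤ C * (1 + ‖x‖) ^ n)
    (t : ℝ) (ht : 0 ≤ t) :
    Differentiable ℝ (P t f) ∧
    ∀ j : Fin d, ∀ x,
      fderiv ℝ (P t f) x (EuclideanSpace.single j 1)
        = Real.exp (-(b * t)) *
            P t (fun z => fderiv ℝ f z (EuclideanSpace.single j 1)) x := by
  set a : ℝ := Real.exp (-(b * t)) with ha
  set c : ℝ := Real.sqrt (1 - Real.exp (-(2 * b * t))) with hc
  set K : ℝ := (b / (Real.pi * σ ^ 2)) ^ ((d : ℝ) / 2) with hKdef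
  set k : ℝ := b / σ ^ 2 with hkdef
  have ha0 : 0 < a := Real.exp_pos _
  have hc0 : 0 ≤ c := Real.sqrt_nonneg _
  have hK0 : 0 ≤ K := Real.rpow_nonneg (by positivity) _
  have hk0 : 0 < k := by positivity
  have hφ' : ∀ y : EuclideanSpace ℝ (Fin d), φ y = K * Real.exp (-k * ‖y‖^2) := fun y => hφ y
  have hφ0 : ∀ y : EuclideanSpace ℝ (Fin d), 0 ≤ φ y := fun y => by
    rw [hφ' y]; exact mul_nonneg hK0 (Real.exp_nonneg _)
  have hφcont : Continuous φ := by
    have : φ = fun y : EuclideanSpace ℝ (Fin d) => K * Real.exp (-k * ‖y‖^2) := funext hφ'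
    rw [this]; continuity
  have hfd_cont : Continuous (fderiv ℝ f) := hf.continuous_fderiv one_ne_zero
  -- combined growth bound on the full derivative
  choose Cj hCj nj hnj using hdfgrowth
  set C' : ℝ := ∑ j, Cj j with hC'def
  set N : ℕ := Finset.univ.sup nj with hNdef
  have hC'0 : 0 ≤ C' := Finset.sum_nonneg fun j _ => (hCj j).le
  have hDf : ∀ z : EuclideanSpace ℝ (Fin d), ‖fderiv ℝ f z‖ ≤ C' * (1 + ‖z‖)^N := by
    intro z
    apply ContinuousLinearMap.opNorm_le_bound _ (by positivity)
    intro v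
    rw [Real.norm_eq_abs, clm_decomp]
    calc |∑ j, v j * fderiv ℝ f z (EuclideanSpace.single j 1)|
        ≤ ∑ j, |v j * fderiv ℝ f z (EuclideanSpace.single j 1)| :=
          Finset.abs_sum_le_sum_abs _ _
      _ ≤ ∑ j, ‖v‖ * (Cj j * (1 + ‖z‖)^N) := by
          apply Finset.sum_le_sum
          intro j _
          rw [abs_mul]
          have h1 : (1 + ‖z‖)^(nj j) ≤ (1 + ‖z‖)^N :=
            pow_le_pow_right₀ (by linarith [norm_nonneg z])
              (Finset.le_sup (Finset.mem_univ j))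
          have h2 : |fderiv ℝ f z (EuclideanSpace.single j 1)| ≤ Cj j * (1 + ‖z‖)^N :=
            (hnj j z).trans (mul_le_mul_of_nonneg_left h1 (hCj j).le)
          exact mul_le_mul (coord_le_norm v j) h2 (abs_nonneg _) (norm_nonneg v)
      _ = C' * (1 + ‖z‖)^N * ‖v‖ := by
          rw [← Finset.mul_sum, ← Finset.sum_mul]; ring
  -- the parametric derivative
  set F' : EuclideanSpace ℝ (Fin d) → EuclideanSpace ℝ (Fin d) → (EuclideanSpace ℝ (Fin d) →L[ℝ] ℝ) :=
    fun x y => (a * φ y) • fderiv ℝ f (a • x + c • y) with hF'def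
  have hF'cont : ∀ x : EuclideanSpace ℝ (Fin d), Continuous (F' x) := by
    intro x
    apply Continuous.smul (continuous_const.mul hφcont)
    exact hfd_cont.comp (continuous_const.add (continuous_id.const_smul c))
  have hF'norm : ∀ x y : EuclideanSpace ℝ (Fin d), ‖F' x y‖ = a * φ y * ‖fderiv ℝ f (a • x + c • y)‖ := by
    intro x y
    simp only [hF'def]
    rw [show ‖(a * φ y) • fderiv ℝ f (a • x + c • y)‖
        = ‖a * φ y‖ * ‖fderiv ℝ f (a • x + c • y)‖ from norm_smul _ _,
      Real.norm_eq_abs, abs_of_nonneg (mul_nonneg ha0.le (hφ0 y))]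
  have hF'int : ∀ x : EuclideanSpace ℝ (Fin d), Integrable (F' x) := by
    intro x
    have base := comp_integrable d hk0 hK0 (fun z => ‖fderiv ℝ f z‖)
      (continuous_norm.comp hfd_cont) hC'0
      (fun z => by rw [abs_of_nonneg (norm_nonneg _)]; exact hDf z) (a • x) hc0
    refine (base.const_mul a).mono' ((hF'cont x).aestronglyMeasurable) ?_
    filter_upwards with y
    rw [hF'norm, hφ' y]
    exact le_of_eq (by ring)
  -- the key derivative computation
  have key : ∀ x₀ : EuclideanSpace ℝ (Fin d), HasFDerivAt (fun x => ∫ y, f (a • x + c • y) * φ y)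
      (∫ y, F' x₀ y) x₀ := by
    intro x₀
    obtain ⟨C₀, hC₀, n₀, h₀⟩ := hfgrowth
    apply hasFDerivAt_integral_of_dominated_of_fderiv_le (s := Metric.ball x₀ 1) (Metric.ball_mem_nhds x₀ one_pos)
      (bound := fun y => (a * C' * (1 + (a * (‖x₀‖ + 1) + c))^N * K) *
        ((1 + ‖y‖)^N * Real.exp (-k * ‖y‖^2)))
    · filter_upwards with x
      exact Continuous.aestronglyMeasurable
        ((hf.continuous.comp (continuous_const.add (continuous_id.const_smul c))).mul hφcont)
    · have := comp_integrable d hk0 hK0 f hf.continuous hC₀.le h₀ (a • x₀) hc0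
      refine this.congr ?_
      filter_upwards with y
      rw [hφ' y]
    · exact ((hF'cont x₀).aestronglyMeasurable)
    · filter_upwards with y
      intro x hx
      rw [hF'norm]
      have hxn : ‖x‖ ≤ ‖x₀‖ + 1 := by
        have := mem_ball_iff_norm.mp hx
        calc ‖x‖ = ‖x₀ + (x - x₀)‖ := by congr 1; abel
          _ ≤ ‖x₀‖ + ‖x - x₀‖ := norm_add_le _ _
          _ ≤ ‖x₀‖ + 1 := by linarith
      have hz : 1 + ‖a • x + c • y‖ ≤ (1 + (a * (‖x₀‖ + 1) + c)) * (1 + ‖y‖) := by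
        have h1 : ‖a • x + c • y‖ ≤ a * ‖x‖ + c * ‖y‖ := by
          calc ‖a • x + c • y‖ ≤ ‖a • x‖ + ‖c • y‖ := norm_add_le _ _
            _ = a * ‖x‖ + c * ‖y‖ := by
                rw [norm_smul, norm_smul, Real.norm_eq_abs, Real.norm_eq_abs,
                  abs_of_nonneg ha0.le, abs_of_nonneg hc0]
        have h2 : a * ‖x‖ ≤ a * (‖x₀‖ + 1) := mul_le_mul_of_nonneg_left hxn ha0.le
        have h3 : 0 ≤ (1 + a * (‖x₀‖ + 1)) * ‖y‖ :=
          mul_nonneg (by positivity) (norm_nonneg y)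
        nlinarith [h1, h2, h3, hc0, norm_nonneg y]
      calc a * φ y * ‖fderiv ℝ f (a • x + c • y)‖
          ≤ a * φ y * (C' * (1 + ‖a • x + c • y‖)^N) := by
            apply mul_le_mul_of_nonneg_left (hDf _) (mul_nonneg ha0.le (hφ0 y))
        _ ≤ a * φ y * (C' * ((1 + (a * (‖x₀‖ + 1) + c)) * (1 + ‖y‖))^N) := by
            apply mul_le_mul_of_nonneg_left _ (mul_nonneg ha0.le (hφ0 y))
            apply mul_le_mul_of_nonneg_left _ hC'0
            exact pow_le_pow_left₀ (by positivity) hz N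
        _ = (a * C' * (1 + (a * (‖x₀‖ + 1) + c))^N * K) *
            ((1 + ‖y‖)^N * Real.exp (-k * ‖y‖^2)) := by
            rw [hφ' y, mul_pow]; ring
    · exact (gauss_poly d hk0 N).const_mul _
    · filter_upwards with y
      intro x hx
      have hline : HasFDerivAt (fun x : EuclideanSpace ℝ (Fin d) => a • x + c • y)
          (a • ContinuousLinearMap.id ℝ (EuclideanSpace ℝ (Fin d))) x := by
        have h1 : HasFDerivAt (fun x : EuclideanSpace ℝ (Fin d) => a • x)
            (a • ContinuousLinearMap.id ℝ (EuclideanSpace ℝ (Fin d))) x :=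
          (hasFDerivAt_id x).const_smul a
        exact h1.add_const (c • y)
      have hfz := (hf.differentiable one_ne_zero (a • x + c • y)).hasFDerivAt
      have hcomp := (hfz.comp x hline).mul_const (φ y)
      convert hcomp using 1
      · rfl
      · rfl
      rw [hF'def]
      ext v
      simp [ContinuousLinearMap.smul_apply, smul_eq_mul, mul_comm, mul_assoc,
        mul_left_comm]
  have hPtf : P t f = fun x => ∫ y, f (a • x + c • y) * φ y := by
    funext x
    rw [hP, ha, hc]
  constructor
  · rw [hPtf]
    exact fun x => (key x).differentiableAt
  · intro j x
    have h1 : fderiv ℝ (P t f) x = ∫ y, F' x y := by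
      rw [hPtf]
      exact (key x).fderiv
    rw [h1, ContinuousLinearMap.integral_apply (hF'int x)]
    rw [hP, ← ha, ← hc, ← integral_const_mul]
    congr 1
    funext y
    rw [hF'def]
    simp only [ContinuousLinearMap.smul_apply, smul_eq_mul]
    ring
end
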